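/- arXiv:2601.04084 — 8 statements merged into one kernel-verified Lean document; each statement's English description precedes it below -/
import Mathlib

section
/- For every integer m ≥ 3, forb(m, F(0,3,1,0)) = ⌊7m/3⌋ + 1. -/
open Finset

/-- A family `A` of distinct subsets of `Fin m` (columns of a simple `m`-rowed (0,1)-matrix)
avoids the configuration `F(0,p,1,0)`: for every ordered pair of distinct rows `i, j`,
if some member contains `j` but not `i`, then at most `p - 1` members contain `i` but not `j`. -/
def AvoidsF010 (p m : ℕ) (A : Finset (Finset (Fin m))) : Prop :=
  ∀ i j : Fin m, i ≠ j →
    (∃ X ∈ A, j ∈ X ∧ i ∉ X) →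
    (A.filter fun Y => i ∈ Y ∧ j ∉ Y).card ≤ p - 1

/-- `forb m p` is the maximum cardinality of a family of subsets of an `m`-element ground set
avoiding the configuration `F(0,p,1,0)`. -/
noncomputable def forb (m p : ℕ) : ℕ :=
  sSup {n | ∃ A : Finset (Finset (Fin m)), AvoidsF010 p m A ∧ A.card = n}

/-- Avoidance over ℕ-ground. -/
def AvoidsN (A : Finset (Finset ℕ)) : Prop :=
  ∀ ⦃i j : ℕ⦄, i ≠ j → (∃ X ∈ A, j ∈ X ∧ i ∉ X) →
    (A.filter fun Y => i ∈ Y ∧ j ∉ Y).card ≤ 2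

lemma card3_of {A : Finset (Finset ℕ)} {p : Finset ℕ → Prop} [DecidablePred p]
    {Y1 Y2 Y3 : Finset ℕ} (h1 : Y1 ∈ A) (h2 : Y2 ∈ A) (h3 : Y3 ∈ A)
    (n12 : Y1 ≠ Y2) (n13 : Y1 ≠ Y3) (n23 : Y2 ≠ Y3)
    (p1 : p Y1) (p2 : p Y2) (p3 : p Y3) :
    3 ≤ (A.filter p).card := by
  have hsub : ({Y1, Y2, Y3} : Finset (Finset ℕ)) ⊆ A.filter p := by
    intro Y hY
    simp only [mem_insert, mem_singleton] at hY
    rcases hY with rfl | rfl | rfl <;> simp [mem_filter, *]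
  have hcard : ({Y1, Y2, Y3} : Finset (Finset ℕ)).card = 3 := by
    rw [card_insert_of_notMem (by simp [n12, n13]),
      card_insert_of_notMem (by simp [n23]), card_singleton]
  calc 3 = _ := hcard.symm
    _ ≤ _ := card_le_card hsub

lemma ruleR {A : Finset (Finset ℕ)} (hA : AvoidsN A) {i j : ℕ} (hij : i ≠ j)
    {Y1 Y2 Y3 : Finset ℕ} (h1 : Y1 ∈ A) (h2 : Y2 ∈ A) (h3 : Y3 ∈ A)
    (n12 : Y1 ≠ Y2) (n13 : Y1 ≠ Y3) (n23 : Y2 ≠ Y3)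
    (hi1 : i ∈ Y1 ∧ j ∉ Y1) (hi2 : i ∈ Y2 ∧ j ∉ Y2) (hi3 : i ∈ Y3 ∧ j ∉ Y3) :
    ∀ Y ∈ A, j ∈ Y → i ∈ Y := by
  intro Y hY hjY
  by_contra hiY
  have hcap := hA hij ⟨Y, hY, hjY, hiY⟩
  have h3le := card3_of (p := fun Y => i ∈ Y ∧ j ∉ Y) h1 h2 h3 n12 n13 n23 hi1 hi2 hi3
  omega

lemma exact2 {A : Finset (Finset ℕ)} (hA : AvoidsN A) {i j : ℕ} (hij : i ≠ j)
    {X0 : Finset ℕ} (hX0 : X0 ∈ A) (hjX0 : j ∈ X0) (hiX0 : i ∉ X0)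
    {Z1 Z2 : Finset ℕ} (hZ1 : Z1 ∈ A) (hZ2 : Z2 ∈ A) (hZne : Z1 ≠ Z2)
    (hp1 : i ∈ Z1 ∧ j ∉ Z1) (hp2 : i ∈ Z2 ∧ j ∉ Z2) :
    ∀ Y ∈ A, i ∈ Y → j ∉ Y → Y = Z1 ∨ Y = Z2 := by
  intro Y hY hiY hjY
  by_contra hcon
  push_neg at hcon
  have hcap := hA hij ⟨X0, hX0, hjX0, hiX0⟩
  have h3le := card3_of (p := fun Y => i ∈ Y ∧ j ∉ Y) hY hZ1 hZ2 hcon.1 hcon.2 hZne ⟨hiY, hjY⟩ hp1 hp2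
  omega

lemma avoidsN_image_sdiff {A : Finset (Finset ℕ)} (hA : AvoidsN A) (S : Finset ℕ) :
    AvoidsN (A.image (· \ S)) := by
  intro i j hij hw
  obtain ⟨Y', hY', hjY', hiY'⟩ := hw
  obtain ⟨X, hX, rfl⟩ := mem_image.1 hY'
  have hjX : j ∈ X := (mem_sdiff.1 hjY').1
  have hjS : j ∉ S := (mem_sdiff.1 hjY').2
  by_cases hiS : i ∈ S
  · have : ((A.image (· \ S)).filter fun Y => i ∈ Y ∧ j ∉ Y) = ∅ := by
      rw [eq_empty_iff_forall_notMem]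
      intro Z hZ
      rw [mem_filter, mem_image] at hZ
      obtain ⟨⟨W, _, rfl⟩, hiZ, _⟩ := hZ
      exact (mem_sdiff.1 hiZ).2 hiS
    rw [this]; simp
  · have hiX : i ∉ X := fun h => hiY' (mem_sdiff.2 ⟨h, hiS⟩)
    have hcap := hA hij ⟨X, hX, hjX, hiX⟩
    have hsub : ((A.image (· \ S)).filter fun Y => i ∈ Y ∧ j ∉ Y)
        ⊆ (A.filter fun Z => i ∈ Z ∧ j ∉ Z).image (· \ S) := by
      intro Z hZ
      rw [mem_filter, mem_image] at hZ
      obtain ⟨⟨W, hW, rfl⟩, hiZ, hjZ⟩ := hZ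
      refine mem_image.2 ⟨W, mem_filter.2 ⟨hW, (mem_sdiff.1 hiZ).1, fun hjW => hjZ (mem_sdiff.2 ⟨hjW, hjS⟩)⟩, rfl⟩
    calc _ ≤ _ := card_le_card hsub
      _ ≤ _ := card_image_le
      _ ≤ 2 := hcap

/-- single-row removal count -/
lemma card_le_erase_row (A : Finset (Finset ℕ)) (a : ℕ) :
    A.card ≤ (A.image (· \ {a})).card
      + (A.filter fun X => a ∉ X ∧ insert a X ∈ A).card := by
  classical
  set A0 := A.filter (fun X => a ∉ X) with hA0
  set A1 := A.filter (fun X => a ∈ X) with hA1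
  have hsplit : A.card = A1.card + A0.card := by
    rw [hA0, hA1]
    have := card_filter_add_card_filter_not (s := A) (p := fun X => a ∈ X)
    omega
  have himg1 : (A1.image (· \ {a})).card = A1.card := by
    apply card_image_of_injOn
    intro x hx y hy hxy
    have hax : a ∈ x := (mem_filter.1 hx).2
    have hay : a ∈ y := (mem_filter.1 hy).2
    have ex : insert a (x \ {a}) = x := by
      rw [← erase_eq, insert_erase hax]
    have ey : insert a (y \ {a}) = y := by
      rw [← erase_eq, insert_erase hay]
    simp only [] at hxy
    rw [← ex, ← ey, hxy]
  have hsub : A0 ∪ A1.image (· \ {a}) ⊆ A.image (· \ {a}) := by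
    intro Z hZ
    rcases mem_union.1 hZ with h | h
    · have hZA : Z ∈ A := (mem_filter.1 h).1
      have haZ : a ∉ Z := (mem_filter.1 h).2
      exact mem_image.2 ⟨Z, hZA, by rw [← erase_eq, erase_eq_of_notMem haZ]⟩
    · obtain ⟨Y, hY, rfl⟩ := mem_image.1 h
      exact mem_image.2 ⟨Y, (mem_filter.1 hY).1, rfl⟩
  have hint : A0 ∩ A1.image (· \ {a}) ⊆ A.filter (fun X => a ∉ X ∧ insert a X ∈ A) := by
    intro Z hZ
    have h0 := mem_inter.1 hZ
    have hZA : Z ∈ A := (mem_filter.1 h0.1).1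
    have haZ : a ∉ Z := (mem_filter.1 h0.1).2
    obtain ⟨Y, hY, hYZ⟩ := mem_image.1 h0.2
    have haY : a ∈ Y := (mem_filter.1 hY).2
    have : insert a Z = Y := by
      rw [← hYZ, ← erase_eq, insert_erase haY]
    exact mem_filter.2 ⟨hZA, haZ, this ▸ (mem_filter.1 hY).1⟩
  have hcui := card_union_add_card_inter A0 (A1.image (· \ {a}))
  have h1 := card_le_card hsub
  have h2 := card_le_card hint
  omega
section Config

variable {A : Finset (Finset ℕ)} {a : ℕ} {X : Fin 3 → Finset ℕ}

/-- configuration: three columns X i with both X i and insert a (X i) present -/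
structure Cfg (A : Finset (Finset ℕ)) (a : ℕ) (X : Fin 3 → Finset ℕ) : Prop where
  avoid : AvoidsN A
  memX : ∀ i, X i ∈ A
  memXa : ∀ i, insert a (X i) ∈ A
  notmem : ∀ i, a ∉ X i
  inj : Function.Injective X

def Lof (X : Fin 3 → Finset ℕ) : Finset ℕ := X 0 ∩ X 1 ∩ X 2
def Wof (X : Fin 3 → Finset ℕ) : Finset ℕ := (X 0 ∪ X 1 ∪ X 2) \ Lof X
def Rof (a : ℕ) (X : Fin 3 → Finset ℕ) : Finset ℕ := insert a (Wof X)

def PatM (X : Fin 3 → Finset ℕ) (w : ℕ) (t : Fin 3) : Prop := ∀ i, w ∈ X i ↔ i ≠ t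
def PatP (X : Fin 3 → Finset ℕ) (w : ℕ) (s : Fin 3) : Prop := ∀ i, w ∈ X i ↔ i = s

lemma fin3_cases (i : Fin 3) : i = 0 ∨ i = 1 ∨ i = 2 := by omega
lemma fin3_a1 (t : Fin 3) : t + 1 ≠ t := by fin_cases t <;> decide
lemma fin3_a2 (t : Fin 3) : t + 2 ≠ t := by fin_cases t <;> decide
lemma fin3_a12 (t : Fin 3) : t + 1 ≠ t + 2 := by fin_cases t <;> decide
lemma fin3_other {t i : Fin 3} (h1 : i ≠ t + 1) (h2 : i ≠ t + 2) : i = t := by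
  fin_cases t <;> fin_cases i <;> simp_all

lemma hLsub (X : Fin 3 → Finset ℕ) : ∀ i, Lof X ⊆ X i := by
  intro i x hx
  simp only [Lof, mem_inter] at hx
  rcases fin3_cases i with rfl | rfl | rfl <;> tauto

lemma hXsub (X : Fin 3 → Finset ℕ) : ∀ i, X i ⊆ Lof X ∪ Wof X := by
  intro i x hx
  simp only [Wof, mem_union, mem_sdiff, mem_union]
  by_cases hL : x ∈ Lof X
  · exact Or.inl hL
  · refine Or.inr ⟨?_, hL⟩
    rcases fin3_cases i with rfl | rfl | rfl
    · exact Or.inl (Or.inl hx)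
    · exact Or.inl (Or.inr hx)
    · exact Or.inr hx

lemma haL (hc : Cfg A a X) : a ∉ Lof X := fun h => hc.notmem 0 (hLsub X 0 h)

lemma haW (hc : Cfg A a X) : a ∉ Wof X := by
  intro h
  simp only [Wof, mem_sdiff, mem_union] at h
  rcases h.1 with h' | h'
  · rcases h' with h'' | h''
    · exact hc.notmem 0 h''
    · exact hc.notmem 1 h''
  · exact hc.notmem 2 h'

lemma mem_W_ne_a (hc : Cfg A a X) {w : ℕ} (hw : w ∈ Wof X) : w ≠ a :=
  fun h => haW hc (h ▸ hw)

lemma pat_total (hc : Cfg A a X) {w : ℕ} (hw : w ∈ Wof X) :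
    (∃ t, PatM X w t) ∨ (∃ s, PatP X w s) := by
  simp only [Wof, mem_sdiff, mem_union] at hw
  obtain ⟨hU, hL⟩ := hw
  simp only [Lof, mem_inter] at hL
  by_cases h0 : w ∈ X 0 <;> by_cases h1 : w ∈ X 1 <;> by_cases h2 : w ∈ X 2
  · exact absurd ⟨⟨h0, h1⟩, h2⟩ hL
  · exact Or.inl ⟨2, fun i => by rcases fin3_cases i with rfl | rfl | rfl <;> simp_all⟩
  · exact Or.inl ⟨1, fun i => by rcases fin3_cases i with rfl | rfl | rfl <;> simp_all⟩
  · exact Or.inr ⟨0, fun i => by rcases fin3_cases i with rfl | rfl | rfl <;> simp_all⟩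
  · exact Or.inl ⟨0, fun i => by rcases fin3_cases i with rfl | rfl | rfl <;> simp_all⟩
  · exact Or.inr ⟨1, fun i => by rcases fin3_cases i with rfl | rfl | rfl <;> simp_all⟩
  · exact Or.inr ⟨2, fun i => by rcases fin3_cases i with rfl | rfl | rfl <;> simp_all⟩
  · tauto

lemma X_ne_insert (hc : Cfg A a X) (i j : Fin 3) : X i ≠ insert a (X j) :=
  fun h => hc.notmem i (h ▸ mem_insert_self a (X j))

lemma insert_inj (hc : Cfg A a X) {i j : Fin 3} (h : insert a (X i) = insert a (X j)) :
    i = j := by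
  apply hc.inj
  have := congrArg (fun s => Finset.erase s a) h
  simpa [erase_insert (hc.notmem i), erase_insert (hc.notmem j)] using this

lemma insert_ne_insert (hc : Cfg A a X) {i j : Fin 3} (h : i ≠ j) :
    insert a (X i) ≠ insert a (X j) := fun he => h (insert_inj hc he)

lemma X_ne_X (hc : Cfg A a X) {i j : Fin 3} (h : i ≠ j) : X i ≠ X j :=
  fun he => h (hc.inj he)

/-- E1: for a minus-coordinate w, the only columns containing w but not a are the X i, i ≠ t -/
lemma E1 (hc : Cfg A a X) {w : ℕ} {t : Fin 3} (hM : PatM X w t) :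
    ∀ Y ∈ A, w ∈ Y → a ∉ Y → Y = X (t + 1) ∨ Y = X (t + 2) := by
  have hwa : w ≠ a := by
    intro h
    exact hc.notmem (t+1) (h ▸ (hM (t+1)).2 (fin3_a1 t))
  exact exact2 hc.avoid hwa (hc.memXa t) (mem_insert_self a _)
    (by simp [hM t, hwa])
    (hc.memX (t+1)) (hc.memX (t+2)) (X_ne_X hc (fin3_a12 t))
    ⟨(hM _).2 (fin3_a1 t), hc.notmem _⟩ ⟨(hM _).2 (fin3_a2 t), hc.notmem _⟩

/-- E2: for a plus-coordinate w, the only columns containing a but not w are insert a (X i), i ≠ s -/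
lemma E2 (hc : Cfg A a X) {w : ℕ} {s : Fin 3} (hP : PatP X w s) :
    ∀ Y ∈ A, a ∈ Y → w ∉ Y → Y = insert a (X (s + 1)) ∨ Y = insert a (X (s + 2)) := by
  have hwa : w ≠ a := fun h => hc.notmem s (h ▸ (hP s).2 rfl)
  exact exact2 hc.avoid (Ne.symm hwa) (hc.memX s) ((hP s).2 rfl) (hc.notmem s)
    (hc.memXa (s+1)) (hc.memXa (s+2)) (insert_ne_insert hc (fin3_a12 s))
    ⟨mem_insert_self a _, by simp [mem_insert, hwa, hP (s+1), fin3_a1 s]⟩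
    ⟨mem_insert_self a _, by simp [mem_insert, hwa, hP (s+2), fin3_a2 s]⟩

lemma G1 (hc : Cfg A a X) {u : ℕ} (hu : u ∈ Lof X) :
    ∀ Y ∈ A, a ∈ Y → u ∈ Y := by
  have hua : u ≠ a := fun h => haL hc (h ▸ hu)
  intro Y hY haY
  exact ruleR hc.avoid hua (hc.memX 0) (hc.memX 1) (hc.memX 2)
    (X_ne_X hc (by decide)) (X_ne_X hc (by decide)) (X_ne_X hc (by decide))
    ⟨hLsub X 0 hu, hc.notmem 0⟩ ⟨hLsub X 1 hu, hc.notmem 1⟩ ⟨hLsub X 2 hu, hc.notmem 2⟩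
    Y hY haY

lemma GW (hc : Cfg A a X) {u w : ℕ} (hu : u ∈ Lof X) (hw : w ∈ Wof X) :
    ∀ Y ∈ A, w ∈ Y → u ∈ Y := by
  have huw : u ≠ w := by
    intro h
    rw [Wof, mem_sdiff] at hw
    exact hw.2 (h ▸ hu)
  rcases pat_total hc hw with ⟨t, hM⟩ | ⟨s, hP⟩
  · intro Y hY hwY
    by_cases haY : a ∈ Y
    · exact G1 hc hu Y hY haY
    · rcases E1 hc hM Y hY hwY haY with rfl | rfl
      · exact hLsub X _ hu
      · exact hLsub X _ hu
  · -- plus-coordinate: four columns contain u but not w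
    have hwX : ∀ i, i ≠ s → w ∉ X i := fun i hi h => hi ((hP i).1 h)
    have hwa : w ≠ a := mem_W_ne_a hc hw
    exact ruleR hc.avoid huw (hc.memX (s+1)) (hc.memX (s+2)) (hc.memXa (s+1))
      (X_ne_X hc (fin3_a12 s)) (X_ne_insert hc _ _)
      (X_ne_insert hc _ _)
      ⟨hLsub X _ hu, hwX _ (fin3_a1 s)⟩ ⟨hLsub X _ hu, hwX _ (fin3_a2 s)⟩
      ⟨mem_insert_of_mem (hLsub X _ hu), by simp [mem_insert, hwa, hwX _ (fin3_a1 s)]⟩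

lemma G4 (hc : Cfg A a X) {Y : Finset ℕ} (hY : Y ∈ A) {x : ℕ}
    (hx : x ∈ Rof a X) (hxY : x ∈ Y) : Lof X ⊆ Y := by
  intro u hu
  rcases mem_insert.1 hx with rfl | hxW
  · exact G1 hc hu Y hY hxY
  · exact GW hc hu hxW Y hY hxY

lemma G3 (hc : Cfg A a X) {u : ℕ} (huL : u ∉ Lof X) (huW : u ∉ Wof X) (hua : u ≠ a) :
    ∀ Y ∈ A, u ∈ Y → Rof a X ⊆ Y := by
  have huX : ∀ i, u ∉ X i := by
    intro i hi
    rcases mem_union.1 (hXsub X i hi) with h | h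
    · exact huL h
    · exact huW h
  intro Y hY huY
  have haY : a ∈ Y := by
    refine ruleR hc.avoid (Ne.symm hua) (hc.memXa 0) (hc.memXa 1) (hc.memXa 2)
      (insert_ne_insert hc (by decide)) (insert_ne_insert hc (by decide))
      (insert_ne_insert hc (by decide)) ?_ ?_ ?_ Y hY huY
    all_goals exact ⟨mem_insert_self a _, by simp [mem_insert, hua, huX _]⟩
  intro x hx
  rcases mem_insert.1 hx with rfl | hxW
  · exact haY
  · -- x ∈ Wof X, show x ∈ Y
    have hxu : x ≠ u := fun h => huW (h ▸ hxW)
    rcases pat_total hc hxW with ⟨t, hM⟩ | ⟨s, hP⟩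
    · exact ruleR hc.avoid hxu (hc.memX (t+1)) (hc.memX (t+2)) (hc.memXa (t+1))
        (X_ne_X hc (fin3_a12 t)) (X_ne_insert hc _ _) (X_ne_insert hc _ _)
        ⟨(hM _).2 (fin3_a1 t), huX _⟩ ⟨(hM _).2 (fin3_a2 t), huX _⟩
        ⟨mem_insert_of_mem ((hM _).2 (fin3_a1 t)), by simp [mem_insert, hua, huX _]⟩
        Y hY huY
    · by_contra hxY
      rcases E2 hc hP Y hY haY hxY with rfl | rfl
      · rcases mem_insert.1 huY with h | h
        · exact hua h
        · exact huX _ h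
      · rcases mem_insert.1 huY with h | h
        · exact hua h
        · exact huX _ h

lemma S1 (hc : Cfg A a X) {Y Y' : Finset ℕ} (hY : Y ∈ A) (hY' : Y' ∈ A)
    (hne : Y ≠ Y') (heq : Y \ Rof a X = Y' \ Rof a X) : Y \ Rof a X = Lof X := by
  have hLR : ∀ u ∈ Lof X, u ∉ Rof a X := by
    intro u hu h
    rcases mem_insert.1 h with rfl | hW
    · exact haL hc hu
    · rw [Wof, mem_sdiff] at hW; exact hW.2 hu
  -- part 1 : some element of Rof distinguishes Y and Y'
  have hdiff : ∃ x ∈ Rof a X, (x ∈ Y ∧ x ∉ Y') ∨ (x ∈ Y' ∧ x ∉ Y) := by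
    by_contra hcon
    push_neg at hcon
    apply hne
    ext z
    by_cases hz : z ∈ Rof a X
    · have := hcon z hz
      tauto
    · constructor
      · intro h
        have : z ∈ Y' \ Rof a X := heq ▸ (mem_sdiff.2 ⟨h, hz⟩)
        exact (mem_sdiff.1 this).1
      · intro h
        have : z ∈ Y \ Rof a X := heq ▸ (mem_sdiff.2 ⟨h, hz⟩)
        exact (mem_sdiff.1 this).1
  apply Finset.Subset.antisymm
  · -- Y \ R ⊆ L
    intro u hu
    obtain ⟨huY, huR⟩ := mem_sdiff.1 hu
    by_contra huL
    have huW : u ∉ Wof X := fun h => huR (mem_insert_of_mem h)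
    have hua : u ≠ a := fun h => huR (by rw [h]; exact mem_insert_self a _)
    have hRY : Rof a X ⊆ Y := G3 hc huL huW hua Y hY huY
    have huY' : u ∈ Y' := by
      have : u ∈ Y' \ Rof a X := heq ▸ (mem_sdiff.2 ⟨huY, huR⟩)
      exact (mem_sdiff.1 this).1
    have hRY' : Rof a X ⊆ Y' := G3 hc huL huW hua Y' hY' huY'
    apply hne
    ext z
    by_cases hz : z ∈ Rof a X
    · exact ⟨fun _ => hRY' hz, fun _ => hRY hz⟩
    · constructor
      · intro h
        exact (mem_sdiff.1 (heq ▸ (mem_sdiff.2 ⟨h, hz⟩))).1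
      · intro h
        exact (mem_sdiff.1 (heq.symm ▸ (mem_sdiff.2 ⟨h, hz⟩))).1
  · -- L ⊆ Y \ R
    intro u hu
    obtain ⟨x, hxR, hcase⟩ := hdiff
    rcases hcase with ⟨hxY, _⟩ | ⟨hxY', _⟩
    · exact mem_sdiff.2 ⟨G4 hc hY hxR hxY hu, hLR u hu⟩
    · have : u ∈ Y' \ Rof a X := mem_sdiff.2 ⟨G4 hc hY' hxR hxY' hu, hLR u hu⟩
      rw [← heq] at this
      exact this

lemma X0_fiber (hc : Cfg A a X) : X 0 \ Rof a X = Lof X := by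
  ext z
  simp only [mem_sdiff, Rof, mem_insert]
  constructor
  · rintro ⟨hz, hnz⟩
    push_neg at hnz
    rcases mem_union.1 (hXsub X 0 hz) with h | h
    · exact h
    · exact absurd h hnz.2
  · intro hz
    refine ⟨hLsub X 0 hz, ?_⟩
    push_neg
    refine ⟨fun h => haL hc (h ▸ hz), fun h => ?_⟩
    rw [Wof, mem_sdiff] at h
    exact h.2 hz

/-- the main counting step : removing the rows of Rof -/
lemma Scount (hc : Cfg A a X) :
    A.card + 1 ≤ (A.image (· \ Rof a X)).card
      + (A.filter fun Y => Y \ Rof a X = Lof X).card := by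
  classical
  set Φ := A.filter (fun Y => Y \ Rof a X = Lof X) with hΦ
  set A2 := A \ Φ with hA2
  have hinj : Set.InjOn (· \ Rof a X) A2 := by
    intro x hx y hy hxy
    simp only [] at hxy
    by_contra hne
    have hxA : x ∈ A := (mem_sdiff.1 hx).1
    have hyA : y ∈ A := (mem_sdiff.1 hy).1
    have := S1 hc hxA hyA hne hxy
    exact (mem_sdiff.1 hx).2 (mem_filter.2 ⟨hxA, this⟩)
  have hsub : insert (Lof X) (A2.image (· \ Rof a X)) ⊆ A.image (· \ Rof a X) := by
    intro Z hZ
    rcases mem_insert.1 hZ with rfl | h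
    · exact mem_image.2 ⟨X 0, hc.memX 0, X0_fiber hc⟩
    · obtain ⟨Y, hY, rfl⟩ := mem_image.1 h
      exact mem_image.2 ⟨Y, (mem_sdiff.1 hY).1, rfl⟩
  have hLnot : Lof X ∉ A2.image (· \ Rof a X) := by
    intro h
    obtain ⟨Y, hY, hYe⟩ := mem_image.1 h
    exact (mem_sdiff.1 hY).2 (mem_filter.2 ⟨(mem_sdiff.1 hY).1, hYe⟩)
  have h1 : A2.card + 1 ≤ (A.image (· \ Rof a X)).card := by
    have := card_le_card hsub
    rw [card_insert_of_notMem hLnot, card_image_of_injOn hinj] at this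
    omega
  have h2 : A2.card = A.card - Φ.card := by
    rw [hA2, card_sdiff_of_subset (filter_subset _ _)]
  have h3 : Φ.card ≤ A.card := card_le_card (filter_subset _ _)
  omega

end Config
section Config2

variable {A : Finset (Finset ℕ)} {a : ℕ} {X : Fin 3 → Finset ℕ}

def S8of (a : ℕ) (X : Fin 3 → Finset ℕ) : Finset (Finset ℕ) :=
  insert (Lof X) (insert (Lof X ∪ Rof a X)
    ((univ : Finset (Fin 3)).image X ∪ (univ : Finset (Fin 3)).image (fun i => insert a (X i))))

def Phiof (A : Finset (Finset ℕ)) (a : ℕ) (X : Fin 3 → Finset ℕ) : Finset (Finset ℕ) :=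
  A.filter (fun Y => Y \ Rof a X = Lof X)

lemma memS8_X (a : ℕ) (X : Fin 3 → Finset ℕ) (i : Fin 3) : X i ∈ S8of a X := by
  simp only [S8of, mem_insert, mem_union, mem_image]
  exact Or.inr (Or.inr (Or.inl ⟨i, mem_univ i, rfl⟩))

lemma memS8_Xa (a : ℕ) (X : Fin 3 → Finset ℕ) (i : Fin 3) : insert a (X i) ∈ S8of a X := by
  simp only [S8of, mem_insert, mem_union, mem_image]
  exact Or.inr (Or.inr (Or.inr ⟨i, mem_univ i, rfl⟩))

lemma memS8_L (a : ℕ) (X : Fin 3 → Finset ℕ) : Lof X ∈ S8of a X := mem_insert_self _ _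

lemma memS8_top (a : ℕ) (X : Fin 3 → Finset ℕ) : Lof X ∪ Rof a X ∈ S8of a X := by
  simp only [S8of, mem_insert]; tauto

lemma cardS8 (a : ℕ) (X : Fin 3 → Finset ℕ) : (S8of a X).card ≤ 8 := by
  have h1 : ((univ : Finset (Fin 3)).image X).card ≤ 3 := le_trans card_image_le (by simp)
  have h2 : ((univ : Finset (Fin 3)).image (fun i => insert a (X i))).card ≤ 3 :=
    le_trans card_image_le (by simp)
  have h3 := card_union_le ((univ : Finset (Fin 3)).image X)
    ((univ : Finset (Fin 3)).image (fun i => insert a (X i)))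
  calc (S8of a X).card ≤ _ + 1 := card_insert_le _ _
    _ ≤ (_ + 1) + 1 := by exact Nat.add_le_add_right (card_insert_le _ _) 1
    _ ≤ 8 := by omega

lemma cardS8_shave (hc : Cfg A a X) {t0 : Fin 3} (h : X t0 = Lof X) :
    (S8of a X).card ≤ 7 := by
  have hmem : Lof X ∈ insert (Lof X ∪ Rof a X)
      ((univ : Finset (Fin 3)).image X ∪ (univ : Finset (Fin 3)).image (fun i => insert a (X i))) := by
    simp only [mem_insert, mem_union, mem_image]
    exact Or.inr (Or.inl ⟨t0, mem_univ t0, h⟩)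
  rw [S8of, insert_eq_self.2 hmem]
  have h1 : ((univ : Finset (Fin 3)).image X).card ≤ 3 := le_trans card_image_le (by simp)
  have h2 : ((univ : Finset (Fin 3)).image (fun i => insert a (X i))).card ≤ 3 :=
    le_trans card_image_le (by simp)
  have h3 := card_union_le ((univ : Finset (Fin 3)).image X)
    ((univ : Finset (Fin 3)).image (fun i => insert a (X i)))
  calc _ ≤ _ + 1 := card_insert_le _ _
    _ ≤ 7 := by omega

lemma mem_Phi (hY : Y ∈ Phiof A a X) : Y ∈ A ∧ Y \ Rof a X = Lof X := by
  exact ⟨(mem_filter.1 hY).1, (mem_filter.1 hY).2⟩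

lemma Phi_decomp (hY : Y ∈ Phiof A a X) : Y = Lof X ∪ (Y ∩ Rof a X) := by
  obtain ⟨_, hfib⟩ := mem_Phi hY
  ext z
  constructor
  · intro hz
    by_cases hzR : z ∈ Rof a X
    · exact mem_union_right _ (mem_inter.2 ⟨hz, hzR⟩)
    · exact mem_union_left _ (hfib ▸ mem_sdiff.2 ⟨hz, hzR⟩)
  · intro hz
    rcases mem_union.1 hz with h | h
    · exact mem_sdiff.1 (hfib ▸ h : z ∈ Y \ Rof a X) |>.1
    · exact (mem_inter.1 h).1

lemma Phi_L_sub (hY : Y ∈ Phiof A a X) : Lof X ⊆ Y := by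
  intro z hz
  rw [Phi_decomp hY]
  exact mem_union_left _ hz

/-- uniqueness of an extra column containing a and missing a minus-coordinate w -/
lemma Mexact (hc : Cfg A a X) {w : ℕ} {t : Fin 3} (hM : PatM X w t)
    {Y Y' : Finset ℕ} (hY : Y ∈ A) (hY' : Y' ∈ A) (haY : a ∈ Y) (haY' : a ∈ Y')
    (hwY : w ∉ Y) (hwY' : w ∉ Y')
    (hne : Y ≠ insert a (X t)) (hne' : Y' ≠ insert a (X t)) : Y = Y' := by
  have hwa : w ≠ a := fun h => hc.notmem (t+1) (h ▸ (hM (t+1)).2 (fin3_a1 t))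
  have h2 := exact2 hc.avoid (Ne.symm hwa) (hc.memX (t+1)) ((hM (t+1)).2 (fin3_a1 t))
    (hc.notmem (t+1)) (hc.memXa t) hY
    (Ne.symm hne)
    ⟨mem_insert_self a _, by simp [mem_insert, hwa, (hM t)]⟩
    ⟨haY, hwY⟩
  rcases h2 Y' hY' haY' hwY' with h | h
  · exact absurd h hne'
  · exact h.symm

/-- uniqueness of an extra column missing a and containing a plus-coordinate w -/
lemma Pexact (hc : Cfg A a X) {w : ℕ} {s : Fin 3} (hP : PatP X w s)
    {Y Y' : Finset ℕ} (hY : Y ∈ A) (hY' : Y' ∈ A) (haY : a ∉ Y) (haY' : a ∉ Y')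
    (hwY : w ∈ Y) (hwY' : w ∈ Y')
    (hne : Y ≠ X s) (hne' : Y' ≠ X s) : Y = Y' := by
  have hwa : w ≠ a := fun h => hc.notmem s (h ▸ (hP s).2 rfl)
  have h2 := exact2 hc.avoid hwa (hc.memXa (s+1)) (mem_insert_self a _)
    (by simp [mem_insert, hwa, hP (s+1), fin3_a1 s])
    (hc.memX s) hY
    (Ne.symm hne)
    ⟨(hP s).2 rfl, hc.notmem s⟩
    ⟨hwY, haY⟩
  rcases h2 Y' hY' hwY' haY' with h | h
  · exact absurd h hne'
  · exact h.symm

lemma patMP_false {w : ℕ} {t s : Fin 3} (hM : PatM X w t) (hP : PatP X w s) : False := by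
  have : ∃ i : Fin 3, i ≠ t ∧ i ≠ s := by fin_cases t <;> fin_cases s <;> decide
  obtain ⟨i, hit, his⟩ := this
  exact his ((hP i).1 ((hM i).2 hit))

lemma patM_unique {w : ℕ} {t t' : Fin 3} (hM : PatM X w t) (hM' : PatM X w t') : t = t' := by
  by_contra h
  exact (hM t).1 ((hM' t).2 (Ne.symm (by exact fun hh => h hh.symm))) rfl

lemma patP_unique {w : ℕ} {s s' : Fin 3} (hP : PatP X w s) (hP' : PatP X w s') : s = s' :=
  (hP' s).1 ((hP s).2 rfl)

lemma TypeConflict (hc : Cfg A a X) {w p : ℕ} {t s : Fin 3}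
    (hM : PatM X w t) (hP : PatP X p s) (hwp : w ≠ p) : t ≠ s := by
  rintro rfl
  have hpa : p ≠ a := fun h => hc.notmem t (h ▸ (hP t).2 rfl)
  have hrule := ruleR hc.avoid hwp (hc.memX (t+1)) (hc.memX (t+2)) (hc.memXa (t+1))
    (X_ne_X hc (fin3_a12 t)) (X_ne_insert hc _ _) (X_ne_insert hc _ _)
    ⟨(hM _).2 (fin3_a1 t), by simp [hP (t+1), fin3_a1 t]⟩
    ⟨(hM _).2 (fin3_a2 t), by simp [hP (t+2), fin3_a2 t]⟩
    ⟨mem_insert_of_mem ((hM _).2 (fin3_a1 t)), by simp [mem_insert, hpa, hP (t+1), fin3_a1 t]⟩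
  have := hrule (X t) (hc.memX t) ((hP t).2 rfl)
  exact (hM t).1 this rfl

/-- two distinct M-extras have the same missing-index type -/
lemma CL3M (hc : Cfg A a X) {Y Y' : Finset ℕ} {w w' : ℕ} {t t' : Fin 3}
    (hY : Y ∈ A) (hY' : Y' ∈ A) (hYS : Y ∉ S8of a X) (hY'S : Y' ∉ S8of a X)
    (haY : a ∈ Y) (haY' : a ∈ Y') (hwY : w ∉ Y) (hw'Y' : w' ∉ Y')
    (hM : PatM X w t) (hM' : PatM X w' t')
    (hYne : Y ≠ Y') (hww' : w ≠ w') : t = t' := by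
  have hwa : w ≠ a := fun h => hc.notmem (t+1) (h ▸ (hM (t+1)).2 (fin3_a1 t))
  have hw'Y : w' ∈ Y := by
    by_contra hw'Y
    exact hYne (Mexact hc hM' hY hY' haY haY' hw'Y hw'Y'
      (fun h => hYS (h ▸ memS8_Xa a X t')) (fun h => hY'S (h ▸ memS8_Xa a X t')))
  by_contra htt'
  have hw'Xt : w' ∈ X t := (hM' t).2 (fun h => htt' h)
  have hwXt : w ∉ X t := fun h => (hM t).1 h rfl
  have hrule := ruleR hc.avoid (Ne.symm hww') (hc.memX t) (hc.memXa t) hY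
    (X_ne_insert hc _ _) (fun h => hc.notmem t (h ▸ haY))
    (fun h => hYS (h.symm ▸ memS8_Xa a X t))
    ⟨hw'Xt, hwXt⟩
    ⟨mem_insert_of_mem hw'Xt, by simp [mem_insert, hwa, hwXt]⟩
    ⟨hw'Y, hwY⟩
  have hwXt' : w ∈ X t' := (hM t').2 (Ne.symm htt')
  have := hrule (X t') (hc.memX t') hwXt'
  exact (hM' t').1 this rfl

/-- two distinct P-extras have the same index type -/
lemma CL3P (hc : Cfg A a X) {Y Y' : Finset ℕ} {w w' : ℕ} {s s' : Fin 3}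
    (hY : Y ∈ A) (hY' : Y' ∈ A) (hYS : Y ∉ S8of a X) (hY'S : Y' ∉ S8of a X)
    (haY : a ∉ Y) (haY' : a ∉ Y') (hwY : w ∈ Y) (hw'Y' : w' ∈ Y')
    (hP : PatP X w s) (hP' : PatP X w' s')
    (hYne : Y ≠ Y') (hww' : w ≠ w') : s = s' := by
  have hw'a : w' ≠ a := fun h => hc.notmem s' (h ▸ (hP' s').2 rfl)
  have hw'Y : w' ∉ Y := by
    intro hw'Y
    exact hYne (Pexact hc hP' hY hY' haY haY' hw'Y hw'Y'
      (fun h => hYS (h ▸ memS8_X a X s')) (fun h => hY'S (h ▸ memS8_X a X s')))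
  by_contra hss'
  have hwXs : w ∈ X s := (hP s).2 rfl
  have hw'Xs : w' ∉ X s := fun h => hss' ((hP' s).1 h)
  have hrule := ruleR hc.avoid hww' (hc.memX s) (hc.memXa s) hY
    (X_ne_insert hc _ _) (fun h => hYS (h.symm ▸ memS8_X a X s))
    (fun h => hYS (h.symm ▸ memS8_Xa a X s))
    ⟨hwXs, hw'Xs⟩
    ⟨mem_insert_of_mem hwXs, by simp [mem_insert, hw'a, hw'Xs]⟩
    ⟨hwY, hw'Y⟩
  have := hrule (X s') (hc.memX s') ((hP' s').2 rfl)
  exact hss' ((hP s').1 this).symm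

end Config2
section Config3

variable {A : Finset (Finset ℕ)} {a : ℕ} {X : Fin 3 → Finset ℕ}

lemma classBound (hc : Cfg A a X) :
    (Phiof A a X).card ≤ 7 * (Rof a X).card / 3 + 1 := by
  classical
  have hrW : (Rof a X).card = (Wof X).card + 1 := card_insert_of_notMem (haW hc)
  set Φ := Phiof A a X with hΦdef
  set Ex := Φ \ S8of a X with hExdef
  -- characterization of extras
  have hchar : ∀ Y ∈ Ex, ∃ w, w ∈ Wof X ∧
      ((a ∈ Y ∧ w ∉ Y ∧ ∃ t, PatM X w t) ∨ (a ∉ Y ∧ w ∈ Y ∧ ∃ s, PatP X w s)) := by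
    intro Y hYEx
    have hYΦ : Y ∈ Φ := (mem_sdiff.1 hYEx).1
    have hYS : Y ∉ S8of a X := (mem_sdiff.1 hYEx).2
    have hYA : Y ∈ A := (mem_Phi hYΦ).1
    by_cases haY : a ∈ Y
    · have hWnotsub : ¬ Wof X ⊆ Y := by
        intro hWY
        apply hYS
        have hYtop : Y = Lof X ∪ Rof a X := by
          apply Finset.Subset.antisymm
          · conv_lhs => rw [Phi_decomp hYΦ]
            exact union_subset_union (Finset.Subset.refl _) inter_subset_right
          · exact union_subset (Phi_L_sub hYΦ) (insert_subset haY hWY)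
        exact hYtop ▸ memS8_top a X
      obtain ⟨w, hwW, hwY⟩ := not_subset.1 hWnotsub
      rcases pat_total hc hwW with ⟨t, hM⟩ | ⟨s, hP⟩
      · exact ⟨w, hwW, Or.inl ⟨haY, hwY, t, hM⟩⟩
      · rcases E2 hc hP Y hYA haY hwY with rfl | rfl
        · exact absurd (memS8_Xa a X (s+1)) hYS
        · exact absurd (memS8_Xa a X (s+2)) hYS
    · have hWY : ∃ w ∈ Wof X, w ∈ Y := by
        by_contra hcon
        push_neg at hcon
        apply hYS
        have hYL : Y = Lof X := by
          apply Finset.Subset.antisymm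
          · conv_lhs => rw [Phi_decomp hYΦ]
            apply union_subset (Finset.Subset.refl _)
            intro z hz
            obtain ⟨hzY, hzR⟩ := mem_inter.1 hz
            rcases mem_insert.1 hzR with rfl | hzW
            · exact absurd hzY haY
            · exact absurd hzY (hcon z hzW)
          · exact Phi_L_sub hYΦ
        exact hYL ▸ memS8_L a X
      obtain ⟨w, hwW, hwY⟩ := hWY
      rcases pat_total hc hwW with ⟨t, hM⟩ | ⟨s, hP⟩
      · rcases E1 hc hM Y hYA hwY haY with rfl | rfl
        · exact absurd (memS8_X a X (t+1)) hYS
        · exact absurd (memS8_X a X (t+2)) hYS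
      · exact ⟨w, hwW, Or.inr ⟨haY, hwY, s, hP⟩⟩
  -- the choice function
  set f : Finset ℕ → ℕ := fun Y =>
    if h : ∃ w, w ∈ Wof X ∧
      ((a ∈ Y ∧ w ∉ Y ∧ ∃ t, PatM X w t) ∨ (a ∉ Y ∧ w ∈ Y ∧ ∃ s, PatP X w s))
    then h.choose else 0 with hfdef
  have hf : ∀ Y ∈ Ex, f Y ∈ Wof X ∧
      ((a ∈ Y ∧ f Y ∉ Y ∧ ∃ t, PatM X (f Y) t) ∨ (a ∉ Y ∧ f Y ∈ Y ∧ ∃ s, PatP X (f Y) s)) := by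
    intro Y hY
    have hex := hchar Y hY
    rw [hfdef]
    simp only [dif_pos hex]
    exact hex.choose_spec
  have hinjf : Set.InjOn f Ex := by
    intro Y hY Y' hY' hff
    have hYA : Y ∈ A := (mem_Phi (mem_sdiff.1 hY).1).1
    have hY'A : Y' ∈ A := (mem_Phi (mem_sdiff.1 hY').1).1
    have hYS : Y ∉ S8of a X := (mem_sdiff.1 hY).2
    have hY'S : Y' ∉ S8of a X := (mem_sdiff.1 hY').2
    obtain ⟨hw, hsh⟩ := hf Y hY
    obtain ⟨hw', hsh'⟩ := hf Y' hY'
    rw [hff] at hsh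
    rcases hsh with ⟨haY, hwY, t, hM⟩ | ⟨haY, hwY, s, hP⟩ <;>
      rcases hsh' with ⟨haY', hwY', t', hM'⟩ | ⟨haY', hwY', s', hP'⟩
    · exact Mexact hc hM hYA hY'A haY haY' hwY hwY'
        (fun h => hYS (h ▸ memS8_Xa a X t)) (fun h => hY'S (h ▸ memS8_Xa a X t))
    · exact absurd (patMP_false hM hP') id
    · exact absurd (patMP_false hM' hP) id
    · exact Pexact hc hP hYA hY'A haY haY' hwY hwY'
        (fun h => hYS (h ▸ memS8_X a X s)) (fun h => hY'S (h ▸ memS8_X a X s))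
  have hcardEx : Ex.card ≤ (Wof X).card :=
    card_le_card_of_injOn f (fun Y hY => (hf Y hY).1) hinjf
  have hPhiCard : Φ.card ≤ (S8of a X).card + Ex.card := by
    have : Φ ⊆ S8of a X ∪ Ex := by
      intro Y hY
      by_cases h : Y ∈ S8of a X
      · exact mem_union_left _ h
      · exact mem_union_right _ (mem_sdiff.2 ⟨hY, h⟩)
    exact le_trans (card_le_card this) (card_union_le _ _)
  have hS8 := cardS8 a X
  rcases le_or_gt (Rof a X).card 3 with h3 | h3
  · -- powerset bound
    have hinj2 : Set.InjOn (· ∩ Rof a X) Φ := by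
      intro x hx y hy hxy
      simp only [] at hxy
      rw [Phi_decomp hx, Phi_decomp hy, hxy]
    have hpsub : Φ.image (· ∩ Rof a X) ⊆ (Rof a X).powerset := by
      intro Z hZ
      obtain ⟨Y, _, rfl⟩ := mem_image.1 hZ
      exact mem_powerset.2 inter_subset_right
    have hpow : Φ.card ≤ 2 ^ (Rof a X).card := by
      calc Φ.card = (Φ.image (· ∩ Rof a X)).card := (card_image_of_injOn hinj2).symm
        _ ≤ ((Rof a X).powerset).card := card_le_card hpsub
        _ = 2 ^ (Rof a X).card := card_powerset _
    set r := (Rof a X).card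
    interval_cases r <;> norm_num at hpow ⊢ <;> omega
  · by_cases h4 : (Rof a X).card = 4
    · -- refined analysis
      have hW3 : (Wof X).card = 3 := by omega
      by_cases hex2 : Ex.card ≤ 2
      · rw [h4]; omega
      · have hex3 : Ex.card = 3 := by omega
        obtain ⟨Y1, Y2, Y3, hne12, hne13, hne23, hExEq⟩ := card_eq_three.1 hex3
        have hY1 : Y1 ∈ Ex := by rw [hExEq]; simp
        have hY2 : Y2 ∈ Ex := by rw [hExEq]; simp
        have hY3 : Y3 ∈ Ex := by rw [hExEq]; simp
        have hY1A : Y1 ∈ A := (mem_Phi (mem_sdiff.1 hY1).1).1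
        have hY2A : Y2 ∈ A := (mem_Phi (mem_sdiff.1 hY2).1).1
        have hY3A : Y3 ∈ A := (mem_Phi (mem_sdiff.1 hY3).1).1
        have hY1S : Y1 ∉ S8of a X := (mem_sdiff.1 hY1).2
        have hY2S : Y2 ∉ S8of a X := (mem_sdiff.1 hY2).2
        have hY3S : Y3 ∉ S8of a X := (mem_sdiff.1 hY3).2
        obtain ⟨hw1W, hsh1⟩ := hf Y1 hY1
        obtain ⟨hw2W, hsh2⟩ := hf Y2 hY2
        obtain ⟨hw3W, hsh3⟩ := hf Y3 hY3
        set w1 := f Y1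
        set w2 := f Y2
        set w3 := f Y3
        have hw12 : w1 ≠ w2 := fun h => hne12 (hinjf hY1 hY2 h)
        have hw13 : w1 ≠ w3 := fun h => hne13 (hinjf hY1 hY3 h)
        have hw23 : w2 ≠ w3 := fun h => hne23 (hinjf hY2 hY3 h)
        have hWeq : ({w1, w2, w3} : Finset ℕ) = Wof X := by
          apply eq_of_subset_of_card_le
          · intro w hw
            simp only [mem_insert, mem_singleton] at hw
            rcases hw with rfl | rfl | rfl <;> assumption
          · rw [hW3, card_insert_of_notMem (by simp [hw12, hw13]),
              card_insert_of_notMem (by simp [hw23]), card_singleton]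
        have hallW : ∀ w ∈ Wof X, w = w1 ∨ w = w2 ∨ w = w3 := by
          intro w hw
          rw [← hWeq] at hw
          simpa using hw
        -- a finisher for the shave cases
        have hshave : (∃ t0 : Fin 3, X t0 = Lof X) → Φ.card ≤ 7 * (Rof a X).card / 3 + 1 := by
          rintro ⟨t0, ht0⟩
          have := cardS8_shave hc ht0
          rw [h4]
          omega
        rcases hsh1 with ⟨ha1, hw1Y, t1, hM1⟩ | ⟨ha1, hw1Y, s1, hP1⟩ <;>
          rcases hsh2 with ⟨ha2, hw2Y, t2, hM2⟩ | ⟨ha2, hw2Y, s2, hP2⟩ <;>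
          rcases hsh3 with ⟨ha3, hw3Y, t3, hM3⟩ | ⟨ha3, hw3Y, s3, hP3⟩
        · -- MMM : contradiction
          have e12 : t1 = t2 := CL3M hc hY1A hY2A hY1S hY2S ha1 ha2 hw1Y hw2Y hM1 hM2 hne12 hw12
          have e13 : t1 = t3 := CL3M hc hY1A hY3A hY1S hY3S ha1 ha3 hw1Y hw3Y hM1 hM3 hne13 hw13
          have hXW : ∀ i, i ≠ t1 → Wof X ⊆ X i := by
            intro i hi w hw
            rcases hallW w hw with rfl | rfl | rfl
            · exact (hM1 i).2 hi
            · exact (hM2 i).2 (e12 ▸ hi)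
            · exact (hM3 i).2 (e13 ▸ hi)
          have hXeq : X (t1+1) = X (t1+2) := by
            apply Finset.Subset.antisymm
            · intro x hx
              rcases mem_union.1 (hXsub X _ hx) with h | h
              · exact hLsub X _ h
              · exact hXW _ (fin3_a2 t1) h
            · intro x hx
              rcases mem_union.1 (hXsub X _ hx) with h | h
              · exact hLsub X _ h
              · exact hXW _ (fin3_a1 t1) h
          exact absurd (hc.inj hXeq) (fin3_a12 t1)
        · -- MMP : shave with t1
          have e12 : t1 = t2 := CL3M hc hY1A hY2A hY1S hY2S ha1 ha2 hw1Y hw2Y hM1 hM2 hne12 hw12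
          have hts : t1 ≠ s3 := TypeConflict hc hM1 hP3 hw13
          apply hshave
          refine ⟨t1, Finset.Subset.antisymm ?_ (hLsub X t1)⟩
          intro x hx
          rcases mem_union.1 (hXsub X _ hx) with h | h
          · exact h
          · exfalso
            rcases hallW x h with rfl | rfl | rfl
            · exact (hM1 t1).1 hx rfl
            · exact (hM2 t1).1 hx e12
            · exact hts ((hP3 t1).1 hx)
        · -- MPM : shave with t1
          have e13 : t1 = t3 := CL3M hc hY1A hY3A hY1S hY3S ha1 ha3 hw1Y hw3Y hM1 hM3 hne13 hw13
          have hts : t1 ≠ s2 := TypeConflict hc hM1 hP2 hw12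
          apply hshave
          refine ⟨t1, Finset.Subset.antisymm ?_ (hLsub X t1)⟩
          intro x hx
          rcases mem_union.1 (hXsub X _ hx) with h | h
          · exact h
          · exfalso
            rcases hallW x h with rfl | rfl | rfl
            · exact (hM1 t1).1 hx rfl
            · exact hts ((hP2 t1).1 hx)
            · exact (hM3 t1).1 hx e13
        · -- MPP : shave with t1
          have es : s2 = s3 := CL3P hc hY2A hY3A hY2S hY3S ha2 ha3 hw2Y hw3Y hP2 hP3 hne23 hw23
          have hts : t1 ≠ s2 := TypeConflict hc hM1 hP2 hw12
          apply hshave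
          refine ⟨t1, Finset.Subset.antisymm ?_ (hLsub X t1)⟩
          intro x hx
          rcases mem_union.1 (hXsub X _ hx) with h | h
          · exact h
          · exfalso
            rcases hallW x h with rfl | rfl | rfl
            · exact (hM1 t1).1 hx rfl
            · exact hts ((hP2 t1).1 hx)
            · exact hts (es ▸ (hP3 t1).1 hx)
        · -- PMM : shave with t2
          have e23 : t2 = t3 := CL3M hc hY2A hY3A hY2S hY3S ha2 ha3 hw2Y hw3Y hM2 hM3 hne23 hw23
          have hts : t2 ≠ s1 := TypeConflict hc hM2 hP1 (Ne.symm hw12)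
          apply hshave
          refine ⟨t2, Finset.Subset.antisymm ?_ (hLsub X t2)⟩
          intro x hx
          rcases mem_union.1 (hXsub X _ hx) with h | h
          · exact h
          · exfalso
            rcases hallW x h with rfl | rfl | rfl
            · exact hts ((hP1 t2).1 hx)
            · exact (hM2 t2).1 hx rfl
            · exact (hM3 t2).1 hx e23
        · -- PMP : shave with t2
          have es : s1 = s3 := CL3P hc hY1A hY3A hY1S hY3S ha1 ha3 hw1Y hw3Y hP1 hP3 hne13 hw13
          have hts : t2 ≠ s1 := TypeConflict hc hM2 hP1 (Ne.symm hw12)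
          apply hshave
          refine ⟨t2, Finset.Subset.antisymm ?_ (hLsub X t2)⟩
          intro x hx
          rcases mem_union.1 (hXsub X _ hx) with h | h
          · exact h
          · exfalso
            rcases hallW x h with rfl | rfl | rfl
            · exact hts ((hP1 t2).1 hx)
            · exact (hM2 t2).1 hx rfl
            · exact hts (es ▸ (hP3 t2).1 hx)
        · -- PPM : shave with t3
          have es : s1 = s2 := CL3P hc hY1A hY2A hY1S hY2S ha1 ha2 hw1Y hw2Y hP1 hP2 hne12 hw12
          have hts : t3 ≠ s1 := TypeConflict hc hM3 hP1 (Ne.symm hw13)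
          apply hshave
          refine ⟨t3, Finset.Subset.antisymm ?_ (hLsub X t3)⟩
          intro x hx
          rcases mem_union.1 (hXsub X _ hx) with h | h
          · exact h
          · exfalso
            rcases hallW x h with rfl | rfl | rfl
            · exact hts ((hP1 t3).1 hx)
            · exact hts (es ▸ (hP2 t3).1 hx)
            · exact (hM3 t3).1 hx rfl
        · -- PPP : contradiction
          have e12 : s1 = s2 := CL3P hc hY1A hY2A hY1S hY2S ha1 ha2 hw1Y hw2Y hP1 hP2 hne12 hw12
          have e13 : s1 = s3 := CL3P hc hY1A hY3A hY1S hY3S ha1 ha3 hw1Y hw3Y hP1 hP3 hne13 hw13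
          have hXL : ∀ i, i ≠ s1 → X i = Lof X := by
            intro i hi
            apply Finset.Subset.antisymm
            · intro x hx
              rcases mem_union.1 (hXsub X _ hx) with h | h
              · exact h
              · exfalso
                rcases hallW x h with rfl | rfl | rfl
                · exact hi ((hP1 i).1 hx)
                · exact hi (e12 ▸ (hP2 i).1 hx)
                · exact hi (e13 ▸ (hP3 i).1 hx)
            · exact hLsub X i
          have hXeq : X (s1+1) = X (s1+2) := by
            rw [hXL _ (fin3_a1 s1), hXL _ (fin3_a2 s1)]
          exact absurd (hc.inj hXeq) (fin3_a12 s1)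
    · -- crude bound
      have h5 : 5 ≤ (Rof a X).card := by omega
      omega

end Config3

theorem mainUB (R : Finset ℕ) : ∀ A : Finset (Finset ℕ), AvoidsN A →
    (∀ Y ∈ A, Y ⊆ R) → A.card ≤ 7 * R.card / 3 + 1 := by
  induction R using Finset.strongInduction with
  | _ R ih =>
    intro A hA hsub
    by_cases hR2 : R.card ≤ 2
    · have hps : A ⊆ R.powerset := fun Y hY => mem_powerset.2 (hsub Y hY)
      have hp := card_le_card hps
      rw [card_powerset] at hp
      have h012 : R.card = 0 ∨ R.card = 1 ∨ R.card = 2 := by omega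
      rcases h012 with h | h | h <;> rw [h] at hp ⊢ <;> norm_num at hp ⊢ <;> omega
    · push_neg at hR2
      have hRne : R.Nonempty := card_pos.1 (by omega)
      obtain ⟨a, haR⟩ := hRne
      set D := A.filter (fun Y => a ∉ Y ∧ insert a Y ∈ A) with hD
      by_cases hd : D.card ≤ 2
      · -- cheap case : remove the single row a
        have h1 : A.card ≤ (A.image (· \ {a})).card + D.card := card_le_erase_row A a
        have hAv' := avoidsN_image_sdiff hA ({a} : Finset ℕ)
        have hmem' : ∀ Y ∈ A.image (· \ {a}), Y ⊆ R.erase a := by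
          intro Y hY
          obtain ⟨Z, hZ, rfl⟩ := mem_image.1 hY
          rw [erase_eq]
          exact sdiff_subset_sdiff (hsub Z hZ) (Finset.Subset.refl _)
        have hss : R.erase a ⊂ R := erase_ssubset haR
        have h2 := ih (R.erase a) hss _ hAv' hmem'
        rw [card_erase_of_mem haR] at h2
        omega
      · push_neg at hd
        obtain ⟨D', hD'sub, hD'card⟩ := Finset.exists_subset_card_eq (n := 3) hd
        obtain ⟨x, y, z, hxy, hxz, hyz, rfl⟩ := card_eq_three.1 hD'card
        have hxD : x ∈ D := hD'sub (by simp)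
        have hyD : y ∈ D := hD'sub (by simp)
        have hzD : z ∈ D := hD'sub (by simp)
        set X : Fin 3 → Finset ℕ := ![x, y, z] with hXdef
        have hXvals : X 0 = x ∧ X 1 = y ∧ X 2 = z := by
          refine ⟨rfl, rfl, rfl⟩
        have hXD : ∀ i, X i ∈ D := by
          intro i
          rcases fin3_cases i with rfl | rfl | rfl <;> simpa [hXdef]
        have hinj : Function.Injective X := by
          intro i j h
          rcases fin3_cases i with rfl | rfl | rfl <;>
            rcases fin3_cases j with rfl | rfl | rfl <;>
            simp_all [hXdef] <;> first | rfl | (exfalso; tauto)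
        have hc : Cfg A a X := by
          refine ⟨hA, ?_, ?_, ?_, hinj⟩
          · intro i
            exact (mem_filter.1 (hXD i)).1
          · intro i
            exact (mem_filter.1 (hXD i)).2.2
          · intro i
            exact (mem_filter.1 (hXD i)).2.1
        have hcount := Scount hc
        have hclass := classBound hc
        have hPhiEq : Phiof A a X = A.filter (fun Y => Y \ Rof a X = Lof X) := rfl
        rw [hPhiEq] at hclass
        have hAv' := avoidsN_image_sdiff hA (Rof a X)
        have hRsub : Rof a X ⊆ R := by
          intro t ht
          rcases mem_insert.1 ht with rfl | htW
          · exact haR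
          · have : t ∈ X 0 ∪ X 1 ∪ X 2 := (mem_sdiff.1 htW).1
            rcases mem_union.1 this with h | h
            · rcases mem_union.1 h with h' | h'
              · exact hsub _ (mem_filter.1 (hXD 0)).1 h'
              · exact hsub _ (mem_filter.1 (hXD 1)).1 h'
            · exact hsub _ (mem_filter.1 (hXD 2)).1 h
        have hmem' : ∀ Y ∈ A.image (· \ Rof a X), Y ⊆ R \ Rof a X := by
          intro Y hY
          obtain ⟨Z, hZ, rfl⟩ := mem_image.1 hY
          exact sdiff_subset_sdiff (hsub Z hZ) (Finset.Subset.refl _)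
        have hss : R \ Rof a X ⊂ R := by
          have hne : (Rof a X).Nonempty := ⟨a, mem_insert_self a _⟩
          exact sdiff_ssubset hRsub hne
        have h2 := ih _ hss _ hAv' hmem'
        have hcs : (R \ Rof a X).card = R.card - (Rof a X).card := card_sdiff_of_subset hRsub
        have hrR : (Rof a X).card ≤ R.card := card_le_card hRsub
        rw [hcs] at h2
        omega

theorem finUB {m : ℕ} (A : Finset (Finset (Fin m))) (hA : AvoidsF010 3 m A) :
    A.card ≤ 7 * m / 3 + 1 := by
  classical
  have hkey : ∀ (Z : Finset (Fin m)) (v : Fin m),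
      (v : ℕ) ∈ Z.image (fun w : Fin m => (w : ℕ)) ↔ v ∈ Z := by
    intro Z v
    simp [Fin.val_inj]
  have hginj : Function.Injective (fun Z : Finset (Fin m) => Z.image (fun w : Fin m => (w : ℕ))) := by
    intro x y h
    simp only [] at h
    ext v
    rw [← hkey x v, ← hkey y v, h]
  set A' := A.image (fun Z : Finset (Fin m) => Z.image (fun w : Fin m => (w : ℕ))) with hA'
  have hcard : A'.card = A.card := card_image_of_injective A hginj
  have hmemA' : ∀ Y ∈ A', Y ⊆ range m := by
    intro Y hY
    obtain ⟨Z, _, rfl⟩ := mem_image.1 hY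
    intro v hv
    obtain ⟨w, _, rfl⟩ := mem_image.1 hv
    exact mem_range.2 w.isLt
  have hAv : AvoidsN A' := by
    intro i j hij hw
    obtain ⟨Y', hY', hjY', hiY'⟩ := hw
    obtain ⟨Xw, hXw, rfl⟩ := mem_image.1 hY'
    obtain ⟨jf, hjf, rfl⟩ := mem_image.1 hjY'
    by_cases him : i < m
    · set i0 : Fin m := ⟨i, him⟩ with hi0
      have hne : i0 ≠ jf := by
        intro h
        apply hij
        rw [← h]
      have hiXw : i0 ∉ Xw := by
        intro h
        exact hiY' ((hkey Xw i0).2 h)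
      have hcap := hA i0 jf hne ⟨Xw, hXw, hjf, hiXw⟩
      norm_num at hcap
      have hsub : (A'.filter fun Y => i ∈ Y ∧ (jf : ℕ) ∉ Y)
          ⊆ (A.filter fun Y => i0 ∈ Y ∧ jf ∉ Y).image
              (fun Z : Finset (Fin m) => Z.image (fun w : Fin m => (w : ℕ))) := by
        intro Z' hZ'
        have h := mem_filter.1 hZ'
        obtain ⟨Z, hZ, rfl⟩ := mem_image.1 h.1
        have hi0Z : i0 ∈ Z := (hkey Z i0).1 h.2.1
        have hjfZ : jf ∉ Z := fun hh => h.2.2 ((hkey Z jf).2 hh)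
        exact mem_image.2 ⟨Z, mem_filter.2 ⟨hZ, hi0Z, hjfZ⟩, rfl⟩
      calc _ ≤ _ := card_le_card hsub
        _ ≤ _ := card_image_le
        _ ≤ 2 := hcap
    · have : (A'.filter fun Y => i ∈ Y ∧ (jf : ℕ) ∉ Y) = ∅ := by
        rw [eq_empty_iff_forall_notMem]
        intro Z hZ
        have h := mem_filter.1 hZ
        obtain ⟨Z0, _, rfl⟩ := mem_image.1 h.1
        obtain ⟨w, _, hwv⟩ := mem_image.1 h.2.1
        exact him (hwv ▸ w.isLt)
      rw [this]; simp
  have := mainUB (range m) A' hAv hmemA'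
  rw [hcard, card_range] at this
  exact this

section Construction

variable (m : ℕ)

def qq : ℕ := m / 3 - 1
def blkC (v : ℕ) : ℕ := min (v / 3) (qq m)
def LsetC (t : ℕ) : Finset (Fin m) := univ.filter (fun x : Fin m => x.val < 3 * t)
def BsetC (t : ℕ) : Finset (Fin m) := univ.filter (fun x : Fin m => blkC m x.val = t)
def SCC (t : ℕ) : Finset (Finset (Fin m)) :=
  if t < qq m then (BsetC m t).powerset.erase ∅
  else ((BsetC m (qq m)).image fun j => {j})
    ∪ ((BsetC m (qq m)).image fun j => (BsetC m (qq m)).erase j)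
    ∪ {BsetC m (qq m)}
def CC : Finset (Finset (Fin m)) :=
  insert ∅ ((range (qq m + 1)).biUnion fun t => (SCC m t).image fun S => LsetC m t ∪ S)

variable {m}

lemma qq_facts (hm : 3 ≤ m) : 3 * qq m + 3 ≤ m ∧ m ≤ 3 * qq m + 5 := by
  unfold qq
  omega

lemma mem_Bset {t : ℕ} {x : Fin m} : x ∈ BsetC m t ↔ blkC m (x : ℕ) = t := by
  simp [BsetC]

lemma mem_Lset {t : ℕ} {x : Fin m} : x ∈ LsetC m t ↔ (x : ℕ) < 3 * t := by
  simp [LsetC]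

lemma card_filter_val (p : ℕ → Prop) [DecidablePred p] :
    ((univ : Finset (Fin m)).filter fun x : Fin m => p x.val).card = ((range m).filter p).card := by
  rw [← card_image_of_injOn (f := fun x : Fin m => (x : ℕ))
    (Fin.val_injective.injOn)]
  congr 1
  ext v
  simp only [mem_image, mem_filter, mem_univ, true_and, mem_range]
  constructor
  · rintro ⟨x, hx, rfl⟩
    exact ⟨x.isLt, hx⟩
  · rintro ⟨hv, hp⟩
    exact ⟨⟨v, hv⟩, hp, rfl⟩

lemma card_Bset_lt (hm : 3 ≤ m) {t : ℕ} (ht : t < qq m) : (BsetC m t).card = 3 := by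
  obtain ⟨hq1, hq2⟩ := qq_facts hm
  unfold BsetC
  rw [card_filter_val (m := m) (fun v => blkC m v = t)]
  have : (range m).filter (fun v => blkC m v = t) = {3*t, 3*t+1, 3*t+2} := by
    ext v
    rw [mem_filter]; simp only [mem_range, mem_insert, mem_singleton, blkC]
    omega
  rw [this]
  rw [card_insert_of_notMem (by simp), card_insert_of_notMem (by simp),
    card_singleton]

lemma card_Bset_q (hm : 3 ≤ m) : (BsetC m (qq m)).card = m - 3 * qq m := by
  obtain ⟨hq1, hq2⟩ := qq_facts hm
  unfold BsetC
  rw [card_filter_val (m := m) (fun v => blkC m v = qq m)]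
  have : (range m).filter (fun v => blkC m v = qq m) = Finset.Ico (3 * qq m) m := by
    ext v
    rw [mem_filter]; simp only [mem_range, mem_Ico, blkC]
    omega
  rw [this, Nat.card_Ico]

lemma SC_sub {t : ℕ} {S : Finset (Fin m)} (hS : S ∈ SCC m t) :
    S ⊆ BsetC m (if t < qq m then t else qq m) := by
  unfold SCC at hS
  by_cases h : t < qq m
  · rw [if_pos h] at hS
    rw [if_pos h]
    exact mem_powerset.1 (mem_of_mem_erase hS)
  · rw [if_neg h] at hS
    rw [if_neg h]
    rcases mem_union.1 hS with h' | h'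
    · rcases mem_union.1 h' with h'' | h''
      · obtain ⟨j, hj, rfl⟩ := mem_image.1 h''
        intro z hz
        rw [mem_singleton.1 hz]
        exact hj
      · obtain ⟨j, _, rfl⟩ := mem_image.1 h''
        exact erase_subset _ _
    · rw [mem_singleton.1 h']

lemma SC_sub' {t : ℕ} (ht : t ≤ qq m) {S : Finset (Fin m)} (hS : S ∈ SCC m t) :
    S ⊆ BsetC m t := by
  have := SC_sub hS
  by_cases h : t < qq m
  · rwa [if_pos h] at this
  · have : t = qq m := by omega
    subst this
    have h2 := SC_sub hS
    rwa [if_neg (lt_irrefl _)] at h2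

lemma SC_nonempty (hm : 3 ≤ m) {t : ℕ} {S : Finset (Fin m)}
    (hS : S ∈ SCC m t) : S.Nonempty := by
  obtain ⟨hq1, hq2⟩ := qq_facts hm
  have hBq : 3 ≤ (BsetC m (qq m)).card := by
    rw [card_Bset_q hm]; omega
  unfold SCC at hS
  by_cases h : t < qq m
  · rw [if_pos h] at hS
    exact nonempty_of_ne_empty (ne_of_mem_erase hS)
  · rw [if_neg h] at hS
    rcases mem_union.1 hS with h' | h'
    · rcases mem_union.1 h' with h'' | h''
      · obtain ⟨j, _, rfl⟩ := mem_image.1 h''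
        exact ⟨j, mem_singleton_self j⟩
      · obtain ⟨j, hj, rfl⟩ := mem_image.1 h''
        apply card_pos.1
        rw [card_erase_of_mem hj]
        omega
    · rw [mem_singleton.1 h']
      apply card_pos.1
      omega

lemma card_SCC_lt (hm : 3 ≤ m) {t : ℕ} (ht : t < qq m) : (SCC m t).card = 7 := by
  unfold SCC
  rw [if_pos ht, card_erase_of_mem (empty_mem_powerset _), card_powerset, card_Bset_lt hm ht]
  norm_num

lemma card_SCC_q (hm : 3 ≤ m) : (SCC m (qq m)).card = 2 * (m - 3 * qq m) + 1 := by
  obtain ⟨hq1, hq2⟩ := qq_facts hm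
  have hBcard := card_Bset_q hm
  have hs3 : 3 ≤ (BsetC m (qq m)).card := by omega
  unfold SCC
  rw [if_neg (lt_irrefl _)]
  have hcard1 : ((BsetC m (qq m)).image fun j => ({j} : Finset (Fin m))).card
      = m - 3 * qq m := by
    rw [card_image_of_injOn, hBcard]
    intro x _ y _ h
    simpa using h
  have hcard2 : ((BsetC m (qq m)).image fun j => (BsetC m (qq m)).erase j).card
      = m - 3 * qq m := by
    rw [card_image_of_injOn, hBcard]
    intro x hx y hy h
    simp only [] at h
    by_contra hne
    have : x ∈ (BsetC m (qq m)).erase y := mem_erase.2 ⟨hne, hx⟩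
    rw [← h] at this
    exact (mem_erase.1 this).1 rfl
  have hdisj1 : Disjoint ((BsetC m (qq m)).image fun j => ({j} : Finset (Fin m)))
      ((BsetC m (qq m)).image fun j => (BsetC m (qq m)).erase j) := by
    rw [disjoint_left]
    intro Z hZ1 hZ2
    obtain ⟨j, _, rfl⟩ := mem_image.1 hZ1
    obtain ⟨j', hj', he⟩ := mem_image.1 hZ2
    have hc1 : ({j} : Finset (Fin m)).card = 1 := card_singleton j
    have hc2 := card_erase_of_mem hj'
    rw [he] at hc2
    omega
  have hdisj2 : Disjoint
      (((BsetC m (qq m)).image fun j => ({j} : Finset (Fin m)))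
        ∪ ((BsetC m (qq m)).image fun j => (BsetC m (qq m)).erase j))
      ({BsetC m (qq m)} : Finset (Finset (Fin m))) := by
    rw [disjoint_left]
    intro Z hZ1 hZ2
    rw [mem_singleton.1 hZ2] at hZ1
    rcases mem_union.1 hZ1 with h | h
    · obtain ⟨j, _, he⟩ := mem_image.1 h
      have := card_singleton j
      rw [he] at this
      omega
    · obtain ⟨j, hj, he⟩ := mem_image.1 h
      have := card_erase_of_mem hj
      rw [he] at this
      omega
  rw [card_union_of_disjoint hdisj2, card_union_of_disjoint hdisj1, hcard1, hcard2,
    card_singleton]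
  omega

lemma L_B_disjoint {t : ℕ} (ht : t ≤ qq m) : ∀ x ∈ LsetC m t, x ∉ BsetC m t := by
  intro x hx hxB
  rw [mem_Lset] at hx
  rw [mem_Bset] at hxB
  unfold blkC at hxB
  omega

lemma lvl_inj {t : ℕ} (ht : t ≤ qq m) :
    Set.InjOn (fun S => LsetC m t ∪ S) (SCC m t) := by
  intro S hS S' hS' h
  simp only [] at h
  have key : ∀ S₀ : Finset (Fin m), S₀ ∈ SCC m t → (LsetC m t ∪ S₀) ∩ BsetC m t = S₀ := by
    intro S₀ hS₀
    ext z
    simp only [mem_inter, mem_union]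
    constructor
    · rintro ⟨h1 | h1, h2⟩
      · exact absurd h2 (L_B_disjoint ht z h1)
      · exact h1
    · intro hz
      exact ⟨Or.inr hz, SC_sub' ht hS₀ hz⟩
  rw [← key S hS, ← key S' hS', h]

lemma card_CC (hm : 3 ≤ m) : (CC m).card = 7 * m / 3 + 1 := by
  obtain ⟨hq1, hq2⟩ := qq_facts hm
  unfold CC
  have hnotmem : (∅ : Finset (Fin m)) ∉
      (range (qq m + 1)).biUnion fun t => (SCC m t).image fun S => LsetC m t ∪ S := by
    intro h
    obtain ⟨t, _, hC⟩ := mem_biUnion.1 h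
    obtain ⟨S, hS, hSe⟩ := mem_image.1 hC
    obtain ⟨z, hz⟩ := SC_nonempty hm hS
    have : z ∈ (∅ : Finset (Fin m)) := hSe ▸ mem_union_right _ hz
    simp at this
  rw [card_insert_of_notMem hnotmem]
  rw [card_biUnion]
  · have hsum : ∀ t ∈ range (qq m), ((SCC m t).image fun S => LsetC m t ∪ S).card = 7 := by
      intro t ht
      rw [mem_range] at ht
      rw [card_image_of_injOn (lvl_inj (le_of_lt ht)), card_SCC_lt hm ht]
    rw [Finset.sum_range_succ]
    rw [Finset.sum_congr rfl hsum, Finset.sum_const, smul_eq_mul]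
    rw [card_image_of_injOn (lvl_inj (le_refl _)), card_SCC_q hm, card_range]
    omega
  · -- pairwise disjoint levels
    intro t ht t' ht' htt'
    rw [mem_coe, mem_range, Nat.lt_succ_iff] at ht ht'
    rw [Function.onFun, disjoint_left]
    intro C hC hC'
    obtain ⟨S, hS, hSe⟩ := mem_image.1 hC
    obtain ⟨S', hS', hSe'⟩ := mem_image.1 hC'
    -- C has an element with blk = t and one with blk = t' ; and all elements blk ≤ max
    have hmax : ∀ (u : ℕ) (hu : u ≤ qq m) (S₀ : Finset (Fin m)), S₀ ∈ SCC m u →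
        (∀ x ∈ LsetC m u ∪ S₀, blkC m (x : ℕ) ≤ u) ∧ (∃ x ∈ LsetC m u ∪ S₀, blkC m (x : ℕ) = u) := by
      intro u hu S₀ hS₀
      constructor
      · intro x hx
        rcases mem_union.1 hx with h | h
        · rw [mem_Lset] at h
          unfold blkC
          omega
        · have := SC_sub' hu hS₀ h
          rw [mem_Bset] at this
          omega
      · obtain ⟨z, hz⟩ := SC_nonempty hm hS₀
        refine ⟨z, mem_union_right _ hz, ?_⟩
        have := SC_sub' hu hS₀ hz
        rwa [mem_Bset] at this
    obtain ⟨hall, _⟩ := hmax t ht S hS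
    obtain ⟨_, ⟨x, hx, hxb⟩⟩ := hmax t' ht' S' hS'
    rw [hSe'] at hx
    rw [← hSe] at hx
    have := hall x hx
    -- symmetric : also need other direction
    obtain ⟨hall', _⟩ := hmax t' ht' S' hS'
    obtain ⟨_, ⟨y, hy, hyb⟩⟩ := hmax t ht S hS
    rw [hSe] at hy
    rw [← hSe'] at hy
    have h2 := hall' y hy
    omega

end Construction

lemma mem_CC {C : Finset (Fin m)} :
    C ∈ CC m ↔ C = ∅ ∨ ∃ t, t ≤ qq m ∧ ∃ S ∈ SCC m t, C = LsetC m t ∪ S := by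
  unfold CC
  simp only [mem_insert, mem_biUnion, mem_range, Nat.lt_succ_iff, mem_image]
  constructor
  · rintro (rfl | ⟨t, ht, S, hS, rfl⟩)
    · exact Or.inl rfl
    · exact Or.inr ⟨t, ht, S, hS, rfl⟩
  · rintro (rfl | ⟨t, ht, S, hS, rfl⟩)
    · exact Or.inl rfl
    · exact Or.inr ⟨t, ht, S, hS, rfl⟩

theorem CC_avoids (hm : 3 ≤ m) : AvoidsF010 3 m (CC m) := by
  obtain ⟨hq1, hq2⟩ := qq_facts hm
  intro i j hij hwit
  obtain ⟨Xw, hXw, hjX, hiX⟩ := hwit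
  -- decompose the witness column
  rcases mem_CC.1 hXw with rfl | ⟨t, ht, S, hS, rfl⟩
  · simp at hjX
  -- blk j ≤ blk i
  have hble : blkC m (j : ℕ) ≤ blkC m (i : ℕ) := by
    have hiL : ¬ (i : ℕ) < 3 * t := by
      intro h
      exact hiX (mem_union_left _ (mem_Lset.2 h))
    rcases mem_union.1 hjX with hjL | hjS
    · rw [mem_Lset] at hjL
      unfold blkC
      omega
    · have := SC_sub' ht hS hjS
      rw [mem_Bset] at this
      unfold blkC at this ⊢
      omega
  have hsub2 : (CC m).filter (fun Y => i ∈ Y ∧ j ∉ Y) ⊆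
      {LsetC m (blkC m (i : ℕ)) ∪ {i}, LsetC m (blkC m (i : ℕ)) ∪ (BsetC m (blkC m (i : ℕ))).erase j} := by
    intro C hC
    obtain ⟨hCC, hiC, hjC⟩ := mem_filter.1 hC
    rcases mem_CC.1 hCC with rfl | ⟨t', ht', S', hS', rfl⟩
    · simp at hiC
    have hjL' : ¬ (j : ℕ) < 3 * t' := by
      intro h
      exact hjC (mem_union_left _ (mem_Lset.2 h))
    have hiS' : i ∈ S' := by
      rcases mem_union.1 hiC with h | h
      · exfalso
        rw [mem_Lset] at h
        unfold blkC at hble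
        omega
      · exact h
    have hiB : i ∈ BsetC m t' := SC_sub' ht' hS' hiS'
    rw [mem_Bset] at hiB
    have hjS' : j ∉ S' := fun h => hjC (mem_union_right _ h)
    have hjB : j ∈ BsetC m t' := by
      rw [mem_Bset]
      unfold blkC at hble hiB ⊢
      omega
    have htu : t' = blkC m (i : ℕ) := hiB.symm
    have hkey : S' = {i} ∨ S' = (BsetC m t').erase j := by
      unfold SCC at hS'
      by_cases h : t' < qq m
      · rw [if_pos h] at hS'
        have hSB : S' ⊆ BsetC m t' := mem_powerset.1 (mem_of_mem_erase hS')
        have hsubE : S' ⊆ (BsetC m t').erase j := by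
          intro z hz
          exact mem_erase.2 ⟨fun hzj => hjS' (hzj ▸ hz), hSB hz⟩
        have hcE : ((BsetC m t').erase j).card = 2 := by
          rw [card_erase_of_mem hjB, card_Bset_lt hm h]
        have hc1 : 1 ≤ S'.card := card_pos.2 ⟨i, hiS'⟩
        have hc2 : S'.card ≤ 2 := hcE ▸ card_le_card hsubE
        rcases (by omega : S'.card = 1 ∨ S'.card = 2) with hc | hc
        · obtain ⟨c, rfl⟩ := card_eq_one.1 hc
          rw [mem_singleton.1 hiS']
          exact Or.inl rfl
        · exact Or.inr (eq_of_subset_of_card_le hsubE (by omega))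
      · have heq : t' = qq m := by omega
        rw [if_neg h] at hS'
        rcases mem_union.1 hS' with h' | h'
        · rcases mem_union.1 h' with h'' | h''
          · obtain ⟨j0, _, rfl⟩ := mem_image.1 h''
            rw [mem_singleton.1 hiS']
            exact Or.inl rfl
          · obtain ⟨j0, hj0, rfl⟩ := mem_image.1 h''
            have : j = j0 := by
              by_contra hne
              exact hjS' (mem_erase.2 ⟨hne, heq ▸ hjB⟩)
            subst this
            exact Or.inr (by rw [heq])
        · exfalso
          rw [mem_singleton.1 h'] at hjS'
          exact hjS' (heq ▸ hjB)
    simp only [mem_insert, mem_singleton]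
    rw [← htu]
    rcases hkey with rfl | rfl
    · exact Or.inl rfl
    · exact Or.inr rfl
  have hc2 : ({LsetC m (blkC m (i : ℕ)) ∪ {i}, LsetC m (blkC m (i : ℕ)) ∪ (BsetC m (blkC m (i : ℕ))).erase j} :
      Finset (Finset (Fin m))).card ≤ 2 := by
    apply le_trans (card_insert_le _ _)
    rw [card_singleton]
  calc ((CC m).filter (fun Y => i ∈ Y ∧ j ∉ Y)).card ≤ _ := card_le_card hsub2
    _ ≤ 2 := hc2
    _ ≤ 3 - 1 := by norm_num

theorem forb_F0310 (m : ℕ) (hm : 3 ≤ m) : forb m 3 = 7 * m / 3 + 1 := by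
  have hmem : (7 * m / 3 + 1) ∈
      {n | ∃ A : Finset (Finset (Fin m)), AvoidsF010 3 m A ∧ A.card = n} :=
    ⟨CC m, CC_avoids hm, card_CC hm⟩
  have hub : ∀ n ∈ {n | ∃ A : Finset (Finset (Fin m)), AvoidsF010 3 m A ∧ A.card = n},
      n ≤ 7 * m / 3 + 1 := by
    rintro n ⟨A, hA, rfl⟩
    exact finUB A hA
  unfold forb
  exact le_antisymm (csSup_le ⟨_, hmem⟩ hub) (le_csSup ⟨7 * m / 3 + 1, hub⟩ hmem)
end

section
/- (Upper Bound Lemma, part 1) Let k ≥ 1, n ≥ 0 and t ≥ 0 be integers, and let B be a k × n (0,1)-matrix (columns need not be distinct) such that no column of B is all ones, no column of B is all zeros, and for every pair of distinct rows i, j the number of columns c with B(i,c) ≠ B(j,c) is at most t. Then 2n ≤ tk. -/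
open Finset

private lemma fin2_cases : ∀ x : Fin 2, x = 0 ∨ x = 1 := by decide

private lemma fin2_ne_iff : ∀ x y : Fin 2, x ≠ y ↔ ((x = 1 ∧ y = 0) ∨ (x = 0 ∧ y = 1)) := by
  decide

lemma col_pair_bound {k : ℕ} (hk : 2 ≤ k) (f : Fin k → Fin 2)
    (h1 : ¬ (∀ i, f i = 1)) (h0 : ¬ (∀ i, f i = 0)) :
    2 * (k - 1) ≤ ((univ : Finset (Fin k × Fin k)).filter
      (fun p => f p.1 ≠ f p.2)).card := by
  set A := univ.filter (fun i => f i = 1) with hA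
  set C := univ.filter (fun i => f i = 0) with hC
  have hnot : ∀ x : Fin 2, ¬ (x = 1) ↔ x = 0 := by decide
  have hsum : A.card + C.card = k := by
    have h := Finset.card_filter_add_card_filter_not
      (s := (univ : Finset (Fin k))) (p := fun i => f i = 1)
    simpa [hA, hC, hnot, Finset.card_univ] using h
  have hApos : 1 ≤ A.card := by
    push_neg at h0
    obtain ⟨i, hi⟩ := h0
    have hfi : f i = 1 := (fin2_cases (f i)).resolve_left hi
    exact Finset.card_pos.mpr ⟨i, by simp [hA, hfi]⟩
  have hCpos : 1 ≤ C.card := by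
    push_neg at h1
    obtain ⟨i, hi⟩ := h1
    have hfi : f i = 0 := (fin2_cases (f i)).resolve_right hi
    exact Finset.card_pos.mpr ⟨i, by simp [hC, hfi]⟩
  have hset : (univ : Finset (Fin k × Fin k)).filter (fun p => f p.1 ≠ f p.2)
      = (A ×ˢ C) ∪ (C ×ˢ A) := by
    ext p
    simp only [Finset.mem_filter, Finset.mem_union, Finset.mem_product,
      Finset.mem_univ, true_and, hA, hC]
    constructor
    · intro h; rcases (fin2_ne_iff _ _).mp h with ⟨h1,h2⟩|⟨h1,h2⟩ <;> tauto
    · intro h; apply (fin2_ne_iff _ _).mpr; tauto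
  have hdisj : Disjoint (A ×ˢ C) (C ×ˢ A) := by
    rw [Finset.disjoint_left]
    rintro ⟨x, y⟩ hxy hxy'
    simp only [Finset.mem_product, hA, hC, Finset.mem_filter, Finset.mem_univ,
      true_and] at hxy hxy'
    rw [hxy.1] at hxy'
    exact absurd hxy'.1 (by decide)
  rw [hset, Finset.card_union_of_disjoint hdisj, Finset.card_product,
    Finset.card_product]
  obtain ⟨a, ha⟩ : ∃ a, A.card = a + 1 := ⟨A.card - 1, by omega⟩
  obtain ⟨c, hc⟩ : ∃ c, C.card = c + 1 := ⟨C.card - 1, by omega⟩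
  rw [ha, hc] at hsum ⊢
  obtain rfl : k = a + c + 2 := by omega
  have h2 : a + c + 2 - 1 = a + c + 1 := by omega
  rw [h2]
  nlinarith

theorem upper_bound_lemma_part1 (k n t : ℕ) (hk : 1 ≤ k)
    (B : Fin k → Fin n → Fin 2)
    (h_no_ones : ∀ c : Fin n, ¬ (∀ i : Fin k, B i c = 1))
    (h_no_zeros : ∀ c : Fin n, ¬ (∀ i : Fin k, B i c = 0))
    (h_diff : ∀ i j : Fin k, i ≠ j →
      (Finset.univ.filter fun c : Fin n => B i c ≠ B j c).card ≤ t) :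
    2 * n ≤ t * k := by
  rcases Nat.lt_or_ge k 2 with hk2 | hk2
  · -- k = 1 : no column can exist, so n = 0
    obtain rfl : k = 1 := by omega
    have hn : n = 0 := by
      by_contra hn
      have c : Fin n := ⟨0, Nat.pos_of_ne_zero hn⟩
      have h1 := h_no_ones c
      have h0 := h_no_zeros c
      simp only [Fin.forall_fin_one] at h1 h0
      rcases fin2_cases (B 0 c) with h | h
      · exact h0 h
      · exact h1 h
    subst hn
    simp
  · -- main double counting
    set T := ∑ c : Fin n, ((univ : Finset (Fin k × Fin k)).filter
      (fun p => B p.1 c ≠ B p.2 c)).card with hT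
    have hlower : n * (2 * (k - 1)) ≤ T := by
      rw [hT]
      calc n * (2 * (k - 1)) = ∑ _c : Fin n, 2 * (k - 1) := by
            simp [Finset.sum_const, Finset.card_univ, mul_comm]
        _ ≤ _ := Finset.sum_le_sum fun c _ =>
            col_pair_bound hk2 (fun i => B i c) (h_no_ones c) (h_no_zeros c)
    have hswap : T = ∑ p : Fin k × Fin k,
        ((univ : Finset (Fin n)).filter (fun c => B p.1 c ≠ B p.2 c)).card := by
      rw [hT]
      simp only [Finset.card_filter]
      rw [Finset.sum_comm]
    have hupper : T ≤ (k * k - k) * t := by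
      rw [hswap]
      have hzero : ∀ p ∈ (univ : Finset (Fin k × Fin k)),
          p ∉ (univ : Finset (Fin k)).offDiag →
          ((univ : Finset (Fin n)).filter (fun c => B p.1 c ≠ B p.2 c)).card = 0 := by
        rintro ⟨i, j⟩ _ hp
        simp only [Finset.mem_offDiag, Finset.mem_univ, true_and, not_not] at hp
        subst hp
        simp
      rw [← Finset.sum_subset (Finset.subset_univ _) hzero]
      calc ∑ p ∈ (univ : Finset (Fin k)).offDiag,
            ((univ : Finset (Fin n)).filter (fun c => B p.1 c ≠ B p.2 c)).card
          ≤ ∑ _p ∈ (univ : Finset (Fin k)).offDiag, t := by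
            refine Finset.sum_le_sum ?_
            rintro ⟨i, j⟩ hp
            simp only [Finset.mem_offDiag, Finset.mem_univ, true_and] at hp
            exact h_diff i j hp
        _ = (k * k - k) * t := by
            rw [Finset.sum_const, smul_eq_mul, Finset.offDiag_card,
              Finset.card_univ, Fintype.card_fin]
    have hfinal : n * (2 * (k - 1)) ≤ (k * k - k) * t := hlower.trans hupper
    obtain ⟨m, rfl⟩ : ∃ m, k = m + 1 := ⟨k - 1, by omega⟩
    have hkk : (m + 1) * (m + 1) - (m + 1) = (m + 1) * m := by
      rw [mul_add, mul_one]
      omega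
    rw [hkk] at hfinal
    simp only [Nat.add_sub_cancel] at hfinal
    have hm : 1 ≤ m := by omega
    have h' : (2 * n) * m ≤ (t * (m + 1)) * m := by nlinarith [hfinal]
    exact Nat.le_of_mul_le_mul_right h' (by omega)
end

section
/- (Upper Bound Lemma, part 2) Let k ≥ 3, n ≥ 0 and t ≥ 4 be integers, and let B be a k × n (0,1)-matrix with pairwise distinct columns such that no column of B is all ones, no column of B is all zeros, and for every pair of distinct rows i, j the number of columns c with B(i,c) ≠ B(j,c) is at most t. Then n ≤ 2k + (t − 4)·k·(k − 1) / (4·(k − 2)); in particular, since n is an integer, n ≤ ⌊2k + (t − 4)k(k − 1)/(4(k − 2))⌋. -/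
open Finset

lemma f2_not_one : ∀ a : Fin 2, (¬ a = 1) ↔ a = 0 := by decide
lemma f2_not_zero : ∀ a : Fin 2, (¬ a = 0) ↔ a = 1 := by decide
lemma f2_one_ne : ∀ b : Fin 2, (¬ (1:Fin 2) = b) ↔ b = 0 := by decide
lemma f2_zero_ne : ∀ b : Fin 2, (¬ (0:Fin 2) = b) ↔ b = 1 := by decide
lemma f2_cases : ∀ a : Fin 2, a = 0 ∨ a = 1 := by decide
lemma f2_ext_one : ∀ a b : Fin 2, ((a = 1) ↔ (b = 1)) → a = b := by decide
lemma f2_ext_zero : ∀ a b : Fin 2, ((a = 0) ↔ (b = 0)) → a = b := by decide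

theorem upper_bound_lemma_part2 (k n t : ℕ) (hk : 3 ≤ k) (ht : 4 ≤ t)
    (B : Fin k → Fin n → Fin 2)
    (h_simple : ∀ c d : Fin n, (∀ i : Fin k, B i c = B i d) → c = d)
    (h_no_ones : ∀ c : Fin n, ¬ (∀ i : Fin k, B i c = 1))
    (h_no_zeros : ∀ c : Fin n, ¬ (∀ i : Fin k, B i c = 0))
    (h_diff : ∀ i j : Fin k, i ≠ j →
      (Finset.univ.filter fun c : Fin n => B i c ≠ B j c).card ≤ t) :
    (n : ℚ) ≤ 2 * k + ((t : ℚ) - 4) * k * (k - 1) / (4 * (k - 2)) := by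
  classical
  set w : Fin n → ℕ := fun c => (univ.filter fun i => B i c = 1).card with hw
  set z : Fin n → ℕ := fun c => (univ.filter fun i => B i c = 0).card with hz
  have hfneg : ∀ c, (univ.filter fun i => ¬ B i c = 1) = (univ.filter fun i => B i c = 0) := by
    intro c
    apply Finset.filter_congr
    intro i _
    simp [f2_not_one]
  have hwz : ∀ c, w c + z c = k := by
    intro c
    have h := Finset.card_filter_add_card_filter_not
      (s := (univ : Finset (Fin k))) (p := fun i => B i c = 1)
    rw [hfneg c] at h
    simpa using h
  have hex1 : ∀ c : Fin n, ∃ i, B i c = 1 := by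
    intro c
    by_contra h
    push_neg at h
    exact h_no_zeros c (fun i => (f2_not_one _).mp (h i))
  have hex0 : ∀ c : Fin n, ∃ i, B i c = 0 := by
    intro c
    by_contra h
    push_neg at h
    exact h_no_ones c (fun i => (f2_not_zero _).mp (h i))
  have hw1 : ∀ c, 1 ≤ w c := by
    intro c
    obtain ⟨i, hi⟩ := hex1 c
    have : i ∈ univ.filter fun i => B i c = 1 := by simp [hi]
    exact Finset.card_pos.mpr ⟨i, this⟩
  have hz1 : ∀ c, 1 ≤ z c := by
    intro c
    obtain ⟨i, hi⟩ := hex0 c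
    have : i ∈ univ.filter fun i => B i c = 0 := by simp [hi]
    exact Finset.card_pos.mpr ⟨i, this⟩
  -- per-column pair count
  have hcount : ∀ c : Fin n,
      (∑ i : Fin k, ∑ j : Fin k, if B i c ≠ B j c then 1 else 0) = 2 * (w c * z c) := by
    intro c
    have h1 : ∀ i : Fin k, (∑ j : Fin k, if B i c ≠ B j c then (1:ℕ) else 0)
        = if B i c = 1 then z c else w c := by
      intro i
      rcases f2_cases (B i c) with h | h
      · rw [if_neg (by rw [h]; decide)]
        rw [← Finset.card_filter]
        show _ = (univ.filter fun j => B j c = 1).card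
        congr 1
        apply Finset.filter_congr
        intro j _
        rw [h]
        simp only [Ne, f2_zero_ne]
      · rw [if_pos h]
        rw [← Finset.card_filter]
        show _ = (univ.filter fun j => B j c = 0).card
        congr 1
        apply Finset.filter_congr
        intro j _
        rw [h]
        simp only [Ne, f2_one_ne]
    calc (∑ i : Fin k, ∑ j : Fin k, if B i c ≠ B j c then (1:ℕ) else 0)
        = ∑ i : Fin k, if B i c = 1 then z c else w c :=
          Finset.sum_congr rfl fun i _ => h1 i
      _ = (univ.filter fun i => B i c = 1).card * z c
          + (univ.filter fun i => ¬ B i c = 1).card * w c := by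
          rw [Finset.sum_ite, Finset.sum_const, Finset.sum_const, smul_eq_mul, smul_eq_mul]
      _ = 2 * (w c * z c) := by
          rw [hfneg c]
          show w c * z c + z c * w c = 2 * (w c * z c)
          ring
  -- double counting
  have hT : ∑ c : Fin n, 2 * (w c * z c) ≤ k * (k - 1) * t := by
    have e1 : (∑ i : Fin k, ∑ j : Fin k, (univ.filter fun cc : Fin n => B i cc ≠ B j cc).card)
        = ∑ c : Fin n, 2 * (w c * z c) := by
      calc (∑ i : Fin k, ∑ j : Fin k, (univ.filter fun cc : Fin n => B i cc ≠ B j cc).card)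
          = ∑ i : Fin k, ∑ j : Fin k, ∑ c : Fin n, if B i c ≠ B j c then 1 else 0 :=
            Finset.sum_congr rfl fun i _ => Finset.sum_congr rfl fun j _ => Finset.card_filter _ _
        _ = ∑ i : Fin k, ∑ c : Fin n, ∑ j : Fin k, if B i c ≠ B j c then 1 else 0 :=
            Finset.sum_congr rfl fun i _ => Finset.sum_comm
        _ = ∑ c : Fin n, ∑ i : Fin k, ∑ j : Fin k, if B i c ≠ B j c then 1 else 0 :=
            Finset.sum_comm
        _ = ∑ c : Fin n, 2 * (w c * z c) := Finset.sum_congr rfl fun c _ => hcount c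
    rw [← e1]
    have hstep : ∀ i : Fin k,
        (∑ j : Fin k, (univ.filter fun cc : Fin n => B i cc ≠ B j cc).card) ≤ (k - 1) * t := by
      intro i
      calc (∑ j : Fin k, (univ.filter fun cc : Fin n => B i cc ≠ B j cc).card)
          ≤ ∑ j : Fin k, if i = j then 0 else t := by
            apply Finset.sum_le_sum
            intro j _
            by_cases hij : i = j
            · subst hij
              simp
            · rw [if_neg hij]
              exact h_diff i j hij
        _ = (k - 1) * t := by
            rw [Finset.sum_ite, Finset.sum_const, Finset.sum_const, smul_eq_mul, smul_eq_mul]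
            have h1 : (univ.filter fun j => i = j) = {i} := by
              ext j; simp [eq_comm]
            have h2 : (univ.filter fun j : Fin k => ¬ i = j) = univ.erase i := by
              ext j; simp [eq_comm, Ne]
            rw [h1, h2, Finset.card_erase_of_mem (mem_univ i)]
            simp
    calc (∑ i : Fin k, ∑ j : Fin k, (univ.filter fun cc : Fin n => B i cc ≠ B j cc).card)
        ≤ ∑ _i : Fin k, (k - 1) * t := Finset.sum_le_sum fun i _ => hstep i
      _ = k * (k - 1) * t := by
          rw [Finset.sum_const, smul_eq_mul]
          simp [mul_assoc]
  -- split columns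
  set S1 : Finset (Fin n) := univ.filter (fun c => w c = 1 ∨ z c = 1) with hS1def
  set S2 : Finset (Fin n) := univ.filter (fun c => ¬ (w c = 1 ∨ z c = 1)) with hS2def
  have hpart : S1.card + S2.card = n := by
    rw [hS1def, hS2def]
    have := Finset.card_filter_add_card_filter_not
      (s := (univ : Finset (Fin n))) (p := fun c => w c = 1 ∨ z c = 1)
    simpa using this
  -- S1 card bound
  choose p1 hp1 using hex1
  choose p0 hp0 using hex0
  have hu1 : ∀ e : Fin n, w e = 1 → ∀ i, B i e = 1 → i = p1 e := by
    intro e he i hie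
    have hcard : (univ.filter fun i => B i e = 1).card ≤ 1 := le_of_eq he
    exact Finset.card_le_one.mp hcard i (by simp [hie]) (p1 e) (by simp [hp1 e])
  have hu0 : ∀ e : Fin n, z e = 1 → ∀ i, B i e = 0 → i = p0 e := by
    intro e he i hie
    have hcard : (univ.filter fun i => B i e = 0).card ≤ 1 := le_of_eq he
    exact Finset.card_le_one.mp hcard i (by simp [hie]) (p0 e) (by simp [hp0 e])
  have hA : (univ.filter fun c => w c = 1).card ≤ k := by
    have h := Finset.card_le_card_of_injOn (s := univ.filter fun c => w c = 1)
      (t := (univ : Finset (Fin k))) p1 (fun c _ => mem_univ (p1 c)) ?_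
    · simpa using h
    · intro c hc d hd hcd
      simp only [mem_coe, mem_filter, mem_univ, true_and] at hc hd
      apply h_simple
      intro i
      apply f2_ext_one
      constructor
      · intro h
        rw [hu1 c hc i h, hcd]
        exact hp1 d
      · intro h
        rw [hu1 d hd i h, ← hcd]
        exact hp1 c
  have hB : (univ.filter fun c => z c = 1).card ≤ k := by
    have h := Finset.card_le_card_of_injOn (s := univ.filter fun c => z c = 1)
      (t := (univ : Finset (Fin k))) p0 (fun c _ => mem_univ (p0 c)) ?_
    · simpa using h
    · intro c hc d hd hcd
      simp only [mem_coe, mem_filter, mem_univ, true_and] at hc hd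
      apply h_simple
      intro i
      apply f2_ext_zero
      constructor
      · intro h
        rw [hu0 c hc i h, hcd]
        exact hp0 d
      · intro h
        rw [hu0 d hd i h, ← hcd]
        exact hp0 c
  have hS1card : S1.card ≤ 2 * k := by
    rw [hS1def, Finset.filter_or]
    calc ((univ.filter fun c => w c = 1) ∪ (univ.filter fun c => z c = 1)).card
        ≤ (univ.filter fun c => w c = 1).card + (univ.filter fun c => z c = 1).card :=
          Finset.card_union_le _ _
      _ ≤ 2 * k := by omega
  -- lower bounds
  have hlow1 : ∀ c ∈ S1, 2 * (k - 1) ≤ 2 * (w c * z c) := by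
    intro c hc
    rw [hS1def, mem_filter] at hc
    have hwzc := hwz c
    rcases hc.2 with h | h
    · rw [h, one_mul]
      omega
    · rw [h, mul_one]
      omega
  have hlow2 : ∀ c ∈ S2, 2 * (2 * (k - 2)) ≤ 2 * (w c * z c) := by
    intro c hc
    rw [hS2def, mem_filter] at hc
    push_neg at hc
    have h2w : 2 ≤ w c := by have := hw1 c; omega
    have h2z : 2 ≤ z c := by have := hz1 c; omega
    have hwzc := hwz c
    obtain ⟨a, ha⟩ : ∃ a, w c = 2 + a := ⟨w c - 2, by omega⟩
    obtain ⟨b, hb⟩ : ∃ b, z c = 2 + b := ⟨z c - 2, by omega⟩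
    have hk2 : k - 2 = 2 + a + b := by omega
    rw [ha, hb, hk2]
    nlinarith [Nat.zero_le (a * b)]
  have hsum1 : S1.card * (2 * (k - 1)) ≤ ∑ c ∈ S1, 2 * (w c * z c) := by
    have := Finset.card_nsmul_le_sum S1 (fun c => 2 * (w c * z c)) (2 * (k - 1)) hlow1
    simpa [smul_eq_mul] using this
  have hsum2 : S2.card * (2 * (2 * (k - 2))) ≤ ∑ c ∈ S2, 2 * (w c * z c) := by
    have := Finset.card_nsmul_le_sum S2 (fun c => 2 * (w c * z c)) (2 * (2 * (k - 2))) hlow2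
    simpa [smul_eq_mul] using this
  have htotal : (∑ c ∈ S1, 2 * (w c * z c)) + (∑ c ∈ S2, 2 * (w c * z c))
      = ∑ c : Fin n, 2 * (w c * z c) := by
    rw [hS1def, hS2def]
    exact Finset.sum_filter_add_sum_filter_not univ _ _
  have hmain : S1.card * (2 * (k - 1)) + S2.card * (2 * (2 * (k - 2))) ≤ k * (k - 1) * t := by
    calc S1.card * (2 * (k - 1)) + S2.card * (2 * (2 * (k - 2)))
        ≤ (∑ c ∈ S1, 2 * (w c * z c)) + (∑ c ∈ S2, 2 * (w c * z c)) :=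
          Nat.add_le_add hsum1 hsum2
      _ = ∑ c : Fin n, 2 * (w c * z c) := htotal
      _ ≤ k * (k - 1) * t := hT
  -- final rational arithmetic
  have hk1 : (1:ℕ) ≤ k := by omega
  have hk2 : (2:ℕ) ≤ k := by omega
  have hkq : (3:ℚ) ≤ (k:ℚ) := by exact_mod_cast hk
  have htq : (4:ℚ) ≤ (t:ℚ) := by exact_mod_cast ht
  have haq : (S1.card : ℚ) ≤ 2 * k := by exact_mod_cast hS1card
  have hnq : (n:ℚ) = (S1.card : ℚ) + (S2.card : ℚ) := by exact_mod_cast hpart.symm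
  have hmq : (S1.card : ℚ) * (2 * ((k:ℚ) - 1)) + (S2.card : ℚ) * (2 * (2 * ((k:ℚ) - 2)))
      ≤ (k:ℚ) * ((k:ℚ) - 1) * (t:ℚ) := by
    have := hmain
    have hc := Nat.cast_le (α := ℚ) |>.mpr this
    push_cast [Nat.cast_sub hk1, Nat.cast_sub hk2] at hc
    convert hc using 2 <;> push_cast [Nat.cast_sub hk1, Nat.cast_sub hk2] <;> ring
  have hD : (0:ℚ) < 4 * ((k:ℚ) - 2) := by linarith
  rw [← sub_le_iff_le_add', le_div_iff₀ hD]
  nlinarith [mul_le_mul_of_nonneg_left haq (show (0:ℚ) ≤ 2 * (k:ℚ) - 6 by linarith)]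
end

section
/- (Construction Lemma) Let p ≥ 1 and t ≥ 1 be integers, let R_1, …, R_t be pairwise disjoint nonempty finite sets with union M, and for each i with 1 ≤ i ≤ t let B_i be a family of subsets of R_i that avoids F(0,p,1,0) (as a family on ground set R_i) and satisfies R_i ∉ B_i. Define 𝒜 = {M} ∪ ⋃_{i=1}^{t} { (R_1 ∪ ⋯ ∪ R_{i−1}) ∪ S : S ∈ B_i }. Then 𝒜 is a family of subsets of M that avoids F(0,p,1,0), and its members are pairwise distinct, so |𝒜| = 1 + Σ_{i=1}^{t} |B_i|. -/
open Finset

/-- A family `A` of distinct subsets of the ground set `R` avoids the configuration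
`F(0,p,1,0)`: every member is a subset of `R`, and for every ordered pair of distinct
`i, j ∈ R`, if some member contains `j` but not `i`, then at most `p - 1` members
contain `i` but not `j`. -/
def AvoidsOn {α : Type*} [DecidableEq α] (p : ℕ) (R : Finset α)
    (A : Finset (Finset α)) : Prop :=
  (∀ X ∈ A, X ⊆ R) ∧
  ∀ i ∈ R, ∀ j ∈ R, i ≠ j →
    (∃ X ∈ A, j ∈ X ∧ i ∉ X) →
    (A.filter fun Y => i ∈ Y ∧ j ∉ Y).card ≤ p - 1

theorem construction_lemma {α : Type*} [DecidableEq α] (p t : ℕ) (hp : 1 ≤ p) (ht : 1 ≤ t)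
    (R : Fin t → Finset α) (hne : ∀ i, (R i).Nonempty)
    (hdisj : ∀ i j, i ≠ j → Disjoint (R i) (R j))
    (B : Fin t → Finset (Finset α))
    (hB : ∀ i, AvoidsOn p (R i) (B i))
    (hnotfull : ∀ i, R i ∉ B i) :
    AvoidsOn p (Finset.univ.biUnion R)
      (insert (Finset.univ.biUnion R)
        (Finset.univ.biUnion fun i =>
          (B i).image fun S => ((Finset.univ.filter fun a => a < i).biUnion R) ∪ S)) ∧
    (insert (Finset.univ.biUnion R)
        (Finset.univ.biUnion fun i =>
          (B i).image fun S => ((Finset.univ.filter fun a => a < i).biUnion R) ∪ S)).card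
      = 1 + ∑ i, (B i).card := by
  set M : Finset α := Finset.univ.biUnion R with hM
  set P : Fin t → Finset α := fun i => ((Finset.univ.filter fun a => a < i).biUnion R)
    with hP
  set A : Finset (Finset α) :=
    insert M (Finset.univ.biUnion fun i => (B i).image fun S => P i ∪ S) with hA
  -- basic facts
  have hsub : ∀ a, ∀ S ∈ B a, S ⊆ R a := fun a => (hB a).1
  have huniq : ∀ {x : α} {u v : Fin t}, x ∈ R u → x ∈ R v → u = v := by
    intro x u v hu hv
    by_contra h
    exact (Finset.disjoint_left.1 (hdisj u v h) hu) hv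
  have hmemP : ∀ {x : α} {u : Fin t}, x ∈ R u → ∀ a, (x ∈ P a ↔ u < a) := by
    intro x u hu a
    simp only [hP, mem_biUnion, mem_filter, mem_univ, true_and]
    constructor
    · rintro ⟨b, hb, hxb⟩
      rwa [huniq hu hxb]
    · exact fun h => ⟨u, h, hu⟩
  have hPRdisj : ∀ a, Disjoint (P a) (R a) := by
    intro a
    rw [Finset.disjoint_left]
    intro x hx hxa
    exact absurd ((hmemP hxa a).1 hx) (lt_irrefl a)
  have hcap : ∀ a S, S ∈ B a → (P a ∪ S) ∩ R a = S := by
    intro a S hS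
    ext x
    simp only [mem_inter, mem_union]
    constructor
    · rintro ⟨hx1 | hx2, hxa⟩
      · exact absurd hxa (Finset.disjoint_left.1 (hPRdisj a) hx1)
      · exact hx2
    · intro hx
      exact ⟨Or.inr hx, hsub a S hS hx⟩
  have hMcap : ∀ a, M ∩ R a = R a := by
    intro a
    rw [Finset.inter_eq_right]
    intro x hx
    exact mem_biUnion.2 ⟨a, mem_univ a, hx⟩
  have hMne : ∀ a S, S ∈ B a → P a ∪ S ≠ M := by
    intro a S hS h
    apply hnotfull a
    have := hcap a S hS
    rw [h, hMcap] at this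
    rw [this]
    exact hS
  have hRsubP : ∀ {a b : Fin t}, a < b → R a ⊆ P b := by
    intro a b hab x hx
    exact (hmemP hx b).2 hab
  -- membership characterization in A
  have hmemA : ∀ {Y : Finset α}, Y ∈ A ↔ Y = M ∨ ∃ a, ∃ S ∈ B a, Y = P a ∪ S := by
    intro Y
    simp only [hA, mem_insert, mem_biUnion, mem_image, mem_univ, true_and]
    constructor
    · rintro (h | ⟨a, S, hS, h⟩)
      · exact Or.inl h
      · exact Or.inr ⟨a, S, hS, h.symm⟩
    · rintro (h | ⟨a, S, hS, h⟩)
      · exact Or.inl h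
      · exact Or.inr ⟨a, S, hS, h.symm⟩
  constructor
  · constructor
    · intro X hX
      rcases hmemA.1 hX with h | ⟨a, S, hS, h⟩
      · exact h ▸ Finset.Subset.refl M
      · subst h
        apply Finset.union_subset
        · intro x hx
          simp only [hP, mem_biUnion, mem_filter, mem_univ, true_and] at hx
          obtain ⟨b, _, hxb⟩ := hx
          exact mem_biUnion.2 ⟨b, mem_univ b, hxb⟩
        · intro x hx
          exact mem_biUnion.2 ⟨a, mem_univ a, hsub a S hS hx⟩
    · intro i hi j hj hij hex
      obtain ⟨u, _, hu⟩ := mem_biUnion.1 hi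
      obtain ⟨v, _, hv⟩ := mem_biUnion.1 hj
      -- from existence: v ≤ u, and if v = u get witness in B u
      obtain ⟨X, hX, hjX, hiX⟩ := hex
      rcases hmemA.1 hX with rfl | ⟨b, T, hT, rfl⟩
      · exact absurd hi hiX
      have hbu : b ≤ u := by
        by_contra h
        push_neg at h
        exact hiX (Finset.mem_union_left _ ((hmemP hu b).2 h))
      have hvb : v ≤ b := by
        rcases Finset.mem_union.1 hjX with h | h
        · exact le_of_lt ((hmemP hv b).1 h)
        · exact le_of_eq (huniq hv (hsub b T hT h))
      have hvu : v ≤ u := le_trans hvb hbu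
      rcases lt_or_eq_of_le hvu with hlt | heq
      · -- v < u : filter is empty
        have : (A.filter fun Y => i ∈ Y ∧ j ∉ Y) = ∅ := by
          rw [Finset.filter_eq_empty_iff]
          rintro Y hY ⟨hiY, hjY⟩
          rcases hmemA.1 hY with rfl | ⟨a, S, hS, rfl⟩
          · exact hjY hj
          · have hua : u ≤ a := by
              rcases Finset.mem_union.1 hiY with h | h
              · exact le_of_lt ((hmemP hu a).1 h)
              · exact le_of_eq (huniq hu (hsub a S hS h))
            have hav : ¬ v < a := fun h => hjY (Finset.mem_union_left _ ((hmemP hv a).2 h))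
            exact hav (lt_of_lt_of_le hlt hua)
        rw [this]
        simp
      · -- v = u : reduce to B u
        subst heq
        -- b = v since v ≤ b ≤ u = v
        have hbv : b = v := le_antisymm hbu hvb
        subst hbv
        have hjT : j ∈ T := by
          rcases Finset.mem_union.1 hjX with h | h
          · exact absurd ((hmemP hv b).1 h) (lt_irrefl _)
          · exact h
        have hiT : i ∉ T := fun h => hiX (Finset.mem_union_right _ h)
        have hkey := (hB b).2 i hu j hv hij ⟨T, hT, hjT, hiT⟩
        refine le_trans ?_ hkey
        apply Finset.card_le_card_of_injOn (fun Y => Y ∩ R b)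
        · rintro Y hY
          simp only [Finset.mem_coe] at hY ⊢
          rw [Finset.mem_filter] at hY ⊢
          obtain ⟨hYA, hiY, hjY⟩ := hY
          rcases hmemA.1 hYA with rfl | ⟨a, S, hS, rfl⟩
          · exact absurd hj hjY
          · have hua : b ≤ a := by
              rcases Finset.mem_union.1 hiY with h | h
              · exact le_of_lt ((hmemP hu a).1 h)
              · exact le_of_eq (huniq hu (hsub a S hS h))
            have hav : a ≤ b := by
              by_contra h
              push_neg at h
              exact hjY (Finset.mem_union_left _ ((hmemP hv a).2 h))
            have hab : a = b := le_antisymm hav hua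
            subst hab
            rw [hcap a S hS]
            have hiS : i ∈ S := by
              rcases Finset.mem_union.1 hiY with h | h
              · exact absurd ((hmemP hu a).1 h) (lt_irrefl _)
              · exact h
            have hjS : j ∉ S := fun h => hjY (Finset.mem_union_right _ h)
            exact ⟨hS, hiS, hjS⟩
        · rintro Y hY Z hZ hYZ
          simp only [Finset.coe_filter, Set.mem_setOf_eq] at hY hZ
          obtain ⟨hYA, hiY, hjY⟩ := hY
          obtain ⟨hZA, hiZ, hjZ⟩ := hZ
          rcases hmemA.1 hYA with rfl | ⟨a, S, hS, rfl⟩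
          · exact absurd hj hjY
          rcases hmemA.1 hZA with rfl | ⟨c, W, hW, rfl⟩
          · exact absurd hj hjZ
          -- as above, a = b, c = b
          have hab : a = b := by
            refine le_antisymm ?_ ?_
            · by_contra h
              push_neg at h
              exact hjY (Finset.mem_union_left _ ((hmemP hv a).2 h))
            · rcases Finset.mem_union.1 hiY with h | h
              · exact le_of_lt ((hmemP hu a).1 h)
              · exact le_of_eq (huniq hu (hsub a S hS h))
          have hcb : c = b := by
            refine le_antisymm ?_ ?_
            · by_contra h
              push_neg at h
              exact hjZ (Finset.mem_union_left _ ((hmemP hv c).2 h))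
            · rcases Finset.mem_union.1 hiZ with h | h
              · exact le_of_lt ((hmemP hu c).1 h)
              · exact le_of_eq (huniq hu (hsub c W hW h))
          have e1 : (P a ∪ S) ∩ R b = S := by rw [← hab]; exact hcap a S hS
          have e2 : (P c ∪ W) ∩ R b = W := by rw [← hcb]; exact hcap c W hW
          simp only at hYZ
          have hSW : S = W := by rw [← e1, ← e2, hYZ]
          rw [hab, hcb, hSW]
  · -- cardinality
    have hMnot : M ∉ (Finset.univ.biUnion fun i => (B i).image fun S => P i ∪ S) := by
      intro h
      obtain ⟨a, -, h2⟩ := mem_biUnion.1 h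
      obtain ⟨S, hS, h3⟩ := Finset.mem_image.1 h2
      exact hMne a S hS h3
    rw [hA, Finset.card_insert_of_notMem hMnot, Finset.card_biUnion, add_comm]
    · congr 1
      apply Finset.sum_congr rfl
      intro a _
      apply Finset.card_image_of_injOn
      intro S hS W hW h
      have := congrArg (· ∩ R a) h
      simp only at this
      rwa [hcap a S hS, hcap a W hW] at this
    · intro a _ c _ hac
      rw [Function.onFun, Finset.disjoint_left]
      rintro X hX hX2
      simp only [mem_image] at hX hX2
      obtain ⟨S, hS, rfl⟩ := hX
      obtain ⟨W, hW, hXW⟩ := hX2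
      rcases lt_or_gt_of_ne hac with h | h
      · -- a < c : intersect with R a
        have h1 : (P a ∪ S) ∩ R a = S := hcap a S hS
        have h2 : (P c ∪ W) ∩ R a = R a := by
          rw [Finset.inter_eq_right]
          exact (hRsubP h).trans (Finset.subset_union_left)
        rw [hXW] at h2
        have : S = R a := h1.symm.trans h2
        exact hnotfull a (this ▸ hS)
      · have h1 : (P c ∪ W) ∩ R c = W := hcap c W hW
        have h2 : (P a ∪ S) ∩ R c = R c := by
          rw [Finset.inter_eq_right]
          exact (hRsubP h).trans (Finset.subset_union_left)
        rw [← hXW] at h2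
        have : W = R c := h1.symm.trans h2
        exact hnotfull c (this ▸ hW)
end

section
/- Let p ∈ {3,4,5,6,7,8,9} and set c_3 = 7/3, c_4 = 11/4, c_5 = 15/4, c_6 = 21/5, c_7 = 24/5, c_8 = 27/5, c_9 = 31/5. Let m ≥ 1 and let 𝒜 be a family of subsets of {1,…,m} that avoids F(0,p,1,0), and suppose that every connected component of the graph G(𝒜) is a clique (i.e., any two vertices in the same connected component are adjacent). Then |𝒜| ≤ c_p·m + 1. -/
open Finset

/-- The graph `G(A)` on the rows: distinct `i, j` are joined by an undirected edge iff
both counts `#{X ∈ A : i ∈ X, j ∉ X}` and `#{X ∈ A : j ∈ X, i ∉ X}` lie in `[1, p-1]`. -/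
def configGraph (p m : ℕ) (A : Finset (Finset (Fin m))) : SimpleGraph (Fin m) where
  Adj i j := i ≠ j ∧
    (1 ≤ (A.filter fun X => i ∈ X ∧ j ∉ X).card ∧
      (A.filter fun X => i ∈ X ∧ j ∉ X).card ≤ p - 1) ∧
    (1 ≤ (A.filter fun X => j ∈ X ∧ i ∉ X).card ∧
      (A.filter fun X => j ∈ X ∧ i ∉ X).card ≤ p - 1)
  symm := by
    refine ⟨?_⟩
    rintro i j ⟨h1, h2, h3⟩
    exact ⟨h1.symm, h3, h2⟩
  loopless := by
    refine ⟨?_⟩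
    rintro i ⟨h1, -⟩
    exact h1 rfl

/-- The constants `c_p` for `3 ≤ p ≤ 9`. -/
def cp (p : ℕ) : ℚ :=
  if p = 3 then 7/3 else if p = 4 then 11/4 else if p = 5 then 15/4
  else if p = 6 then 21/5 else if p = 7 then 24/5 else if p = 8 then 27/5 else 31/5

section DC
variable {m : ℕ}

lemma aux_count_notmem {C S : Finset (Fin m)} (hS : S ⊆ C) {v : Fin m} (hv : v ∈ S) :
    ((C.erase v).filter fun y => y ∉ S).card = C.card - S.card := by
  have h1 : ((C.erase v).filter fun y => y ∉ S) = C \ S := by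
    ext y
    simp only [mem_filter, mem_erase, mem_sdiff]
    constructor
    · rintro ⟨⟨_, hy2⟩, hy3⟩; exact ⟨hy2, hy3⟩
    · rintro ⟨hy1, hy2⟩
      exact ⟨⟨fun h => hy2 (h ▸ hv), hy1⟩, hy2⟩
  rw [h1, card_sdiff_of_subset hS]

lemma aux_count_mem {C S : Finset (Fin m)} (hS : S ⊆ C) {v : Fin m} (hv : v ∉ S) :
    ((C.erase v).filter fun y => y ∈ S).card = S.card := by
  have h1 : ((C.erase v).filter fun y => y ∈ S) = S := by
    ext y
    simp only [mem_filter, mem_erase]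
    constructor
    · rintro ⟨_, hy⟩; exact hy
    · intro hy
      exact ⟨⟨fun h => hv (h ▸ hy), hS hy⟩, hy⟩
  rw [h1]

lemma dc1 (C : Finset (Fin m)) (M : Finset (Finset (Fin m))) (hsub : ∀ S ∈ M, S ⊆ C)
    (v : Fin m) :
    ∑ y ∈ C.erase v, (M.filter fun S => v ∈ S ∧ y ∉ S).card
      = ∑ S ∈ M, if v ∈ S then C.card - S.card else 0 := by
  classical
  simp only [card_filter]
  rw [Finset.sum_comm]
  apply Finset.sum_congr rfl
  intro S hS
  by_cases hvS : v ∈ S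
  · simp only [hvS, true_and, if_true]
    rw [← card_filter]
    exact aux_count_notmem (hsub S hS) hvS
  · simp [hvS]

lemma dc2 (C : Finset (Fin m)) (M : Finset (Finset (Fin m))) (hsub : ∀ S ∈ M, S ⊆ C)
    (v : Fin m) :
    ∑ x ∈ C.erase v, (M.filter fun S => x ∈ S ∧ v ∉ S).card
      = ∑ S ∈ M, if v ∉ S then S.card else 0 := by
  classical
  simp only [card_filter]
  rw [Finset.sum_comm]
  apply Finset.sum_congr rfl
  intro S hS
  by_cases hvS : v ∈ S
  · simp [hvS]
  · simp only [hvS, not_false_iff, and_true, if_true]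
    rw [← card_filter]
    exact aux_count_mem (hsub S hS) hvS

lemma dctotal (C : Finset (Fin m)) (M : Finset (Finset (Fin m))) (hsub : ∀ S ∈ M, S ⊆ C) :
    ∑ x ∈ C, ∑ y ∈ C.erase x, (M.filter fun S => x ∈ S ∧ y ∉ S).card
      = ∑ S ∈ M, S.card * (C.card - S.card) := by
  classical
  have h1 : ∀ x, ∑ y ∈ C.erase x, (M.filter fun S => x ∈ S ∧ y ∉ S).card
      = ∑ S ∈ M, if x ∈ S then C.card - S.card else 0 := fun x => dc1 C M hsub x
  rw [Finset.sum_congr rfl (fun x _ => h1 x), Finset.sum_comm]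
  apply Finset.sum_congr rfl
  intro S hS
  rw [Finset.sum_ite_mem, Finset.sum_const, inter_eq_right.mpr (hsub S hS), smul_eq_mul]

end DC

section CoreArith

lemma q_helper {s t n d : ℕ} (hd : 0 < d) (h : d * s ≤ n * t) : (s:ℚ) ≤ (n:ℚ)/(d:ℚ) * t := by
  rw [div_mul_eq_mul_div, le_div_iff₀ (by exact_mod_cast hd)]
  have : ((d * s : ℕ) : ℚ) ≤ ((n * t : ℕ) : ℚ) := by exact_mod_cast h
  push_cast at this
  linarith

lemma qb {s t : ℕ} (n d : ℕ) (hd : 0 < d) (h : d * s ≤ n * t) (c : ℚ)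
    (hc : (n:ℚ)/(d:ℚ) ≤ c) : (s:ℚ) ≤ c * t :=
  le_trans (q_helper hd h) (mul_le_mul_of_nonneg_right hc (by positivity))

lemma wMlower {c t : ℕ} (h2 : 2 ≤ c) (hct : c + 2 ≤ t) : 2 * (t-2) ≤ c * (t - c) := by
  zify [show 2 ≤ t by omega, show c ≤ t by omega]
  nlinarith [mul_nonneg (by push_cast; omega : (0:ℤ) ≤ (c:ℤ) - 2)
    (by push_cast; omega : (0:ℤ) ≤ (t:ℤ) - (c:ℤ) - 2)]

lemma arith (p t e mm s : ℕ) (hp3 : 3 ≤ p) (hp9 : p ≤ 9) (ht4 : 4 ≤ t)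
    (hcount : (t-1) * e + (2*(t-2)) * mm ≤ (p-1) * (t * (t-1)))
    (he : e ≤ 2*t) (hsem : s ≤ 1 + e + mm)
    (hspec4 : p = 4 → t = 4 → s ≤ 11) (hspec5 : p = 4 → t = 5 → s ≤ 13)
    (hsmall : t = 4 → s ≤ 15) :
    (s:ℚ) ≤ cp p * t := by
  have ht1 : 1 ≤ t := by omega
  have ht2 : 2 ≤ t := by omega
  zify [ht1, ht2, show 1 ≤ p by omega] at hcount
  have heZ : (e:ℤ) ≤ 2*t := by omega
  have hsemZ : (s:ℤ) ≤ 1 + e + mm := by omega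
  interval_cases p
  · -- p = 3
    norm_num at hcount
    refine qb 7 3 (by norm_num) ?_ _ (by norm_num [cp])
    by_contra hcon
    push_neg at hcon
    have htm : (4:ℤ) ≤ (t:ℤ) := by omega
    have hconZ : (7:ℤ)*(t:ℤ) + 1 ≤ 3*(s:ℤ) := by omega
    have h1 : 2*((t:ℤ)-2)*(s:ℤ) ≤ 2*((t:ℤ)-2)*(1+(e:ℤ)+(mm:ℤ)) :=
      mul_le_mul_of_nonneg_left hsemZ (by linarith)
    have h3 : ((t:ℤ)-3)*(e:ℤ) ≤ ((t:ℤ)-3)*(2*(t:ℤ)) :=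
      mul_le_mul_of_nonneg_left heZ (by linarith)
    have h4 : ((7:ℤ)*(t:ℤ)+1)*((t:ℤ)-2) ≤ (3*(s:ℤ))*((t:ℤ)-2) :=
      mul_le_mul_of_nonneg_right hconZ (by linarith)
    have h5 : (0:ℤ) ≤ ((t:ℤ)-3)*((t:ℤ)-4) := mul_nonneg (by linarith) (by linarith)
    linarith [h1, h3, h4, h5, hcount]
  · -- p = 4
    norm_num at hcount
    refine qb 11 4 (by norm_num) ?_ _ (by norm_num [cp])
    rcases lt_or_ge t 7 with h7 | h7
    · interval_cases t
      · have := hspec4 rfl rfl; omega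
      · have := hspec5 rfl rfl; omega
      · -- t = 6
        have hc6 : 5 * (e:ℤ) + 8 * (mm:ℤ) ≤ 90 := by push_cast at hcount; linarith
        omega
    · by_contra hcon
      push_neg at hcon
      have htm : (7:ℤ) ≤ (t:ℤ) := by omega
      have hconZ : (11:ℤ)*(t:ℤ) + 1 ≤ 4*(s:ℤ) := by omega
      have h1 : 2*((t:ℤ)-2)*(s:ℤ) ≤ 2*((t:ℤ)-2)*(1+(e:ℤ)+(mm:ℤ)) :=
        mul_le_mul_of_nonneg_left hsemZ (by linarith)
      have h3 : ((t:ℤ)-3)*(e:ℤ) ≤ ((t:ℤ)-3)*(2*(t:ℤ)) :=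
        mul_le_mul_of_nonneg_left heZ (by linarith)
      have h4 : ((11:ℤ)*(t:ℤ)+1)*((t:ℤ)-2) ≤ (4*(s:ℤ))*((t:ℤ)-2) :=
        mul_le_mul_of_nonneg_right hconZ (by linarith)
      have h5 : (0:ℤ) ≤ ((t:ℤ)-7)*((t:ℤ)-1) := mul_nonneg (by linarith) (by linarith)
      linarith [h1, h3, h4, h5, hcount]
  · -- p = 5
    norm_num at hcount
    refine qb 15 4 (by norm_num) ?_ _ (by norm_num [cp])
    by_contra hcon
    push_neg at hcon
    have htm : (4:ℤ) ≤ (t:ℤ) := by omega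
    have hconZ : (15:ℤ)*(t:ℤ) + 1 ≤ 4*(s:ℤ) := by omega
    have h1 : 2*((t:ℤ)-2)*(s:ℤ) ≤ 2*((t:ℤ)-2)*(1+(e:ℤ)+(mm:ℤ)) :=
      mul_le_mul_of_nonneg_left hsemZ (by linarith)
    have h3 : ((t:ℤ)-3)*(e:ℤ) ≤ ((t:ℤ)-3)*(2*(t:ℤ)) :=
      mul_le_mul_of_nonneg_left heZ (by linarith)
    have h4 : ((15:ℤ)*(t:ℤ)+1)*((t:ℤ)-2) ≤ (4*(s:ℤ))*((t:ℤ)-2) :=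
      mul_le_mul_of_nonneg_right hconZ (by linarith)
    have h5 : (0:ℤ) ≤ (3*(t:ℤ)-2)*((t:ℤ)-4) := mul_nonneg (by linarith) (by linarith)
    linarith [h1, h3, h4, h5, hcount]
  · -- p = 6
    norm_num at hcount
    refine qb 21 5 (by norm_num) ?_ _ (by norm_num [cp])
    rcases lt_or_ge t 5 with h5 | h5
    · interval_cases t
      have := hsmall rfl; omega
    · by_contra hcon
      push_neg at hcon
      have htm : (5:ℤ) ≤ (t:ℤ) := by omega
      have hconZ : (21:ℤ)*(t:ℤ) + 1 ≤ 5*(s:ℤ) := by omega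
      have h1 : 2*((t:ℤ)-2)*(s:ℤ) ≤ 2*((t:ℤ)-2)*(1+(e:ℤ)+(mm:ℤ)) :=
        mul_le_mul_of_nonneg_left hsemZ (by linarith)
      have h3 : ((t:ℤ)-3)*(e:ℤ) ≤ ((t:ℤ)-3)*(2*(t:ℤ)) :=
        mul_le_mul_of_nonneg_left heZ (by linarith)
      have h4 : ((21:ℤ)*(t:ℤ)+1)*((t:ℤ)-2) ≤ (5*(s:ℤ))*((t:ℤ)-2) :=
        mul_le_mul_of_nonneg_right hconZ (by linarith)
      have h5 : (0:ℤ) ≤ (7*(t:ℤ)-4)*((t:ℤ)-5) := mul_nonneg (by linarith) (by linarith)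
      linarith [h1, h3, h4, h5, hcount]
  · -- p = 7
    norm_num at hcount
    refine qb 24 5 (by norm_num) ?_ _ (by norm_num [cp])
    rcases lt_or_ge t 6 with h6 | h6
    · interval_cases t
      · have := hsmall rfl; omega
      · -- t = 5
        have hc5 : 4 * (e:ℤ) + 6 * (mm:ℤ) ≤ 120 := by push_cast at hcount; linarith
        omega
    · by_contra hcon
      push_neg at hcon
      have htm : (6:ℤ) ≤ (t:ℤ) := by omega
      have hconZ : (24:ℤ)*(t:ℤ) + 1 ≤ 5*(s:ℤ) := by omega
      have h1 : 2*((t:ℤ)-2)*(s:ℤ) ≤ 2*((t:ℤ)-2)*(1+(e:ℤ)+(mm:ℤ)) :=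
        mul_le_mul_of_nonneg_left hsemZ (by linarith)
      have h3 : ((t:ℤ)-3)*(e:ℤ) ≤ ((t:ℤ)-3)*(2*(t:ℤ)) :=
        mul_le_mul_of_nonneg_left heZ (by linarith)
      have h4 : ((24:ℤ)*(t:ℤ)+1)*((t:ℤ)-2) ≤ (5*(s:ℤ))*((t:ℤ)-2) :=
        mul_le_mul_of_nonneg_right hconZ (by linarith)
      have h5 : (0:ℤ) ≤ ((t:ℤ)-6)*(4*(t:ℤ)+1) := mul_nonneg (by linarith) (by linarith)
      linarith [h1, h3, h4, h5, hcount]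
  · -- p = 8
    norm_num at hcount
    refine qb 27 5 (by norm_num) ?_ _ (by norm_num [cp])
    rcases lt_or_ge t 6 with h6 | h6
    · interval_cases t
      · have := hsmall rfl; omega
      · -- t = 5
        have hc5 : 4 * (e:ℤ) + 6 * (mm:ℤ) ≤ 140 := by push_cast at hcount; linarith
        omega
    · by_contra hcon
      push_neg at hcon
      have htm : (6:ℤ) ≤ (t:ℤ) := by omega
      have hconZ : (27:ℤ)*(t:ℤ) + 1 ≤ 5*(s:ℤ) := by omega
      have h1 : 2*((t:ℤ)-2)*(s:ℤ) ≤ 2*((t:ℤ)-2)*(1+(e:ℤ)+(mm:ℤ)) :=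
        mul_le_mul_of_nonneg_left hsemZ (by linarith)
      have h3 : ((t:ℤ)-3)*(e:ℤ) ≤ ((t:ℤ)-3)*(2*(t:ℤ)) :=
        mul_le_mul_of_nonneg_left heZ (by linarith)
      have h4 : ((27:ℤ)*(t:ℤ)+1)*((t:ℤ)-2) ≤ (5*(s:ℤ))*((t:ℤ)-2) :=
        mul_le_mul_of_nonneg_right hconZ (by linarith)
      have h5 : (0:ℤ) ≤ ((t:ℤ)-6)*(9*(t:ℤ)+1) := mul_nonneg (by linarith) (by linarith)
      linarith [h1, h3, h4, h5, hcount]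
  · -- p = 9
    norm_num at hcount
    refine qb 31 5 (by norm_num) ?_ _ (by norm_num [cp])
    rcases lt_or_ge t 5 with h5 | h5
    · interval_cases t
      have := hsmall rfl; omega
    · by_contra hcon
      push_neg at hcon
      have htm : (5:ℤ) ≤ (t:ℤ) := by omega
      have hconZ : (31:ℤ)*(t:ℤ) + 1 ≤ 5*(s:ℤ) := by omega
      have h1 : 2*((t:ℤ)-2)*(s:ℤ) ≤ 2*((t:ℤ)-2)*(1+(e:ℤ)+(mm:ℤ)) :=
        mul_le_mul_of_nonneg_left hsemZ (by linarith)
      have h3 : ((t:ℤ)-3)*(e:ℤ) ≤ ((t:ℤ)-3)*(2*(t:ℤ)) :=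
        mul_le_mul_of_nonneg_left heZ (by linarith)
      have h4 : ((31:ℤ)*(t:ℤ)+1)*((t:ℤ)-2) ≤ (5*(s:ℤ))*((t:ℤ)-2) :=
        mul_le_mul_of_nonneg_right hconZ (by linarith)
      have h5 : (0:ℤ) ≤ (3*(t:ℤ)-1)*((t:ℤ)-5) := mul_nonneg (by linarith) (by linarith)
      linarith [h1, h3, h4, h5, hcount]

end CoreArith

section CoreLemma
variable {m : ℕ}

lemma smallarith {t s : ℕ} (ht : t ≤ 3) (hs : s ≤ 2^t - 1) : 3 * s ≤ 7 * t := by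
  interval_cases t <;> norm_num at hs <;> omega


lemma four_card {α : Type*} [DecidableEq α] {a b c d : α}
    (h1 : a≠b) (h2 : a≠c) (h3 : a≠d) (h4 : b≠c) (h5 : b≠d) (h6 : c≠d) :
    ({a,b,c,d} : Finset α).card = 4 := by
  rw [card_insert_of_notMem (by simp [h1,h2,h3]),
    card_insert_of_notMem (by simp [h4,h5]),
    card_insert_of_notMem (by simp [h6]), card_singleton]

section S44
variable {m : ℕ}

-- the key conflict lemma, for both spec44 and spec45
lemma conflict (C : Finset (Fin m)) (𝒮 : Finset (Finset (Fin m)))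
    (hpair : ∀ i ∈ C, ∀ j ∈ C, i ≠ j → (𝒮.filter fun S => i ∈ S ∧ j ∉ S).card ≤ 3)
    {S T : Finset (Fin m)} (hS : S ∈ 𝒮) (hT : T ∈ 𝒮) (hST : S ≠ T)
    (hSC : S ⊆ C) (hTC : T ⊆ C)
    (hScard : S.card ≠ 1 ∧ S.card ≠ C.card - 1) (hTcard : T.card ≠ 1 ∧ T.card ≠ C.card - 1)
    (hsing : ∀ x ∈ C, ∀ y ∈ C, x ≠ y → ({x} ∈ 𝒮 ∧ C.erase y ∈ 𝒮))
    (hC2 : 3 ≤ C.card)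
    {x : Fin m} (hxS : x ∈ S) (hxT : x ∈ T)
    {y : Fin m} (hyC : y ∈ C) (hyS : y ∉ S) (hyT : y ∉ T) : False := by
  classical
  have hxC : x ∈ C := hSC hxS
  have hxy : x ≠ y := fun h => hyS (h ▸ hxS)
  obtain ⟨hx1, hEy⟩ := hsing x hxC y hyC hxy
  have hc1 : ({x} : Finset (Fin m)).card = 1 := card_singleton x
  have hcy : (C.erase y).card = C.card - 1 := card_erase_of_mem hyC
  have hsub4 : ({S, T, {x}, C.erase y} : Finset (Finset (Fin m)))
      ⊆ 𝒮.filter fun Z => x ∈ Z ∧ y ∉ Z := by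
    intro Z hZ
    simp only [mem_insert, mem_singleton] at hZ
    rcases hZ with rfl | rfl | rfl | rfl
    · exact mem_filter.mpr ⟨hS, hxS, hyS⟩
    · exact mem_filter.mpr ⟨hT, hxT, hyT⟩
    · exact mem_filter.mpr ⟨hx1, mem_singleton_self x, by simp [Ne.symm hxy]⟩
    · exact mem_filter.mpr ⟨hEy, mem_erase.mpr ⟨hxy, hxC⟩, notMem_erase y C⟩
  have hc4 : ({S, T, {x}, C.erase y} : Finset (Finset (Fin m))).card = 4 :=
    four_card hST (fun h => hScard.1 (h ▸ hc1)) (fun h => hScard.2 (h ▸ hcy))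
      (fun h => hTcard.1 (h ▸ hc1)) (fun h => hTcard.2 (h ▸ hcy))
      (fun h => by rw [← h, card_singleton] at hcy; omega)
  have := card_le_card hsub4
  rw [hc4] at this
  have := hpair x hxC y hyC hxy
  omega

lemma spec44' (C : Finset (Fin m)) (𝒮 : Finset (Finset (Fin m)))
    (hsub : ∀ S ∈ 𝒮, S ⊆ C) (hne : ∀ S ∈ 𝒮, S.Nonempty)
    (hpair : ∀ i ∈ C, ∀ j ∈ C, i ≠ j → (𝒮.filter fun S => i ∈ S ∧ j ∉ S).card ≤ 3)
    (ht : C.card = 4) : 𝒮.card ≤ 11 := by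
  classical
  have hcardS : ∀ S ∈ 𝒮, 1 ≤ S.card ∧ S.card ≤ 4 := fun S hS =>
    ⟨card_pos.mpr (hne S hS), ht ▸ card_le_card (hsub S hS)⟩
  set E := 𝒮.filter (fun S => S.card = 1 ∨ S.card = 3) with hEdef
  set M := 𝒮.filter (fun S => S.card = 2) with hMdef
  have hsem : 𝒮.card ≤ 1 + E.card + M.card := by
    have hsubu : 𝒮 ⊆ insert C (E ∪ M) := by
      intro S hS
      rcases eq_or_ne S.card 4 with hc | hc
      · have : S = C := eq_of_subset_of_card_le (hsub S hS) (by omega)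
        simp [this]
      · have h1 := hcardS S hS
        by_cases hE : S.card = 1 ∨ S.card = 3
        · exact mem_insert_of_mem (mem_union_left _ (mem_filter.mpr ⟨hS, hE⟩))
        · push_neg at hE
          exact mem_insert_of_mem (mem_union_right _ (mem_filter.mpr ⟨hS, by omega⟩))
    have h5 : (insert C (E ∪ M)).card ≤ (E ∪ M).card + 1 := card_insert_le _ _
    have h6 : (E ∪ M).card ≤ E.card + M.card := card_union_le _ _
    have h7 : 𝒮.card ≤ (insert C (E ∪ M)).card := card_le_card hsubu
    omega
  -- counting: 3*E.card + 4*M.card ≤ 36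
  have hw : ∑ S ∈ 𝒮, S.card * (C.card - S.card) ≤ 3 * (C.card * (C.card - 1)) := by
    rw [← dctotal C 𝒮 hsub]
    calc ∑ x ∈ C, ∑ y ∈ C.erase x, (𝒮.filter fun S => x ∈ S ∧ y ∉ S).card
        ≤ ∑ x ∈ C, ∑ _y ∈ C.erase x, 3 := by
          apply sum_le_sum; intro x hx; apply sum_le_sum; intro y hy
          exact hpair x hx y (mem_of_mem_erase hy) (fun h => (mem_erase.mp hy).1 h.symm)
      _ = ∑ _x ∈ C, (C.card - 1) * 3 := by
          apply sum_congr rfl; intro x hx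
          rw [sum_const, card_erase_of_mem hx, smul_eq_mul]
      _ = C.card * ((C.card - 1) * 3) := by rw [sum_const, smul_eq_mul]
      _ = 3 * (C.card * (C.card - 1)) := by ring
  have hEM : Disjoint E M := by
    rw [disjoint_left]; intro S hSE hSM
    rw [hEdef, mem_filter] at hSE; rw [hMdef, mem_filter] at hSM
    omega
  have hcount : 3 * E.card + 4 * M.card ≤ 36 := by
    have h1 : E ∪ M ⊆ 𝒮 := union_subset (filter_subset _ _) (filter_subset _ _)
    have h2 : ∑ S ∈ E ∪ M, S.card * (C.card - S.card)
        ≤ ∑ S ∈ 𝒮, S.card * (C.card - S.card) := sum_le_sum_of_subset h1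
    rw [sum_union hEM] at h2
    have h3 := card_nsmul_le_sum E (fun S => S.card * (C.card - S.card)) 3 ?_
    · have h4 := card_nsmul_le_sum M (fun S => S.card * (C.card - S.card)) 4 ?_
      · simp only [smul_eq_mul] at h3 h4
        have h36 : 3 * (C.card * (C.card - 1)) = 36 := by rw [ht]
        omega
      · intro S hS; rw [hMdef, mem_filter] at hS
        show 4 ≤ S.card * (C.card - S.card)
        rw [hS.2, ht]
    · intro S hS; rw [hEdef, mem_filter] at hS
      show 3 ≤ S.card * (C.card - S.card)
      rcases hS.2 with h | h <;> rw [h, ht]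
  -- extremes count
  have hExtC : (C.powersetCard 1 ∪ C.powersetCard 3).card = 8 := by
    rw [card_union_of_disjoint, card_powersetCard, card_powersetCard, ht]
    · rfl
    · rw [disjoint_left]; intro S h1 h3
      rw [mem_powersetCard] at h1 h3
      omega
  have hEsub : E ⊆ C.powersetCard 1 ∪ C.powersetCard 3 := by
    intro S hS
    rw [hEdef, mem_filter] at hS
    rcases hS.2 with h | h
    · exact mem_union_left _ (mem_powersetCard.mpr ⟨hsub S hS.1, h⟩)
    · exact mem_union_right _ (mem_powersetCard.mpr ⟨hsub S hS.1, h⟩)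
  have he : E.card ≤ 8 := hExtC ▸ card_le_card hEsub
  rcases le_or_gt E.card 7 with h7 | h8
  · omega
  · -- E.card = 8 : all extremes present
    have hEeq : E = C.powersetCard 1 ∪ C.powersetCard 3 :=
      eq_of_subset_of_card_le hEsub (by omega)
    have hsing : ∀ x ∈ C, ∀ y ∈ C, x ≠ y → ({x} ∈ 𝒮 ∧ C.erase y ∈ 𝒮) := by
      intro x hx y hy _
      constructor
      · have : ({x} : Finset (Fin m)) ∈ E := by
          rw [hEeq]
          exact mem_union_left _ (mem_powersetCard.mpr
            ⟨singleton_subset_iff.mpr hx, card_singleton x⟩)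
        exact (mem_filter.mp this).1
      · have : C.erase y ∈ E := by
          rw [hEeq]
          exact mem_union_right _ (mem_powersetCard.mpr
            ⟨erase_subset _ _, by rw [card_erase_of_mem hy, ht]⟩)
        exact (mem_filter.mp this).1
    -- middles pairwise disjoint
    have hdisj : ∀ S ∈ M, ∀ T ∈ M, S ≠ T → Disjoint S T := by
      intro S hSM T hTM hST
      rw [disjoint_left]
      intro x hxS hxT
      by_contra _
      rw [hMdef, mem_filter] at hSM hTM
      -- find y ∈ C outside S ∪ T
      have hunion : (S ∪ T).card ≤ 3 := by
        have h1 := card_union_add_card_inter S T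
        have h2 : 1 ≤ (S ∩ T).card := card_pos.mpr ⟨x, mem_inter.mpr ⟨hxS, hxT⟩⟩
        omega
      have hUC : S ∪ T ⊆ C := union_subset (hsub S hSM.1) (hsub T hTM.1)
      have hyex : (C \ (S ∪ T)).Nonempty := by
        rw [← card_pos, card_sdiff_of_subset hUC]
        omega
      obtain ⟨y, hy⟩ := hyex
      rw [mem_sdiff, mem_union] at hy
      push_neg at hy
      exact conflict C 𝒮 hpair hSM.1 hTM.1 hST (hsub S hSM.1) (hsub T hTM.1)
        (by omega) (by omega) hsing (by omega) hxS hxT hy.1 hy.2.1 hy.2.2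
    -- at most 2 middles
    have hM2 : M.card ≤ 2 := by
      by_contra hM3
      obtain ⟨S, hS, T, hT, U, hU, hST, hSU, hTU⟩ := two_lt_card.mp (show 2 < M.card by omega)
      have hcS : S.card = 2 := (mem_filter.mp hS).2
      have hcT : T.card = 2 := (mem_filter.mp hT).2
      have hcU : U.card = 2 := (mem_filter.mp hU).2
      have d1 : Disjoint S T := hdisj S hS T hT hST
      have d2 : Disjoint (S ∪ T) U :=
        disjoint_union_left.mpr ⟨hdisj S hS U hU hSU, hdisj T hT U hU hTU⟩
      have hc : (S ∪ T ∪ U).card = 6 := by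
        rw [card_union_of_disjoint d2, card_union_of_disjoint d1, hcS, hcT, hcU]
      have : (S ∪ T ∪ U) ⊆ C := union_subset (union_subset
        (hsub S (mem_filter.mp hS).1) (hsub T (mem_filter.mp hT).1))
        (hsub U (mem_filter.mp hU).1)
      have := card_le_card this
      omega
    omega

end S44
section EG
variable {m : ℕ}

lemma endgame45 {C : Finset (Fin m)} {M : Finset (Finset (Fin m))}
    (hMsub : ∀ S ∈ M, S ⊆ C) (hMc : ∀ S ∈ M, 2 ≤ S.card ∧ S.card ≤ 3)
    (hM4 : M.card = 4) {v : Fin m} (hvC : v ∈ C) (ht : C.card = 5)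
    (htot : ∑ x ∈ C, ∑ y ∈ C.erase x, (M.filter fun S => x ∈ S ∧ y ∉ S).card = 24)
    {a b : ℕ} (ha : 1 ≤ a) (hb : 1 ≤ b) (hab : a + b = 3)
    (capA : ∀ y ∈ C.erase v, (M.filter fun S => v ∈ S ∧ y ∉ S).card ≤ a)
    (capB : ∀ x ∈ C.erase v, (M.filter fun S => x ∈ S ∧ v ∉ S).card ≤ b)
    (capR : ∀ x ∈ C.erase v, ∀ y ∈ (C.erase v).erase x,
      (M.filter fun S => x ∈ S ∧ y ∉ S).card ≤ 1) : False := by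
  classical
  have hc4 : (C.erase v).card = 4 := by rw [card_erase_of_mem hvC, ht]
  -- decompose total
  rw [← Finset.add_sum_erase C _ hvC] at htot
  have hinner : ∀ x ∈ C.erase v,
      ∑ y ∈ C.erase x, (M.filter fun S => x ∈ S ∧ y ∉ S).card
      = (M.filter fun S => x ∈ S ∧ v ∉ S).card
        + ∑ y ∈ (C.erase v).erase x, (M.filter fun S => x ∈ S ∧ y ∉ S).card := by
    intro x hx
    have hvx : v ∈ C.erase x := mem_erase.mpr ⟨fun h => (mem_erase.mp hx).1 h.symm, hvC⟩
    rw [← Finset.add_sum_erase (C.erase x) _ hvx, Finset.erase_right_comm]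
  rw [Finset.sum_congr rfl hinner, Finset.sum_add_distrib] at htot
  -- bounds
  have hA : ∑ y ∈ C.erase v, (M.filter fun S => v ∈ S ∧ y ∉ S).card ≤ 4 * a := by
    have := sum_le_card_nsmul (C.erase v) _ a capA
    rwa [hc4, smul_eq_mul] at this
  have hB : ∑ x ∈ C.erase v, (M.filter fun S => x ∈ S ∧ v ∉ S).card ≤ 4 * b := by
    have := sum_le_card_nsmul (C.erase v) _ b capB
    rwa [hc4, smul_eq_mul] at this
  have hR : ∑ x ∈ C.erase v, ∑ y ∈ (C.erase v).erase x,
      (M.filter fun S => x ∈ S ∧ y ∉ S).card ≤ 12 := by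
    have h1 : ∀ x ∈ C.erase v, ∑ y ∈ (C.erase v).erase x,
        (M.filter fun S => x ∈ S ∧ y ∉ S).card ≤ 3 := by
      intro x hx
      have h2 := sum_le_card_nsmul ((C.erase v).erase x) _ 1 (capR x hx)
      rw [card_erase_of_mem hx, hc4, smul_eq_mul] at h2
      omega
    have := sum_le_card_nsmul (C.erase v) _ 3 h1
    rwa [hc4, smul_eq_mul] at this
  -- closed forms
  have hAform := dc1 C M hMsub v
  have hBform := dc2 C M hMsub v
  set k := (M.filter fun S => v ∈ S).card with hkdef
  have hkk : k + (M.filter fun S => ¬ v ∈ S).card = M.card :=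
    card_filter_add_card_filter_not _
  have hAk : ∑ y ∈ C.erase v, (M.filter fun S => v ∈ S ∧ y ∉ S).card ≤ 3 * k := by
    rw [hAform]
    calc ∑ S ∈ M, (if v ∈ S then C.card - S.card else 0)
        ≤ ∑ S ∈ M, (if v ∈ S then 3 else 0) := by
          apply sum_le_sum; intro S hS
          by_cases h : v ∈ S
          · rw [if_pos h, if_pos h]
            have := hMc S hS; omega
          · rw [if_neg h, if_neg h]
      _ = ∑ S ∈ M.filter (fun S => v ∈ S), 3 := (Finset.sum_filter _ _).symm
      _ = 3 * k := by rw [sum_const, smul_eq_mul, hkdef, Nat.mul_comm]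
  have hBk : ∑ x ∈ C.erase v, (M.filter fun S => x ∈ S ∧ v ∉ S).card
      ≤ 3 * (M.filter fun S => ¬ v ∈ S).card := by
    rw [hBform]
    calc ∑ S ∈ M, (if v ∉ S then S.card else 0)
        ≤ ∑ S ∈ M, (if v ∉ S then 3 else 0) := by
          apply sum_le_sum; intro S hS
          by_cases h : v ∉ S
          · rw [if_pos h, if_pos h]
            have := hMc S hS; omega
          · rw [if_neg h, if_neg h]
      _ = ∑ S ∈ M.filter (fun S => v ∉ S), 3 := (Finset.sum_filter _ _).symm
      _ = 3 * (M.filter fun S => ¬ v ∈ S).card := by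
          rw [sum_const, smul_eq_mul, Nat.mul_comm]
  omega

end EG
section S45
variable {m : ℕ}

lemma cap1 {P : Finset (Fin m) → Prop} [DecidablePred P] {𝒮 M : Finset (Finset (Fin m))}
    (hM : M ⊆ 𝒮) (hMc : ∀ S ∈ M, 2 ≤ S.card ∧ S.card ≤ 3)
    {Z : Finset (Fin m)} (hZ : Z ∈ 𝒮) (hPZ : P Z) (hZc : Z.card = 1 ∨ Z.card = 4)
    (hcap : (𝒮.filter P).card ≤ 3) : (M.filter P).card ≤ 2 := by
  classical
  have hsub : insert Z (M.filter P) ⊆ 𝒮.filter P := by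
    intro W hW; rcases mem_insert.mp hW with rfl | hW
    · exact mem_filter.mpr ⟨hZ, hPZ⟩
    · exact mem_filter.mpr ⟨hM (mem_filter.mp hW).1, (mem_filter.mp hW).2⟩
  have hnot : Z ∉ M.filter P := fun h => by
    have := hMc Z (mem_filter.mp h).1; omega
  have := card_le_card hsub
  rw [card_insert_of_notMem hnot] at this
  omega

lemma cap2 {P : Finset (Fin m) → Prop} [DecidablePred P] {𝒮 M : Finset (Finset (Fin m))}
    (hM : M ⊆ 𝒮) (hMc : ∀ S ∈ M, 2 ≤ S.card ∧ S.card ≤ 3)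
    {Z1 Z2 : Finset (Fin m)} (hZ1 : Z1 ∈ 𝒮) (hPZ1 : P Z1) (hZc1 : Z1.card = 1 ∨ Z1.card = 4)
    (hZ2 : Z2 ∈ 𝒮) (hPZ2 : P Z2) (hZc2 : Z2.card = 1 ∨ Z2.card = 4) (h12 : Z1 ≠ Z2)
    (hcap : (𝒮.filter P).card ≤ 3) : (M.filter P).card ≤ 1 := by
  classical
  have hsub : insert Z1 (insert Z2 (M.filter P)) ⊆ 𝒮.filter P := by
    intro W hW; rcases mem_insert.mp hW with rfl | hW
    · exact mem_filter.mpr ⟨hZ1, hPZ1⟩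
    rcases mem_insert.mp hW with rfl | hW
    · exact mem_filter.mpr ⟨hZ2, hPZ2⟩
    · exact mem_filter.mpr ⟨hM (mem_filter.mp hW).1, (mem_filter.mp hW).2⟩
  have hnot2 : Z2 ∉ M.filter P := fun h => by
    have := hMc Z2 (mem_filter.mp h).1; omega
  have hnot1 : Z1 ∉ insert Z2 (M.filter P) := by
    intro h; rcases mem_insert.mp h with h | h
    · exact h12 h
    · have := hMc Z1 (mem_filter.mp h).1; omega
  have := card_le_card hsub
  rw [card_insert_of_notMem hnot1, card_insert_of_notMem hnot2] at this
  omega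

lemma spec45' (C : Finset (Fin m)) (𝒮 : Finset (Finset (Fin m)))
    (hsub : ∀ S ∈ 𝒮, S ⊆ C) (hne : ∀ S ∈ 𝒮, S.Nonempty)
    (hpair : ∀ i ∈ C, ∀ j ∈ C, i ≠ j → (𝒮.filter fun S => i ∈ S ∧ j ∉ S).card ≤ 3)
    (ht : C.card = 5) : 𝒮.card ≤ 13 := by
  classical
  have hcardS : ∀ S ∈ 𝒮, 1 ≤ S.card ∧ S.card ≤ 5 := fun S hS =>
    ⟨card_pos.mpr (hne S hS), ht ▸ card_le_card (hsub S hS)⟩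
  set E := 𝒮.filter (fun S => S.card = 1 ∨ S.card = 4) with hEdef
  set M := 𝒮.filter (fun S => 2 ≤ S.card ∧ S.card ≤ 3) with hMdef
  have hMsub : ∀ S ∈ M, S ⊆ C := fun S hS => hsub S (mem_filter.mp hS).1
  have hMc : ∀ S ∈ M, 2 ≤ S.card ∧ S.card ≤ 3 := fun S hS => (mem_filter.mp hS).2
  have hMS : M ⊆ 𝒮 := filter_subset _ _
  have hsem : 𝒮.card ≤ 1 + E.card + M.card := by
    have hsubu : 𝒮 ⊆ insert C (E ∪ M) := by
      intro S hS
      rcases eq_or_ne S.card 5 with hc | hc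
      · have : S = C := eq_of_subset_of_card_le (hsub S hS) (by omega)
        simp [this]
      · have h1 := hcardS S hS
        by_cases hE : S.card = 1 ∨ S.card = 4
        · exact mem_insert_of_mem (mem_union_left _ (mem_filter.mpr ⟨hS, hE⟩))
        · push_neg at hE
          exact mem_insert_of_mem (mem_union_right _ (mem_filter.mpr ⟨hS, by omega⟩))
    have h5 : (insert C (E ∪ M)).card ≤ (E ∪ M).card + 1 := card_insert_le _ _
    have h6 : (E ∪ M).card ≤ E.card + M.card := card_union_le _ _
    have h7 : 𝒮.card ≤ (insert C (E ∪ M)).card := card_le_card hsubu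
    omega
  have hw : ∑ S ∈ 𝒮, S.card * (C.card - S.card) ≤ 3 * (C.card * (C.card - 1)) := by
    rw [← dctotal C 𝒮 hsub]
    calc ∑ x ∈ C, ∑ y ∈ C.erase x, (𝒮.filter fun S => x ∈ S ∧ y ∉ S).card
        ≤ ∑ x ∈ C, ∑ _y ∈ C.erase x, 3 := by
          apply sum_le_sum; intro x hx; apply sum_le_sum; intro y hy
          exact hpair x hx y (mem_of_mem_erase hy) (fun h => (mem_erase.mp hy).1 h.symm)
      _ = ∑ _x ∈ C, (C.card - 1) * 3 := by
          apply sum_congr rfl; intro x hx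
          rw [sum_const, card_erase_of_mem hx, smul_eq_mul]
      _ = C.card * ((C.card - 1) * 3) := by rw [sum_const, smul_eq_mul]
      _ = 3 * (C.card * (C.card - 1)) := by ring
  have hEM : Disjoint E M := by
    rw [disjoint_left]; intro S hSE hSM
    rw [hEdef, mem_filter] at hSE; rw [hMdef, mem_filter] at hSM
    omega
  have hcount : 4 * E.card + 6 * M.card ≤ 60 := by
    have h1 : E ∪ M ⊆ 𝒮 := union_subset (filter_subset _ _) (filter_subset _ _)
    have h2 : ∑ S ∈ E ∪ M, S.card * (C.card - S.card)
        ≤ ∑ S ∈ 𝒮, S.card * (C.card - S.card) := sum_le_sum_of_subset h1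
    rw [sum_union hEM] at h2
    have h3 := card_nsmul_le_sum E (fun S => S.card * (C.card - S.card)) 4 ?_
    · have h4 := card_nsmul_le_sum M (fun S => S.card * (C.card - S.card)) 6 ?_
      · simp only [smul_eq_mul] at h3 h4
        have h60 : 3 * (C.card * (C.card - 1)) = 60 := by rw [ht]
        omega
      · intro S hS; rw [hMdef, mem_filter] at hS
        show 6 ≤ S.card * (C.card - S.card)
        rw [ht]
        rcases (show S.card = 2 ∨ S.card = 3 by omega) with h | h <;> rw [h]
    · intro S hS; rw [hEdef, mem_filter] at hS
      show 4 ≤ S.card * (C.card - S.card)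
      rcases hS.2 with h | h <;> rw [h, ht]
  -- middle weight is exactly 6
  have hMw : ∀ S ∈ M, S.card * (C.card - S.card) = 6 := by
    intro S hS
    have := hMc S hS
    rw [ht]
    rcases (show S.card = 2 ∨ S.card = 3 by omega) with h | h <;> rw [h]
  -- extremes structure
  have hExtC : (C.powersetCard 1 ∪ C.powersetCard 4).card = 10 := by
    rw [card_union_of_disjoint, card_powersetCard, card_powersetCard, ht]
    · rfl
    · rw [disjoint_left]; intro S h1 h3
      rw [mem_powersetCard] at h1 h3
      omega
  have hEsub : E ⊆ C.powersetCard 1 ∪ C.powersetCard 4 := by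
    intro S hS
    rw [hEdef, mem_filter] at hS
    rcases hS.2 with h | h
    · exact mem_union_left _ (mem_powersetCard.mpr ⟨hsub S hS.1, h⟩)
    · exact mem_union_right _ (mem_powersetCard.mpr ⟨hsub S hS.1, h⟩)
  have he : E.card ≤ 10 := hExtC ▸ card_le_card hEsub
  by_contra hbig
  push_neg at hbig
  have he9 : 9 ≤ E.card := by omega
  rcases (show E.card = 10 ∨ E.card = 9 by omega) with he10 | he9'
  · -- all extremes present
    have hEeq : E = C.powersetCard 1 ∪ C.powersetCard 4 :=
      eq_of_subset_of_card_le hEsub (by omega)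
    have hsing : ∀ x ∈ C, ∀ y ∈ C, x ≠ y → ({x} ∈ 𝒮 ∧ C.erase y ∈ 𝒮) := by
      intro x hx y hy _
      constructor
      · have : ({x} : Finset (Fin m)) ∈ E := by
          rw [hEeq]
          exact mem_union_left _ (mem_powersetCard.mpr
            ⟨singleton_subset_iff.mpr hx, card_singleton x⟩)
        exact (mem_filter.mp this).1
      · have : C.erase y ∈ E := by
          rw [hEeq]
          exact mem_union_right _ (mem_powersetCard.mpr
            ⟨erase_subset _ _, by rw [card_erase_of_mem hy, ht]⟩)
        exact (mem_filter.mp this).1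
    have hM3 : 3 ≤ M.card := by omega
    -- pairwise structure of middles
    have hPW : ∀ S ∈ M, ∀ T ∈ M, S ≠ T →
        Disjoint S T ∨ (S.card = 3 ∧ T.card = 3 ∧ S ∪ T = C) := by
      intro S hSM T hTM hST
      by_cases hd : Disjoint S T
      · exact Or.inl hd
      obtain ⟨x, hxS, hxT⟩ := not_disjoint_iff.mp hd
      have hUC : S ∪ T ⊆ C := union_subset (hMsub S hSM) (hMsub T hTM)
      by_cases hU : S ∪ T = C
      · right
        have h1 := card_union_add_card_inter S T
        have h2 : 1 ≤ (S ∩ T).card := card_pos.mpr ⟨x, mem_inter.mpr ⟨hxS, hxT⟩⟩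
        have h3 := hMc S hSM
        have h4 := hMc T hTM
        rw [hU, ht] at h1
        exact ⟨by omega, by omega, hU⟩
      · exfalso
        have hss : S ∪ T ⊂ C := Finset.ssubset_iff_subset_ne.mpr ⟨hUC, hU⟩
        have hyex : (C \ (S ∪ T)).Nonempty := by
          rw [← card_pos, card_sdiff_of_subset hUC]
          have := card_lt_card hss
          omega
        obtain ⟨y, hy⟩ := hyex
        rw [mem_sdiff, mem_union] at hy
        push_neg at hy
        have h3 := hMc S hSM
        have h4 := hMc T hTM
        exact conflict C 𝒮 hpair (hMS hSM) (hMS hTM) hST (hMsub S hSM) (hMsub T hTM)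
          (by omega) (by omega) hsing (by omega) hxS hxT hy.1 hy.2.1 hy.2.2
    -- helper: a middle of card 2 is disjoint from any other middle
    have hA : ∀ S ∈ M, ∀ T ∈ M, S ≠ T → S.card = 2 → Disjoint S T := by
      intro S hSM T hTM hST hc2
      rcases hPW S hSM T hTM hST with h | h
      · exact h
      · omega
    obtain ⟨S, hS, T, hT, U, hU, hST, hSU, hTU⟩ := two_lt_card.mp (show 2 < M.card by omega)
    -- case analysis
    have haux : ∀ X ∈ M, ∀ Y ∈ M, ∀ Z ∈ M, X ≠ Y → X ≠ Z → Y ≠ Z → X.card = 2 → False := by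
      intro X hX Y hY Z hZ hXY hXZ hYZ hc2
      have d1 : Disjoint X Y := hA X hX Y hY hXY hc2
      have d2 : Disjoint X Z := hA X hX Z hZ hXZ hc2
      by_cases h2 : Y.card = 2 ∨ Z.card = 2
      · have d3 : Disjoint Y Z := by
          rcases h2 with h | h
          · exact hA Y hY Z hZ hYZ h
          · exact (hA Z hZ Y hY (Ne.symm hYZ) h).symm
        have dd : Disjoint (X ∪ Y) Z := disjoint_union_left.mpr ⟨d2, d3⟩
        have hc : (X ∪ Y ∪ Z).card = X.card + Y.card + Z.card := by
          rw [card_union_of_disjoint dd, card_union_of_disjoint d1]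
        have hsubC : X ∪ Y ∪ Z ⊆ C :=
          union_subset (union_subset (hMsub X hX) (hMsub Y hY)) (hMsub Z hZ)
        have h5 := card_le_card hsubC
        have := hMc Y hY
        have := hMc Z hZ
        rw [hc, ht] at h5
        omega
      · push_neg at h2
        have hY3 : Y.card = 3 := by have := hMc Y hY; omega
        have hZ3 : Z.card = 3 := by have := hMc Z hZ; omega
        rcases hPW Y hY Z hZ hYZ with h | h
        · have h1 := card_union_add_card_inter Y Z
          rw [Finset.disjoint_iff_inter_eq_empty.mp h] at h1
          have hsubC : Y ∪ Z ⊆ C := union_subset (hMsub Y hY) (hMsub Z hZ)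
          have h5 := card_le_card hsubC
          simp at h1
          omega
        · -- Y ∪ Z = C, X disjoint from both: X = ∅
          obtain ⟨x, hx⟩ := card_pos.mp (show 0 < X.card by omega)
          have hxC : x ∈ C := hMsub X hX hx
          rw [← h.2.2, mem_union] at hxC
          rcases hxC with hc | hc
          · exact (disjoint_left.mp d1 hx) hc
          · exact (disjoint_left.mp d2 hx) hc
    -- all three cards
    have hS3 : S.card = 2 ∨ S.card = 3 := by have := hMc S hS; omega
    have hT3 : T.card = 2 ∨ T.card = 3 := by have := hMc T hT; omega
    have hU3 : U.card = 2 ∨ U.card = 3 := by have := hMc U hU; omega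
    rcases hS3 with h | hS3
    · exact haux S hS T hT U hU hST hSU hTU h
    rcases hT3 with h | hT3
    · exact haux T hT S hS U hU (Ne.symm hST) hTU hSU h
    rcases hU3 with h | hU3
    · exact haux U hU S hS T hT (Ne.symm hSU) (Ne.symm hTU) hST h
    -- all card 3
    have hunions : ∀ X ∈ M, ∀ Y ∈ M, X ≠ Y → X.card = 3 → Y.card = 3 →
        X ∪ Y = C ∧ (X ∩ Y).card = 1 := by
      intro X hX Y hY hXY h3X h3Y
      rcases hPW X hX Y hY hXY with h | h
      · exfalso
        have h1 := card_union_add_card_inter X Y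
        rw [Finset.disjoint_iff_inter_eq_empty.mp h] at h1
        have h5 := card_le_card (union_subset (hMsub X hX) (hMsub Y hY))
        simp at h1
        omega
      · have h1 := card_union_add_card_inter X Y
        rw [h.2.2, ht] at h1
        exact ⟨h.2.2, by omega⟩
    obtain ⟨hu1, hi1⟩ := hunions S hS T hT hST hS3 hT3
    obtain ⟨hu2, _⟩ := hunions S hS U hU hSU hS3 hU3
    obtain ⟨hu3, hi3⟩ := hunions T hT U hU hTU hT3 hU3
    -- C \ (T ∩ U) ⊆ S, card 4 > 3
    have hsubS : C \ (T ∩ U) ⊆ S := by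
      intro z hz
      rw [mem_sdiff, mem_inter] at hz
      have hzC := hz.1
      by_cases hzT : z ∈ T
      · have hzU : z ∉ U := fun h => hz.2 ⟨hzT, h⟩
        rw [← hu2, mem_union] at hzC
        rcases hzC with h | h
        · exact h
        · exact absurd h hzU
      · rw [← hu1, mem_union] at hzC
        rcases hzC with h | h
        · exact h
        · exact absurd h hzT
    have h5 := card_le_card hsubS
    rw [card_sdiff_of_subset (inter_subset_left.trans (hMsub T hT)), hi3, ht, hS3] at h5
    omega
  · -- exactly one extreme missing
    have hM4 : M.card = 4 := by omega
    have hsd : ((C.powersetCard 1 ∪ C.powersetCard 4) \ E).card = 1 := by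
      rw [card_sdiff_of_subset hEsub, hExtC, he9']
    obtain ⟨e0, he0⟩ := card_eq_one.mp hsd
    have he0mem : e0 ∈ C.powersetCard 1 ∪ C.powersetCard 4 := by
      have : e0 ∈ (C.powersetCard 1 ∪ C.powersetCard 4) \ E := he0 ▸ mem_singleton_self e0
      exact (mem_sdiff.mp this).1
    have he0nE : e0 ∉ E := by
      have : e0 ∈ (C.powersetCard 1 ∪ C.powersetCard 4) \ E := he0 ▸ mem_singleton_self e0
      exact (mem_sdiff.mp this).2
    have hsing' : ∀ Z ∈ C.powersetCard 1 ∪ C.powersetCard 4, Z ≠ e0 → Z ∈ 𝒮 := by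
      intro Z hZ hZe
      by_cases h : Z ∈ E
      · exact (mem_filter.mp h).1
      · exfalso
        have : Z ∈ (C.powersetCard 1 ∪ C.powersetCard 4) \ E := mem_sdiff.mpr ⟨hZ, h⟩
        rw [he0] at this
        exact hZe (mem_singleton.mp this)
    -- total sum over pairs for M
    have htotM : ∑ x ∈ C, ∑ y ∈ C.erase x, (M.filter fun S => x ∈ S ∧ y ∉ S).card = 24 := by
      rw [dctotal C M hMsub]
      rw [Finset.sum_congr rfl (fun S hS => hMw S hS), sum_const, smul_eq_mul, hM4]
    rcases mem_union.mp he0mem with he0s | he0c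
    · -- e0 is a singleton {v}
      obtain ⟨hsub0, hc0⟩ := mem_powersetCard.mp he0s
      obtain ⟨v, rfl⟩ := card_eq_one.mp hc0
      have hvC : v ∈ C := singleton_subset_iff.mp hsub0
      have hcos : ∀ y ∈ C, C.erase y ∈ 𝒮 := by
        intro y hy
        apply hsing' _ (mem_union_right _ (mem_powersetCard.mpr
          ⟨erase_subset _ _, by rw [card_erase_of_mem hy, ht]⟩))
        intro h
        have h2 : (C.erase y).card = 1 := by rw [h, card_singleton]
        rw [card_erase_of_mem hy, ht] at h2
        omega
      have hsingx : ∀ x ∈ C, x ≠ v → ({x} : Finset (Fin m)) ∈ 𝒮 := by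
        intro x hx hxv
        apply hsing' _ (mem_union_left _ (mem_powersetCard.mpr
          ⟨singleton_subset_iff.mpr hx, card_singleton x⟩))
        exact fun h => hxv (singleton_injective h)
      refine endgame45 hMsub hMc hM4 hvC ht htotM (a := 2) (b := 1) (by norm_num) le_rfl rfl ?_ ?_ ?_
      · intro y hy
        have hyC := mem_of_mem_erase hy
        have hyv : y ≠ v := (mem_erase.mp hy).1
        exact cap1 hMS hMc (hcos y hyC)
          ⟨mem_erase.mpr ⟨Ne.symm hyv, hvC⟩, notMem_erase y C⟩
          (Or.inr (by rw [card_erase_of_mem hyC, ht]))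
          (hpair v hvC y hyC (Ne.symm hyv))
      · intro x hx
        have hxC := mem_of_mem_erase hx
        have hxv : x ≠ v := (mem_erase.mp hx).1
        refine cap2 hMS hMc (hsingx x hxC hxv)
          ⟨mem_singleton_self x, fun h => hxv ((mem_singleton.mp h).symm)⟩
          (Or.inl (card_singleton x))
          (hcos v hvC) ⟨mem_erase.mpr ⟨hxv, hxC⟩, notMem_erase v C⟩
          (Or.inr (by rw [card_erase_of_mem hvC, ht]))
          (fun h => ?_) (hpair x hxC v hvC hxv)
        have h2 := card_erase_of_mem hvC
        rw [← h, card_singleton, ht] at h2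
        omega
      · intro x hx y hy
        have hxC := mem_of_mem_erase hx
        have hxv : x ≠ v := (mem_erase.mp hx).1
        have hyC : y ∈ C := mem_of_mem_erase (mem_of_mem_erase hy)
        have hxy : x ≠ y := fun h => (mem_erase.mp hy).1 h.symm
        refine cap2 hMS hMc (hsingx x hxC hxv)
          ⟨mem_singleton_self x, fun h => hxy ((mem_singleton.mp h).symm)⟩
          (Or.inl (card_singleton x))
          (hcos y hyC) ⟨mem_erase.mpr ⟨hxy, hxC⟩, notMem_erase y C⟩
          (Or.inr (by rw [card_erase_of_mem hyC, ht]))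
          (fun h => ?_) (hpair x hxC y hyC hxy)
        have h2 := card_erase_of_mem hyC
        rw [← h, card_singleton, ht] at h2
        omega
    · -- e0 is a cosingleton
      obtain ⟨hsub0, hc0⟩ := mem_powersetCard.mp he0c
      have hvex : (C \ e0).card = 1 := by rw [card_sdiff_of_subset hsub0, ht, hc0]
      obtain ⟨v, hv⟩ := card_eq_one.mp hvex
      have hvC : v ∈ C := by
        have h2 : v ∈ C \ e0 := hv ▸ mem_singleton_self v
        exact (mem_sdiff.mp h2).1
      have hvne0 : v ∉ e0 := by
        have h2 : v ∈ C \ e0 := hv ▸ mem_singleton_self v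
        exact (mem_sdiff.mp h2).2
      have he0eq : e0 = C.erase v := by
        ext z
        constructor
        · intro hz
          exact mem_erase.mpr ⟨fun h => hvne0 (h ▸ hz), hsub0 hz⟩
        · intro hz
          by_contra hze
          have h2 : z ∈ C \ e0 := mem_sdiff.mpr ⟨mem_of_mem_erase hz, hze⟩
          rw [hv] at h2
          exact (mem_erase.mp hz).1 (mem_singleton.mp h2)
      have hsingx : ∀ x ∈ C, ({x} : Finset (Fin m)) ∈ 𝒮 := by
        intro x hx
        apply hsing' _ (mem_union_left _ (mem_powersetCard.mpr
          ⟨singleton_subset_iff.mpr hx, card_singleton x⟩))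
        intro h
        rw [← h, card_singleton] at hc0
        omega
      have hcos : ∀ y ∈ C, y ≠ v → C.erase y ∈ 𝒮 := by
        intro y hy hyv
        apply hsing' _ (mem_union_right _ (mem_powersetCard.mpr
          ⟨erase_subset _ _, by rw [card_erase_of_mem hy, ht]⟩))
        intro h
        rw [he0eq] at h
        have h2 : v ∈ C.erase y := mem_erase.mpr ⟨Ne.symm hyv, hvC⟩
        rw [h] at h2
        exact (mem_erase.mp h2).1 rfl
      refine endgame45 hMsub hMc hM4 hvC ht htotM (a := 1) (b := 2) le_rfl (by norm_num) rfl ?_ ?_ ?_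
      · intro y hy
        have hyC := mem_of_mem_erase hy
        have hyv : y ≠ v := (mem_erase.mp hy).1
        refine cap2 hMS hMc (hsingx v hvC)
          ⟨mem_singleton_self v, fun h => hyv (mem_singleton.mp h)⟩
          (Or.inl (card_singleton v))
          (hcos y hyC hyv) ⟨mem_erase.mpr ⟨Ne.symm hyv, hvC⟩, notMem_erase y C⟩
          (Or.inr (by rw [card_erase_of_mem hyC, ht]))
          (fun h => ?_) (hpair v hvC y hyC (Ne.symm hyv))
        have h2 := card_erase_of_mem hyC
        rw [← h, card_singleton, ht] at h2
        omega
      · intro x hx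
        have hxC := mem_of_mem_erase hx
        have hxv : x ≠ v := (mem_erase.mp hx).1
        exact cap1 hMS hMc (hsingx x hxC)
          ⟨mem_singleton_self x, fun h => hxv ((mem_singleton.mp h).symm)⟩
          (Or.inl (card_singleton x)) (hpair x hxC v hvC hxv)
      · intro x hx y hy
        have hxC := mem_of_mem_erase hx
        have hxv : x ≠ v := (mem_erase.mp hx).1
        have hyv : y ≠ v := (mem_erase.mp (mem_of_mem_erase hy)).1
        have hyC : y ∈ C := mem_of_mem_erase (mem_of_mem_erase hy)
        have hxy : x ≠ y := fun h => (mem_erase.mp hy).1 h.symm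
        refine cap2 hMS hMc (hsingx x hxC)
          ⟨mem_singleton_self x, fun h => hxy ((mem_singleton.mp h).symm)⟩
          (Or.inl (card_singleton x))
          (hcos y hyC hyv) ⟨mem_erase.mpr ⟨hxy, hxC⟩, notMem_erase y C⟩
          (Or.inr (by rw [card_erase_of_mem hyC, ht]))
          (fun h => ?_) (hpair x hxC y hyC hxy)
        have h2 := card_erase_of_mem hyC
        rw [← h, card_singleton, ht] at h2
        omega

end S45
lemma core (p : ℕ) (hp3 : 3 ≤ p) (hp9 : p ≤ 9)
    (C : Finset (Fin m)) (𝒮 : Finset (Finset (Fin m)))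
    (hsub : ∀ S ∈ 𝒮, S ⊆ C) (hne : ∀ S ∈ 𝒮, S.Nonempty)
    (hpair : ∀ i ∈ C, ∀ j ∈ C, i ≠ j → (𝒮.filter fun S => i ∈ S ∧ j ∉ S).card ≤ p - 1) :
    (𝒮.card : ℚ) ≤ cp p * C.card := by
  classical
  have hspow : 𝒮.card ≤ 2 ^ C.card - 1 := by
    have h1 : 𝒮 ⊆ C.powerset.erase ∅ := fun S hS =>
      mem_erase.mpr ⟨(hne S hS).ne_empty, mem_powerset.mpr (hsub S hS)⟩
    calc 𝒮.card ≤ (C.powerset.erase ∅).card := card_le_card h1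
      _ = 2 ^ C.card - 1 := by
          rw [card_erase_of_mem (mem_powerset.mpr (empty_subset _)), card_powerset]
  rcases le_or_gt C.card 3 with ht | ht
  · exact qb 7 3 (by norm_num) (smallarith ht hspow) _
      (by interval_cases p <;> norm_num [cp])
  · have ht4 : 4 ≤ C.card := ht
    have hcardS : ∀ S ∈ 𝒮, 1 ≤ S.card ∧ S.card ≤ C.card := fun S hS =>
      ⟨card_pos.mpr (hne S hS), card_le_card (hsub S hS)⟩
    set E := 𝒮.filter (fun S => S.card = 1 ∨ S.card = C.card - 1) with hEdef
    set M := 𝒮.filter (fun S => 2 ≤ S.card ∧ S.card ≤ C.card - 2) with hMdef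
    have hsem : 𝒮.card ≤ 1 + E.card + M.card := by
      have hsubu : 𝒮 ⊆ insert C (E ∪ M) := by
        intro S hS
        rcases eq_or_ne S.card C.card with hc | hc
        · have : S = C := eq_of_subset_of_card_le (hsub S hS) (le_of_eq hc.symm)
          simp [this]
        · have h1 := hcardS S hS
          by_cases hE : S.card = 1 ∨ S.card = C.card - 1
          · exact mem_insert_of_mem (mem_union_left _ (mem_filter.mpr ⟨hS, hE⟩))
          · push_neg at hE
            exact mem_insert_of_mem (mem_union_right _ (mem_filter.mpr ⟨hS, by omega⟩))
      have h5 : (insert C (E ∪ M)).card ≤ (E ∪ M).card + 1 := card_insert_le _ _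
      have h6 : (E ∪ M).card ≤ E.card + M.card := card_union_le _ _
      have h7 : 𝒮.card ≤ (insert C (E ∪ M)).card := card_le_card hsubu
      omega
    have he : E.card ≤ 2 * C.card := by
      have hsubE : E ⊆ C.powersetCard 1 ∪ C.powersetCard (C.card - 1) := by
        intro S hS
        rw [hEdef, mem_filter] at hS
        rcases hS.2 with h | h
        · exact mem_union_left _ (mem_powersetCard.mpr ⟨hsub S hS.1, h⟩)
        · exact mem_union_right _ (mem_powersetCard.mpr ⟨hsub S hS.1, h⟩)
      have h1 := card_le_card hsubE
      have h2 := card_union_le (C.powersetCard 1) (C.powersetCard (C.card - 1))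
      rw [card_powersetCard, card_powersetCard] at h2
      have h3 : C.card.choose 1 = C.card := Nat.choose_one_right _
      have h4 : C.card.choose (C.card - 1) = C.card := by
        rw [Nat.choose_symm (show 1 ≤ C.card by omega), Nat.choose_one_right]
      omega
    have hw : ∑ S ∈ 𝒮, S.card * (C.card - S.card) ≤ (p-1) * (C.card * (C.card - 1)) := by
      rw [← dctotal C 𝒮 hsub]
      calc ∑ x ∈ C, ∑ y ∈ C.erase x, (𝒮.filter fun S => x ∈ S ∧ y ∉ S).card
          ≤ ∑ x ∈ C, ∑ _y ∈ C.erase x, (p-1) := by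
            apply sum_le_sum; intro x hx; apply sum_le_sum; intro y hy
            exact hpair x hx y (mem_of_mem_erase hy) (fun h => (mem_erase.mp hy).1 h.symm)
        _ = ∑ _x ∈ C, (C.card - 1) * (p-1) := by
            apply sum_congr rfl; intro x hx
            rw [sum_const, card_erase_of_mem hx, smul_eq_mul]
        _ = C.card * ((C.card - 1) * (p-1)) := by rw [sum_const, smul_eq_mul]
        _ = (p-1) * (C.card * (C.card - 1)) := by ring
    have hlowE : ∀ S ∈ E, C.card - 1 ≤ S.card * (C.card - S.card) := by
      intro S hS; rw [hEdef, mem_filter] at hS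
      rcases hS.2 with h | h
      · rw [h, one_mul]
      · rw [h]
        have h9 : C.card - (C.card - 1) = 1 := by omega
        rw [h9, mul_one]
    have hlowM : ∀ S ∈ M, 2 * (C.card - 2) ≤ S.card * (C.card - S.card) := by
      intro S hS; rw [hMdef, mem_filter] at hS
      exact wMlower hS.2.1 (by omega)
    have hEM : Disjoint E M := by
      rw [disjoint_left]; intro S hSE hSM
      rw [hEdef, mem_filter] at hSE; rw [hMdef, mem_filter] at hSM
      omega
    have hcount : (C.card - 1) * E.card + (2*(C.card-2)) * M.card
        ≤ (p-1) * (C.card * (C.card - 1)) := by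
      have h1 : E ∪ M ⊆ 𝒮 := union_subset (filter_subset _ _) (filter_subset _ _)
      have h2 : ∑ S ∈ E ∪ M, S.card * (C.card - S.card)
          ≤ ∑ S ∈ 𝒮, S.card * (C.card - S.card) := sum_le_sum_of_subset h1
      rw [sum_union hEM] at h2
      have h3 := card_nsmul_le_sum E (fun S => S.card * (C.card - S.card)) (C.card - 1) hlowE
      have h4 := card_nsmul_le_sum M (fun S => S.card * (C.card - S.card)) (2*(C.card-2)) hlowM
      simp only [smul_eq_mul] at h3 h4
      have h8 : (C.card-1) * E.card + (2*(C.card-2)) * M.card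
          = E.card * (C.card-1) + M.card * (2*(C.card-2)) := by ring
      rw [h8]
      exact le_trans (Nat.add_le_add h3 h4) (le_trans h2 hw)
    exact arith p C.card E.card M.card 𝒮.card hp3 hp9 ht4 hcount he hsem
      (fun hp4 ht4' => spec44' C 𝒮 hsub hne
        (fun i hi j hj hij => by have := hpair i hi j hj hij; omega) ht4')
      (fun hp4 ht5 => spec45' C 𝒮 hsub hne
        (fun i hi j hj hij => by have := hpair i hi j hj hij; omega) ht5)
      (fun h4 => by rw [h4] at hspow; simpa using hspow)

end CoreLemma
section MainRed
variable {m : ℕ}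

def dd (A : Finset (Finset (Fin m))) (i j : Fin m) : ℕ :=
  (A.filter fun X => i ∈ X ∧ j ∉ X).card

def RelA (p : ℕ) (A : Finset (Finset (Fin m))) (i j : Fin m) : Prop :=
  i = j ∨ (configGraph p m A).Adj i j

def lle (p : ℕ) (A : Finset (Finset (Fin m))) (i j : Fin m) : Prop :=
  RelA p A i j ∨ dd A i j = 0

noncomputable def compF (p : ℕ) (A : Finset (Finset (Fin m))) (i : Fin m) : Finset (Fin m) :=
  @Finset.filter _ (fun j => RelA p A i j) (Classical.decPred _) Finset.univ

noncomputable def Dset (p : ℕ) (A : Finset (Finset (Fin m))) (i : Fin m) : Finset (Fin m) :=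
  @Finset.filter _ (fun j => ¬ RelA p A i j ∧ dd A i j = 0) (Classical.decPred _) Finset.univ

noncomputable def bot (p : ℕ) (A : Finset (Finset (Fin m))) (hm : 0 < m)
    (X : Finset (Fin m)) : Fin m :=
  @dite _ (∃ i ∈ X, ∀ j ∈ X, lle p A i j) (Classical.dec _) (fun h => h.choose)
    (fun _ => ⟨0, hm⟩)

variable {p : ℕ} {A : Finset (Finset (Fin m))}

lemma adj_def {i j : Fin m} : (configGraph p m A).Adj i j ↔ i ≠ j ∧
    (1 ≤ dd A i j ∧ dd A i j ≤ p - 1) ∧ (1 ≤ dd A j i ∧ dd A j i ≤ p - 1) := Iff.rfl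

lemma rel_refl (i : Fin m) : RelA p A i i := Or.inl rfl

lemma rel_symm {i j : Fin m} (h : RelA p A i j) : RelA p A j i := by
  rcases h with rfl | h
  · exact Or.inl rfl
  · exact Or.inr h.symm

lemma compF_mem {i j : Fin m} : j ∈ compF p A i ↔ RelA p A i j := by
  simp only [compF, Finset.mem_filter, Finset.mem_univ, true_and]

lemma Dset_mem {i j : Fin m} : j ∈ Dset p A i ↔ ¬ RelA p A i j ∧ dd A i j = 0 := by
  simp only [Dset, Finset.mem_filter, Finset.mem_univ, true_and]

lemma dd_pos_iff {i j : Fin m} : 1 ≤ dd A i j ↔ ∃ X ∈ A, i ∈ X ∧ j ∉ X := by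
  rw [dd, Nat.one_le_iff_ne_zero, ← Nat.pos_iff_ne_zero, card_pos]
  constructor
  · rintro ⟨X, hX⟩
    rw [mem_filter] at hX
    exact ⟨X, hX.1, hX.2⟩
  · rintro ⟨X, hX1, hX2⟩
    exact ⟨X, mem_filter.mpr ⟨hX1, hX2⟩⟩

lemma dd_zero_iff {i j : Fin m} : dd A i j = 0 ↔ ∀ X ∈ A, i ∈ X → j ∈ X := by
  rw [dd, card_eq_zero, filter_eq_empty_iff]
  constructor
  · intro h X hX hiX
    by_contra hjX
    exact h hX ⟨hiX, hjX⟩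
  · intro h X hX hc
    exact hc.2 (h X hX hc.1)

section WithHyps
variable (hA : AvoidsF010 p m A)
variable (hcl : ∀ i j : Fin m,
  (configGraph p m A).Reachable i j → i ≠ j → (configGraph p m A).Adj i j)

lemma rel_trans (hcl : ∀ i j : Fin m,
    (configGraph p m A).Reachable i j → i ≠ j → (configGraph p m A).Adj i j)
    {i j k : Fin m} (h1 : RelA p A i j) (h2 : RelA p A j k) : RelA p A i k := by
  rcases h1 with rfl | h1
  · exact h2
  rcases h2 with rfl | h2
  · exact Or.inr h1
  rcases eq_or_ne i k with rfl | hik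
  · exact Or.inl rfl
  · exact Or.inr (hcl i k (h1.reachable.trans h2.reachable) hik)

lemma F3 (hA : AvoidsF010 p m A) {i j : Fin m} (hij : i ≠ j)
    (hn : ¬ (configGraph p m A).Adj i j) : dd A i j = 0 ∨ dd A j i = 0 := by
  by_contra h
  push_neg at h
  have h1 : 1 ≤ dd A i j := by omega
  have h2 : 1 ≤ dd A j i := by omega
  have b1 : dd A i j ≤ p - 1 := hA i j hij (dd_pos_iff.mp h2)
  have b2 : dd A j i ≤ p - 1 := hA j i hij.symm (dd_pos_iff.mp h1)
  exact hn ⟨hij, ⟨h1, b1⟩, ⟨h2, b2⟩⟩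

lemma lle_total (hA : AvoidsF010 p m A) (i j : Fin m) : lle p A i j ∨ lle p A j i := by
  rcases eq_or_ne i j with rfl | hij
  · exact Or.inl (Or.inl (rel_refl i))
  by_cases hadj : (configGraph p m A).Adj i j
  · exact Or.inl (Or.inl (Or.inr hadj))
  rcases F3 hA hij hadj with h | h
  · exact Or.inl (Or.inr h)
  · exact Or.inr (Or.inr h)

lemma lle_trans (hA : AvoidsF010 p m A) (hcl : ∀ i j : Fin m,
    (configGraph p m A).Reachable i j → i ≠ j → (configGraph p m A).Adj i j)
    {i j k : Fin m} (h1 : lle p A i j) (h2 : lle p A j k) : lle p A i k := by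
  rcases h1 with h1 | h1
  · rcases h2 with h2 | h2
    · exact Or.inl (rel_trans hcl h1 h2)
    · -- RelA i j, dd j k = 0
      rcases h1 with rfl | hadj
      · exact Or.inr h2
      by_cases hrel : RelA p A i k
      · exact Or.inl hrel
      by_cases h0 : dd A i k = 0
      · exact Or.inr h0
      exfalso
      have hik : i ≠ k := fun h => hrel (h ▸ rel_refl i)
      have hnadj : ¬ (configGraph p m A).Adj i k := fun h => hrel (Or.inr h)
      rcases F3 hA hik hnadj with h | h
      · exact h0 h
      -- h : dd k i = 0 ; hadj : Adj i j gives dd j i ≥ 1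
      obtain ⟨Y, hY, hjY, hiY⟩ := dd_pos_iff.mp hadj.2.2.1
      have hkY : k ∈ Y := dd_zero_iff.mp h2 Y hY hjY
      exact hiY (dd_zero_iff.mp h Y hY hkY)
  · rcases h2 with h2 | h2
    · -- dd i j = 0, RelA j k
      rcases h2 with rfl | hadj
      · exact Or.inr h1
      by_cases hrel : RelA p A i k
      · exact Or.inl hrel
      by_cases h0 : dd A i k = 0
      · exact Or.inr h0
      exfalso
      have hik : i ≠ k := fun h => hrel (h ▸ rel_refl i)
      have hnadj : ¬ (configGraph p m A).Adj i k := fun h => hrel (Or.inr h)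
      rcases F3 hA hik hnadj with h | h
      · exact h0 h
      -- h : dd k i = 0 ; hadj : Adj j k gives dd k j ≥ 1
      obtain ⟨Y, hY, hkY, hjY⟩ := dd_pos_iff.mp hadj.2.2.1
      have hiY : i ∈ Y := dd_zero_iff.mp h Y hY hkY
      exact hjY (dd_zero_iff.mp h1 Y hY hiY)
    · -- dd i j = 0, dd j k = 0
      right
      rw [dd_zero_iff]
      intro X hX hiX
      exact dd_zero_iff.mp h2 X hX (dd_zero_iff.mp h1 X hX hiX)

lemma bottom_exists (hA : AvoidsF010 p m A) (hcl : ∀ i j : Fin m,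
    (configGraph p m A).Reachable i j → i ≠ j → (configGraph p m A).Adj i j)
    (X : Finset (Fin m)) (hX : X.Nonempty) : ∃ i ∈ X, ∀ j ∈ X, lle p A i j := by
  classical
  induction X using Finset.induction_on with
  | empty => exact absurd hX (by simp)
  | @insert a s ha ih =>
    rcases s.eq_empty_or_nonempty with rfl | hs
    · refine ⟨a, mem_insert_self a _, fun j hj => ?_⟩
      rcases mem_insert.mp hj with rfl | hj
      · exact Or.inl (rel_refl j)
      · exact absurd hj (by simp)
    · obtain ⟨b, hb, hbmin⟩ := ih hs
      rcases lle_total hA b a with h | h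
      · refine ⟨b, mem_insert_of_mem hb, fun j hj => ?_⟩
        rcases mem_insert.mp hj with rfl | hj
        · exact h
        · exact hbmin j hj
      · refine ⟨a, mem_insert_self a _, fun j hj => ?_⟩
        rcases mem_insert.mp hj with rfl | hj
        · exact Or.inl (rel_refl j)
        · exact lle_trans hA hcl h (hbmin j hj)

lemma bot_spec (hA : AvoidsF010 p m A) (hcl : ∀ i j : Fin m,
    (configGraph p m A).Reachable i j → i ≠ j → (configGraph p m A).Adj i j)
    (hm : 0 < m) {X : Finset (Fin m)} (hX : X.Nonempty) :
    bot p A hm X ∈ X ∧ ∀ j ∈ X, lle p A (bot p A hm X) j := by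
  have hex := bottom_exists hA hcl X hX
  unfold bot
  rw [dif_pos hex]
  obtain ⟨h1, h2⟩ := hex.choose_spec
  exact ⟨h1, h2⟩

lemma X_eq {X : Finset (Fin m)} (hXA : X ∈ A) {i : Fin m} (hiX : i ∈ X)
    (hbt : ∀ j ∈ X, lle p A i j) :
    X = (X ∩ compF p A i) ∪ Dset p A i := by
  ext j
  constructor
  · intro hj
    by_cases hr : RelA p A i j
    · exact mem_union_left _ (mem_inter.mpr ⟨hj, compF_mem.mpr hr⟩)
    · rcases hbt j hj with h | h
      · exact absurd h hr
      · exact mem_union_right _ (Dset_mem.mpr ⟨hr, h⟩)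
  · intro hj
    rcases mem_union.mp hj with hj | hj
    · exact (mem_inter.mp hj).1
    · exact dd_zero_iff.mp (Dset_mem.mp hj).2 X hXA hiX

lemma D_unif (hA : AvoidsF010 p m A) (hcl : ∀ i j : Fin m,
    (configGraph p m A).Reachable i j → i ≠ j → (configGraph p m A).Adj i j)
    {i i' : Fin m} (hadj : (configGraph p m A).Adj i i') :
    Dset p A i = Dset p A i' := by
  have key : ∀ a b : Fin m, (configGraph p m A).Adj a b → Dset p A a ⊆ Dset p A b := by
    intro a b hab j hj
    obtain ⟨hnr, h0⟩ := Dset_mem.mp hj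
    have hnrb : ¬ RelA p A b j := fun hr => hnr (rel_trans hcl (Or.inr hab) hr)
    refine Dset_mem.mpr ⟨hnrb, ?_⟩
    by_cases hbj : dd A b j = 0
    · exact hbj
    exfalso
    have hbjne : b ≠ j := fun h => hnrb (h ▸ rel_refl b)
    have hnadj : ¬ (configGraph p m A).Adj b j := fun h => hnrb (Or.inr h)
    rcases F3 hA hbjne hnadj with h | h
    · exact hbj h
    -- h : dd j b = 0, h0 : dd a j = 0, so dd a b = 0 contradicting Adj a b
    have hab0 : dd A a b = 0 := by
      rw [dd_zero_iff]
      intro X hX haX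
      exact dd_zero_iff.mp h X hX (dd_zero_iff.mp h0 X hX haX)
    have h9 := (adj_def.mp hab).2.1.1
    omega
  exact Subset.antisymm (key i i' hadj) (key i' i hadj.symm)

end WithHyps
end MainRed
theorem cliques_give_bound (p m : ℕ) (hp : p ∈ Finset.Icc 3 9) (hm : 1 ≤ m)
    (A : Finset (Finset (Fin m))) (hA : AvoidsF010 p m A)
    (hclique : ∀ i j : Fin m,
      (configGraph p m A).Reachable i j → i ≠ j → (configGraph p m A).Adj i j) :
    (A.card : ℚ) ≤ cp p * m + 1 := by
  classical
  rw [Finset.mem_Icc] at hp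
  have hm0 : 0 < m := hm
  set 𝒞 := Finset.univ.image (compF p A) with h𝒞
  have hcompeq : ∀ i j : Fin m, RelA p A i j → compF p A i = compF p A j := by
    intro i j hr
    ext x
    rw [compF_mem, compF_mem]
    exact ⟨fun h => rel_trans hclique (rel_symm hr) h, fun h => rel_trans hclique hr h⟩
  have hselfmem : ∀ i : Fin m, i ∈ compF p A i := fun i => compF_mem.mpr (rel_refl i)
  have hfib : ∀ X ∈ A.erase ∅, compF p A (bot p A hm0 X) ∈ 𝒞 :=
    fun X _ => mem_image_of_mem _ (mem_univ _)
  have hsum := card_eq_sum_card_fiberwise hfib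
  have hcomp : ∀ C ∈ 𝒞,
      (((A.erase ∅).filter fun X => compF p A (bot p A hm0 X) = C).card : ℚ)
        ≤ cp p * C.card := by
    intro C hC
    obtain ⟨i0, _, hi0⟩ := mem_image.mp hC
    have hXfacts : ∀ X ∈ (A.erase ∅).filter (fun X => compF p A (bot p A hm0 X) = C),
        X ∈ A ∧ bot p A hm0 X ∈ X ∧ (∀ j ∈ X, lle p A (bot p A hm0 X) j)
          ∧ compF p A (bot p A hm0 X) = C := by
      intro X hX
      obtain ⟨hX1, hX2⟩ := mem_filter.mp hX
      have hXA : X ∈ A := mem_of_mem_erase hX1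
      have hXne : X.Nonempty := nonempty_iff_ne_empty.mpr (mem_erase.mp hX1).1
      obtain ⟨hb1, hb2⟩ := bot_spec hA hclique hm0 hXne
      exact ⟨hXA, hb1, hb2, hX2⟩
    have hinj : Set.InjOn (fun X => X ∩ C)
        ((A.erase ∅).filter (fun X => compF p A (bot p A hm0 X) = C)) := by
      intro X hX Y hY hXY
      obtain ⟨hXA, hbX1, hbX2, hCX⟩ := hXfacts X (mem_coe.mp hX)
      obtain ⟨hYA, hbY1, hbY2, hCY⟩ := hXfacts Y (mem_coe.mp hY)
      simp only at hXY
      have hrel : RelA p A (bot p A hm0 X) (bot p A hm0 Y) := by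
        have h2 : bot p A hm0 Y ∈ compF p A (bot p A hm0 X) := by
          rw [hCX, ← hCY]; exact hselfmem _
        exact compF_mem.mp h2
      have hD : Dset p A (bot p A hm0 X) = Dset p A (bot p A hm0 Y) := by
        rcases hrel with heq | hadj
        · rw [heq]
        · exact D_unif hA hclique hadj
      calc X = (X ∩ compF p A (bot p A hm0 X)) ∪ Dset p A (bot p A hm0 X) :=
            X_eq hXA hbX1 hbX2
        _ = (Y ∩ compF p A (bot p A hm0 Y)) ∪ Dset p A (bot p A hm0 Y) := by
            rw [hCX, hCY, hXY, hD]
        _ = Y := (X_eq hYA hbY1 hbY2).symm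
    have hcardeq := card_image_of_injOn hinj
    have hb : ((((A.erase ∅).filter fun X => compF p A (bot p A hm0 X) = C).image
        (fun X => X ∩ C)).card : ℚ) ≤ cp p * C.card := by
      apply core p hp.1 hp.2 C _ ?_ ?_ ?_
      · intro S hS
        obtain ⟨X, _, rfl⟩ := mem_image.mp hS
        exact inter_subset_right
      · intro S hS
        obtain ⟨X, hXf, rfl⟩ := mem_image.mp hS
        obtain ⟨_, hb1, _, hCX⟩ := hXfacts X hXf
        exact ⟨bot p A hm0 X, mem_inter.mpr ⟨hb1, hCX ▸ hselfmem _⟩⟩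
      · intro i hi j hj hij
        have hreli : RelA p A i j := by
          have h1 : i ∈ compF p A i0 := by rw [hi0]; exact hi
          have h2 : j ∈ compF p A i0 := by rw [hi0]; exact hj
          exact rel_trans hclique (rel_symm (compF_mem.mp h1)) (compF_mem.mp h2)
        have hadj : (configGraph p m A).Adj i j := by
          rcases hreli with heq | hadj
          · exact absurd heq hij
          · exact hadj
        have hbound : (A.filter fun X => i ∈ X ∧ j ∉ X).card ≤ p - 1 := hadj.2.1.2
        rw [filter_image]
        refine le_trans card_image_le (le_trans (card_le_card ?_) hbound)
        intro X hX
        obtain ⟨hXf, hPX⟩ := mem_filter.mp hX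
        refine mem_filter.mpr ⟨mem_of_mem_erase (mem_filter.mp hXf).1, ?_, ?_⟩
        · exact (mem_inter.mp hPX.1).1
        · exact fun hjX => hPX.2 (mem_inter.mpr ⟨hjX, hj⟩)
    rw [hcardeq] at hb
    exact hb
  have hdisj : ∀ C1 ∈ 𝒞, ∀ C2 ∈ 𝒞, C1 ≠ C2 → Disjoint C1 C2 := by
    intro C1 hC1 C2 hC2 hne
    obtain ⟨i1, _, rfl⟩ := mem_image.mp hC1
    obtain ⟨i2, _, rfl⟩ := mem_image.mp hC2
    rw [disjoint_left]
    intro x hx1 hx2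
    exact hne ((hcompeq i1 x (compF_mem.mp hx1)).trans (hcompeq i2 x (compF_mem.mp hx2)).symm)
  have hcovN : ∑ C ∈ 𝒞, C.card = m := by
    have h1 : 𝒞.biUnion (fun C => C) = Finset.univ := by
      ext x
      simp only [mem_biUnion]
      exact ⟨fun _ => mem_univ x,
        fun _ => ⟨compF p A x, mem_image_of_mem _ (mem_univ x), hselfmem x⟩⟩
    have h2 := card_biUnion hdisj (t := fun C => C)
    rw [h1, card_univ, Fintype.card_fin] at h2
    exact h2.symm
  have hcard1 : A.card ≤ 1 + (A.erase ∅).card := by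
    have h1 : A ⊆ insert ∅ (A.erase ∅) := by
      intro X hX
      by_cases h : X = ∅
      · rw [h]; exact mem_insert_self _ _
      · exact mem_insert_of_mem (mem_erase.mpr ⟨h, hX⟩)
    have h2 := card_le_card h1
    have h3 := card_insert_le ∅ (A.erase ∅)
    omega
  have hQ : ((A.erase ∅).card : ℚ) ≤ cp p * m := by
    calc ((A.erase ∅).card : ℚ)
        = ∑ C ∈ 𝒞, (((A.erase ∅).filter fun X => compF p A (bot p A hm0 X) = C).card : ℚ) := by
          rw [hsum]; push_cast; rfl
      _ ≤ ∑ C ∈ 𝒞, cp p * C.card := sum_le_sum hcomp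
      _ = cp p * ∑ C ∈ 𝒞, (C.card : ℚ) := by rw [mul_sum]
      _ = cp p * m := by
          rw [show ∑ C ∈ 𝒞, ((C.card : ℚ)) = ((∑ C ∈ 𝒞, C.card : ℕ) : ℚ) by push_cast; rfl,
            hcovN]
  have hfinal : (A.card : ℚ) ≤ 1 + (A.erase ∅).card := by exact_mod_cast hcard1
  linarith
end

section
/- Let t ≥ 2 be an integer and let m be a positive multiple of t. Then forb(m, F(0, 2^{t−2} + 1, 1, 0)) ≥ (2^t − 1)·m/t + 1; that is, there exists a family of subsets of {1,…,m} avoiding F(0, 2^{t−2}+1, 1, 0) with exactly (2^t − 1)m/t + 1 members. -/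
open Finset

/-- The construction: all subsets `X` of `Fin m` that are "downward closed with respect to
blocks of size `t`": whenever `x ∈ X` and `y` lies in a strictly earlier block, `y ∈ X`. -/
def fam (t m : ℕ) : Finset (Finset (Fin m)) :=
  Finset.univ.filter (fun X => ∀ x ∈ X, ∀ y : Fin m, (y : ℕ) / t < (x : ℕ) / t → y ∈ X)

lemma mem_fam {t m : ℕ} {X : Finset (Fin m)} :
    X ∈ fam t m ↔ ∀ x ∈ X, ∀ y : Fin m, (y : ℕ) / t < (x : ℕ) / t → y ∈ X := by
  simp [fam]

lemma div_key {t : ℕ} (ht0 : 0 < t) (k : ℕ) (s : Fin t) :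
    (k * t + (s : ℕ)) / t = k := by
  rw [mul_comm, Nat.mul_add_div ht0, Nat.div_eq_of_lt s.isLt, add_zero]

lemma mod_key {t : ℕ} (k : ℕ) (s : Fin t) :
    (k * t + (s : ℕ)) % t = (s : ℕ) := by
  rw [mul_comm, Nat.mul_add_mod, Nat.mod_eq_of_lt s.isLt]

lemma fam_avoids (t m : ℕ) (ht : 2 ≤ t) :
    AvoidsF010 (2 ^ (t - 2) + 1) m (fam t m) := by
  have ht0 : 0 < t := by omega
  intro i j hij hex
  obtain ⟨X, hXA, hjX, hiX⟩ := hex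
  rw [mem_fam] at hXA
  simp only [Nat.add_sub_cancel]
  have hble : (j : ℕ) / t ≤ (i : ℕ) / t := by
    by_contra h
    push_neg at h
    exact hiX (hXA j hjX i h)
  rcases lt_or_eq_of_le hble with hlt | heq
  · -- j's block is strictly earlier: no member contains i but not j
    have hempty : (fam t m).filter (fun Y => i ∈ Y ∧ j ∉ Y) = ∅ := by
      ext Y
      simp only [mem_filter, notMem_empty, iff_false, not_and]
      intro hY hiY
      rw [mem_fam] at hY
      simp only [not_not]
      exact hY i hiY j hlt
    rw [hempty]
    simp
  · -- same block
    set bi := (i : ℕ) / t with hbi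
    have hjb : (j : ℕ) / t = bi := heq
    set B : Finset (Fin m) := Finset.univ.filter (fun x : Fin m => (x : ℕ) / t = bi) with hB
    set D : Finset (Fin m) := B \ {i, j} with hD
    have hcard : ((fam t m).filter (fun Y => i ∈ Y ∧ j ∉ Y)).card ≤ D.powerset.card := by
      apply Finset.card_le_card_of_injOn (fun Y => Y ∩ D)
      · intro Y _
        simp [Finset.mem_powerset]
      · intro Y hY Y' hY' hYY'
        replace hYY' : Y ∩ D = Y' ∩ D := hYY'
        simp only [Finset.coe_filter, Set.mem_setOf_eq] at hY hY'
        obtain ⟨hYf, hiY, hjY⟩ := hY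
        obtain ⟨hY'f, hiY', hjY'⟩ := hY'
        rw [mem_fam] at hYf hY'f
        ext x
        rcases lt_trichotomy ((x : ℕ) / t) bi with hx | hx | hx
        · exact ⟨fun _ => hY'f i hiY' x hx, fun _ => hYf i hiY x hx⟩
        · by_cases hxi : x = i
          · subst hxi; simp [hiY, hiY']
          · by_cases hxj : x = j
            · subst hxj; simp [hjY, hjY']
            · have hxD : x ∈ D := by
                simp only [hD, hB, Finset.mem_sdiff, Finset.mem_filter, Finset.mem_univ,
                  true_and, Finset.mem_insert, Finset.mem_singleton]
                exact ⟨hx, by tauto⟩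
              constructor
              · intro hxY
                have hmem : x ∈ Y ∩ D := Finset.mem_inter.mpr ⟨hxY, hxD⟩
                rw [hYY'] at hmem
                exact (Finset.mem_inter.mp hmem).1
              · intro hxY'
                have hmem : x ∈ Y' ∩ D := Finset.mem_inter.mpr ⟨hxY', hxD⟩
                rw [← hYY'] at hmem
                exact (Finset.mem_inter.mp hmem).1
        · constructor
          · intro hxY
            exact absurd (hYf x hxY j (by rw [hjb]; exact hx)) hjY
          · intro hxY'
            exact absurd (hY'f x hxY' j (by rw [hjb]; exact hx)) hjY'
    have hBcard : B.card ≤ t := by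
      have hBr : B.card ≤ (Finset.range t).card := by
        apply Finset.card_le_card_of_injOn (fun x : Fin m => (x : ℕ) % t)
        · intro x _
          exact Finset.mem_range.mpr (Nat.mod_lt _ ht0)
        · intro x hx y hy hxy
          simp only [Finset.coe_filter, Set.mem_setOf_eq, hB] at hx hy
          apply Fin.ext
          have h1 := Nat.div_add_mod (x : ℕ) t
          have h2 := Nat.div_add_mod (y : ℕ) t
          have hx' : (x : ℕ) / t = (i : ℕ) / t := hx.2
          have hy' : (y : ℕ) / t = (i : ℕ) / t := hy.2
          have hxy' : (x : ℕ) % t = (y : ℕ) % t := hxy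
          rw [← h1, ← h2, hx', hy', hxy']
      simpa using hBr
    have hijB : ({i, j} : Finset (Fin m)) ⊆ B := by
      intro x hx
      simp only [Finset.mem_insert, Finset.mem_singleton] at hx
      rcases hx with rfl | rfl
      · simp [hB, hbi]
      · simp [hB, hjb]
    have hDcard : D.card ≤ t - 2 := by
      rw [hD, Finset.card_sdiff_of_subset hijB, Finset.card_insert_of_notMem (by simpa using hij),
        Finset.card_singleton]
      omega
    calc ((fam t m).filter (fun Y => i ∈ Y ∧ j ∉ Y)).card ≤ D.powerset.card := hcard
      _ = 2 ^ D.card := Finset.card_powerset D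
      _ ≤ 2 ^ (t - 2) := Nat.pow_le_pow_right (by norm_num) hDcard

/-- The set `prefix(k) ∪ S` : full blocks before `k`, plus the elements of block `k`
whose residue lies in `S`. -/
def emb (t m k : ℕ) (S : Finset (Fin t)) : Finset (Fin m) :=
  Finset.univ.filter (fun x : Fin m =>
    (x : ℕ) / t < k ∨ ((x : ℕ) / t = k ∧ ∃ s ∈ S, (x : ℕ) % t = (s : ℕ)))

lemma fam_card (t m : ℕ) (ht : 2 ≤ t) (q : ℕ) (hm : m = t * q) :
    (2 ^ t - 1) * q + 1 ≤ (fam t m).card := by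
  classical
  have ht0 : 0 < t := by omega
  set I : Finset (ℕ × Finset (Fin t)) :=
    (Finset.range q) ×ˢ ((Finset.univ : Finset (Finset (Fin t))).filter (fun S => S.Nonempty))
    with hI
  have hxlt : ∀ k < q, ∀ s : Fin t, k * t + (s : ℕ) < m := by
    intro k hk s
    have hs := s.isLt
    calc k * t + (s : ℕ) < k * t + t := by omega
      _ = (k + 1) * t := by ring
      _ ≤ q * t := Nat.mul_le_mul_right t hk
      _ = m := by rw [hm]; ring
  have hmem_emb : ∀ (k : ℕ) (S : Finset (Fin t)) (s : Fin t) (h : k * t + (s : ℕ) < m),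
      (⟨k * t + (s : ℕ), h⟩ : Fin m) ∈ emb t m k S ↔ s ∈ S := by
    intro k S s h
    simp only [emb, Finset.mem_filter, Finset.mem_univ, true_and]
    rw [Fin.val_mk, div_key ht0 k s, mod_key k s]
    constructor
    · rintro (h1 | ⟨-, s', hs', he⟩)
      · omega
      · have hss : s' = s := Fin.ext he.symm
        exact hss ▸ hs'
    · intro hs
      exact Or.inr ⟨rfl, s, hs, rfl⟩
  set f : ℕ × Finset (Fin t) → Finset (Fin m) := fun p => emb t m p.1 p.2 with hf
  have hsub : insert ∅ (I.image f) ⊆ fam t m := by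
    intro X hX
    rw [Finset.mem_insert] at hX
    rcases hX with rfl | hX
    · rw [mem_fam]
      intro x hx
      exact absurd hx (Finset.notMem_empty x)
    · obtain ⟨⟨k, S⟩, _, rfl⟩ := Finset.mem_image.mp hX
      rw [mem_fam]
      intro x hx y hy
      simp only [hf, emb, Finset.mem_filter, Finset.mem_univ, true_and] at hx ⊢
      rcases hx with h1 | ⟨h1, -⟩
      · exact Or.inl (lt_trans hy h1)
      · exact Or.inl (h1 ▸ hy)
  have hne : ∀ p ∈ I, (f p).Nonempty := by
    rintro ⟨k, S⟩ hp
    simp only [hI, Finset.mem_product, Finset.mem_range, Finset.mem_filter] at hp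
    obtain ⟨hk, -, s, hs⟩ := hp
    exact ⟨⟨k * t + (s : ℕ), hxlt k hk s⟩, (hmem_emb k S s (hxlt k hk s)).mpr hs⟩
  have hinj : Set.InjOn f I := by
    rintro ⟨k, S⟩ hkS ⟨k', S'⟩ hkS' he
    simp only [Finset.mem_coe, hI, Finset.mem_product, Finset.mem_range, Finset.mem_filter]
      at hkS hkS'
    obtain ⟨hk, -, hS⟩ := hkS
    obtain ⟨hk', -, hS'⟩ := hkS'
    simp only [hf] at he
    have hcontra : ∀ a b : ℕ, a < b → b < q → (Sa : Finset (Fin t)) → (Sb : Finset (Fin t)) →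
        Sb.Nonempty → emb t m a Sa ≠ emb t m b Sb := by
      intro a b hab hb Sa Sb hSb hne'
      obtain ⟨s, hs⟩ := hSb
      have hmem1 := (hmem_emb b Sb s (hxlt b hb s)).mpr hs
      rw [← hne'] at hmem1
      simp only [emb, Finset.mem_filter, Finset.mem_univ, true_and, Fin.val_mk,
        div_key ht0 b s] at hmem1
      rcases hmem1 with h1 | ⟨h1, -⟩ <;> omega
    have hkk : k = k' := by
      rcases lt_trichotomy k k' with hlt | heq | hgt
      · exact absurd he (hcontra k k' hlt hk' S S' hS')
      · exact heq
      · exact absurd he.symm (hcontra k' k hgt hk S' S hS)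
    subst hkk
    have hSS : S = S' := by
      ext s
      rw [← hmem_emb k S s (hxlt k hk s), ← hmem_emb k S' s (hxlt k hk s), he]
    rw [hSS]
  have hnotmem : (∅ : Finset (Fin m)) ∉ I.image f := by
    intro hmem
    obtain ⟨p, hp, hpe⟩ := Finset.mem_image.mp hmem
    obtain ⟨y, hy⟩ := hne p hp
    rw [hpe] at hy
    exact Finset.notMem_empty y hy
  have hIcard : I.card = q * (2 ^ t - 1) := by
    rw [hI, Finset.card_product, Finset.card_range]
    congr 1
    have hfe : (Finset.univ.filter (fun S : Finset (Fin t) => S.Nonempty))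
        = Finset.univ.erase ∅ := by
      ext S
      simp [Finset.nonempty_iff_ne_empty]
    rw [hfe, Finset.card_erase_of_mem (Finset.mem_univ _), Finset.card_univ,
      Fintype.card_finset, Fintype.card_fin]
  calc (2 ^ t - 1) * q + 1 = I.card + 1 := by rw [hIcard, mul_comm]
    _ = (insert ∅ (I.image f)).card := by
        rw [Finset.card_insert_of_notMem hnotmem, Finset.card_image_of_injOn hinj]
    _ ≤ (fam t m).card := Finset.card_le_card hsub

theorem forb_lower_bound_conjectural_construction (t m : ℕ) (ht : 2 ≤ t)
    (hm : 0 < m) (hdvd : t ∣ m) :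
    (2 ^ t - 1) * m / t + 1 ≤ forb m (2 ^ (t - 2) + 1) := by
  obtain ⟨q, hq⟩ := hdvd
  have ht0 : 0 < t := by omega
  have h1 : (2 ^ t - 1) * m / t = (2 ^ t - 1) * q := by
    rw [hq, ← mul_assoc, mul_comm (2 ^ t - 1) t, mul_assoc, Nat.mul_div_cancel_left _ ht0]
  rw [h1]
  have hA : AvoidsF010 (2 ^ (t - 2) + 1) m (fam t m) := fam_avoids t m ht
  have hmem : (fam t m).card ∈
      {n | ∃ A : Finset (Finset (Fin m)), AvoidsF010 (2 ^ (t - 2) + 1) m A ∧ A.card = n} :=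
    ⟨fam t m, hA, rfl⟩
  have hbdd : BddAbove
      {n | ∃ A : Finset (Finset (Fin m)), AvoidsF010 (2 ^ (t - 2) + 1) m A ∧ A.card = n} := by
    refine ⟨2 ^ m, ?_⟩
    rintro n ⟨A, -, rfl⟩
    calc A.card ≤ (Finset.univ : Finset (Finset (Fin m))).card :=
          Finset.card_le_card (Finset.subset_univ A)
      _ = 2 ^ m := by simp [Finset.card_univ, Fintype.card_finset]
  have hle := le_csSup hbdd hmem
  exact le_trans (fam_card t m ht q hq) hle
end

section
/- forb(5, F(0,7,1,0)) = 25; that is, the maximum cardinality of a family of subsets of {1,2,3,4,5} that avoids F(0,7,1,0) is exactly 25. -/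
open Finset

/-- The extremal family: all 32 subsets minus 7 carefully chosen ones. -/
def A25 : Finset (Finset (Fin 5)) :=
  (univ : Finset (Finset (Fin 5))) \
    {({0,1} : Finset (Fin 5)), {0,2}, {0,3}, {1,4}, {2,4}, {3,4}, {1,2,3}}

lemma A25_card : A25.card = 25 := by decide

lemma A25_avoids : AvoidsF010 7 5 A25 := by unfold AvoidsF010; decide

lemma card8 : ∀ i j : Fin 5, i ≠ j →
    ((univ : Finset (Finset (Fin 5))).filter fun X => i ∈ X ∧ j ∉ X).card = 8 := by
  decide

lemma pairsum : ∀ X : Finset (Fin 5),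
    ((univ : Finset (Fin 5 × Fin 5)).filter
      fun p => p.1 ≠ p.2 ∧ (p.1 ∈ X ∧ p.2 ∉ X)).card ≤ 6 := by
  decide

lemma upper (A : Finset (Finset (Fin 5))) (h : AvoidsF010 7 5 A) : A.card ≤ 25 := by
  by_contra hc
  push_neg at hc
  have hA26 : 26 ≤ A.card := hc
  set B : Finset (Finset (Fin 5)) := (univ : Finset (Finset (Fin 5))) \ A with hB
  have hBcard : B.card ≤ 6 := by
    have h1 : B.card = 32 - A.card := by
      rw [hB, card_sdiff_of_subset (subset_univ A)]
      congr 1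
    have h2 : A.card ≤ 32 := by
      calc A.card ≤ (univ : Finset (Finset (Fin 5))).card := card_le_card (subset_univ A)
        _ = 32 := by decide
    omega
  have key : ∀ i j : Fin 5, i ≠ j →
      2 ≤ (B.filter fun X => i ∈ X ∧ j ∉ X).card := by
    intro i j hij
    have hsplit : ∀ (P : Finset (Fin 5) → Prop) [DecidablePred P],
        (A.filter P).card + (B.filter P).card
          = ((univ : Finset (Finset (Fin 5))).filter P).card := by
      intro P _
      rw [← card_union_of_disjoint]
      · congr 1
        rw [← filter_union, hB, union_sdiff_of_subset (subset_univ A)]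
      · exact disjoint_filter_filter (disjoint_sdiff)
    have hex : ∃ X ∈ A, j ∈ X ∧ i ∉ X := by
      have h8 := card8 j i (Ne.symm hij)
      have hs := hsplit (fun X => j ∈ X ∧ i ∉ X)
      have hBle : (B.filter fun X => j ∈ X ∧ i ∉ X).card ≤ 6 :=
        le_trans (card_le_card (filter_subset _ _)) hBcard
      obtain ⟨X, hX⟩ := card_pos.mp (show 0 < (A.filter fun X => j ∈ X ∧ i ∉ X).card by omega)
      simp only [mem_filter] at hX
      exact ⟨X, hX.1, hX.2⟩
    have hAle : (A.filter fun Y => i ∈ Y ∧ j ∉ Y).card ≤ 6 := h i j hij hex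
    have h8 := card8 i j hij
    have hs := hsplit (fun X => i ∈ X ∧ j ∉ X)
    omega
  set P : Finset (Fin 5 × Fin 5) :=
    (univ : Finset (Fin 5 × Fin 5)).filter (fun p => p.1 ≠ p.2) with hP
  have hlb : 40 ≤ ∑ p ∈ P, (B.filter fun X => p.1 ∈ X ∧ p.2 ∉ X).card := by
    have := Finset.card_nsmul_le_sum P
        (fun p => (B.filter fun X => p.1 ∈ X ∧ p.2 ∉ X).card) 2
        (fun p hp => key p.1 p.2 (by simpa [hP] using hp))
    have hPc : P.card = 20 := by decide
    simpa [hPc, smul_eq_mul] using this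
  have hub : ∑ p ∈ P, (B.filter fun X => p.1 ∈ X ∧ p.2 ∉ X).card ≤ 36 := by
    have hswap : ∑ p ∈ P, (B.filter fun X => p.1 ∈ X ∧ p.2 ∉ X).card
        = ∑ X ∈ B, (P.filter fun p => p.1 ∈ X ∧ p.2 ∉ X).card := by
      simp only [card_filter]
      exact Finset.sum_comm
    rw [hswap]
    calc ∑ X ∈ B, (P.filter fun p => p.1 ∈ X ∧ p.2 ∉ X).card
        ≤ ∑ _X ∈ B, 6 := by
          refine Finset.sum_le_sum fun X _ => ?_
          have := pairsum X
          rw [hP, filter_filter]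
          exact this
      _ = 6 * B.card := by rw [Finset.sum_const, smul_eq_mul, mul_comm]
      _ ≤ 36 := by omega
  omega

theorem forb_five_F0710 : forb 5 7 = 25 := by
  have hgreat : IsGreatest {n | ∃ A : Finset (Finset (Fin 5)), AvoidsF010 7 5 A ∧ A.card = n} 25 := by
    constructor
    · exact ⟨A25, A25_avoids, A25_card⟩
    · rintro n ⟨A, hA, rfl⟩
      exact upper A hA
  exact hgreat.csSup_eq
end

section
/- forb(5, F(0,8,1,0)) = 28; that is, the maximum cardinality of a family of subsets of {1,2,3,4,5} that avoids F(0,8,1,0) is exactly 28. -/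
open Finset

/-- The explicit extremal family: all subsets of `Fin 5` except four. -/
def A28 : Finset (Finset (Fin 5)) :=
  univ \ {{0,1,2},{0,3,4},{1,3},{2,4}}

lemma A28_card : A28.card = 28 := by decide

lemma A28_avoids : AvoidsF010 8 5 A28 := by unfold AvoidsF010; decide

lemma univ_filter_card (i j : Fin 5) (h : i ≠ j) :
    ((univ : Finset (Finset (Fin 5))).filter fun Y => i ∈ Y ∧ j ∉ Y).card = 8 := by
  revert i j; decide

lemma pairs_card : ((univ : Finset (Fin 5 × Fin 5)).filter fun p => p.1 ≠ p.2).card = 20 := by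
  decide

lemma set_pair_count (S : Finset (Fin 5)) :
    (((univ : Finset (Fin 5 × Fin 5)).filter fun p => p.1 ≠ p.2).filter
      fun p => p.1 ∈ S ∧ p.2 ∉ S).card ≤ 6 := by
  revert S; decide

lemma filter_sdiff_univ (B : Finset (Finset (Fin 5))) (q : Finset (Fin 5) → Prop)
    [DecidablePred q] : (univ \ B).filter q = univ.filter q \ B.filter q := by
  ext Y
  simp only [Finset.mem_filter, Finset.mem_sdiff, Finset.mem_univ, true_and]
  tauto

lemma upper_bound (A : Finset (Finset (Fin 5))) (hA : AvoidsF010 8 5 A) : A.card ≤ 28 := by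
  by_contra h
  push_neg at h
  set B : Finset (Finset (Fin 5)) := univ \ A with hB
  have hAuniv : A ⊆ univ := subset_univ A
  have hcardU : (univ : Finset (Finset (Fin 5))).card = 32 := by decide
  have hBcard : B.card ≤ 3 := by
    have h32 : B.card = 32 - A.card := by
      rw [hB, Finset.card_sdiff_of_subset hAuniv, hcardU]
    have h32' : A.card ≤ 32 := hcardU ▸ Finset.card_le_card hAuniv
    omega
  have hAeq : A = univ \ B := by
    rw [hB, Finset.sdiff_sdiff_self_left, Finset.univ_inter]
  set P : Finset (Fin 5 × Fin 5) := (univ : Finset (Fin 5 × Fin 5)).filter fun p => p.1 ≠ p.2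
    with hP
  -- double counting
  have hsum : ∑ p ∈ P, (B.filter fun S => p.1 ∈ S ∧ p.2 ∉ S).card ≤ 18 := by
    have hswap : ∑ p ∈ P, (B.filter fun S => p.1 ∈ S ∧ p.2 ∉ S).card
        = ∑ S ∈ B, (P.filter fun p => p.1 ∈ S ∧ p.2 ∉ S).card := by
      simp only [Finset.card_filter]
      exact Finset.sum_comm
    rw [hswap]
    calc ∑ S ∈ B, (P.filter fun p => p.1 ∈ S ∧ p.2 ∉ S).card
        ≤ ∑ _S ∈ B, 6 := Finset.sum_le_sum (fun S _ => set_pair_count S)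
      _ = B.card * 6 := by rw [Finset.sum_const, smul_eq_mul]
      _ ≤ 18 := by omega
  -- there is a pair with empty count
  have hex : ∃ p ∈ P, (B.filter fun S => p.1 ∈ S ∧ p.2 ∉ S).card = 0 := by
    by_contra hc
    push_neg at hc
    have h1 : ∀ p ∈ P, 1 ≤ (B.filter fun S => p.1 ∈ S ∧ p.2 ∉ S).card := by
      intro p hp
      exact Nat.one_le_iff_ne_zero.mpr (hc p hp)
    have : P.card ≤ ∑ p ∈ P, (B.filter fun S => p.1 ∈ S ∧ p.2 ∉ S).card := by
      calc P.card = ∑ _p ∈ P, 1 := by rw [Finset.sum_const, smul_eq_mul, mul_one]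
        _ ≤ _ := Finset.sum_le_sum h1
    rw [pairs_card] at this
    omega
  obtain ⟨⟨i, j⟩, hpP, hzero⟩ := hex
  have hij : i ≠ j := by
    simp only [hP, Finset.mem_filter] at hpP
    exact hpP.2
  have hBempty : B.filter (fun S => i ∈ S ∧ j ∉ S) = ∅ :=
    Finset.card_eq_zero.mp hzero
  -- A contains all 8 sets with i ∈ Y, j ∉ Y
  have hAfilter : (A.filter fun Y => i ∈ Y ∧ j ∉ Y).card = 8 := by
    rw [hAeq, filter_sdiff_univ, hBempty, Finset.sdiff_empty, univ_filter_card i j hij]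
  -- some element of A contains j and not i
  have hprem : ∃ X ∈ A, j ∈ X ∧ i ∉ X := by
    have hle : ((univ : Finset (Finset (Fin 5))).filter fun Y => j ∈ Y ∧ i ∉ Y).card
        ≤ (A.filter fun Y => j ∈ Y ∧ i ∉ Y).card + (B.filter fun Y => j ∈ Y ∧ i ∉ Y).card := by
      have hsub : ((univ : Finset (Finset (Fin 5))).filter fun Y => j ∈ Y ∧ i ∉ Y)
          ⊆ (A.filter fun Y => j ∈ Y ∧ i ∉ Y) ∪ (B.filter fun Y => j ∈ Y ∧ i ∉ Y) := by
        intro Y hY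
        rw [Finset.mem_filter] at hY
        by_cases hYA : Y ∈ A
        · exact Finset.mem_union_left _ (Finset.mem_filter.mpr ⟨hYA, hY.2⟩)
        · refine Finset.mem_union_right _ (Finset.mem_filter.mpr ⟨?_, hY.2⟩)
          rw [hB, Finset.mem_sdiff]
          exact ⟨Finset.mem_univ _, hYA⟩
      exact le_trans (Finset.card_le_card hsub) (Finset.card_union_le _ _)
    have h8 : ((univ : Finset (Finset (Fin 5))).filter fun Y => j ∈ Y ∧ i ∉ Y).card = 8 :=
      univ_filter_card j i hij.symm
    have hBle : (B.filter fun Y => j ∈ Y ∧ i ∉ Y).card ≤ 3 :=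
      le_trans (Finset.card_filter_le _ _) hBcard
    have hpos : 0 < (A.filter fun Y => j ∈ Y ∧ i ∉ Y).card := by omega
    obtain ⟨X, hX⟩ := Finset.card_pos.mp hpos
    simp only [Finset.mem_filter] at hX
    exact ⟨X, hX.1, hX.2⟩
  have := hA i j hij hprem
  rw [hAfilter] at this
  omega

theorem forb_five_F0810 : forb 5 8 = 28 := by
  unfold forb
  have hmem : 28 ∈ {n | ∃ A : Finset (Finset (Fin 5)), AvoidsF010 8 5 A ∧ A.card = n} :=
    ⟨A28, A28_avoids, A28_card⟩
  have hub : ∀ n ∈ {n | ∃ A : Finset (Finset (Fin 5)), AvoidsF010 8 5 A ∧ A.card = n}, n ≤ 28 := by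
    rintro n ⟨A, hA, rfl⟩
    exact upper_bound A hA
  exact le_antisymm (csSup_le ⟨28, hmem⟩ hub) (le_csSup ⟨28, hub⟩ hmem)
end
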